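/- arXiv:1403.7544 — 6 statements merged into one kernel-verified Lean document; each statement's English description precedes it below -/
import Mathlib

section
/- For all real numbers γ < -1/2 and β with -1 < β < -1/2, and every real A > 0, the series ∑_{i=1}^∞ (A+i)^γ i^β converges and satisfies ∑_{i=1}^∞ (A+i)^γ i^β ≤ C·A^{γ+β+1}, where C = ∫_0^∞ (1+y)^γ y^β dy, which is a finite constant. -/
open MeasureTheory Set

lemma aux_integrable (γ β a : ℝ) (hγ : γ < 0) (hβ1 : -1 < β) (hγβ : γ + β < -1)
    (ha : 0 < a) : IntegrableOn (fun x : ℝ => (a + x) ^ γ * x ^ β) (Set.Ioi 0) := by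
  have hcont : ContinuousOn (fun x : ℝ => (a + x) ^ γ * x ^ β) (Set.Ioi 0) := by
    apply ContinuousOn.mul
    · apply ContinuousOn.rpow_const (by fun_prop)
      intro x hx; left; have := Set.mem_Ioi.mp hx; positivity
    · apply ContinuousOn.rpow_const continuousOn_id
      intro x hx; left; exact ne_of_gt hx
  have h1 : IntegrableOn (fun x : ℝ => (a + x) ^ γ * x ^ β) (Set.Ioc 0 1) := by
    have hint : IntegrableOn (fun x : ℝ => a ^ γ * x ^ β) (Set.Ioc 0 1) := by
      apply Integrable.const_mul
      have := (intervalIntegral.intervalIntegrable_rpow' (a := 0) (b := 1) hβ1)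
      rw [intervalIntegrable_iff_integrableOn_Ioc_of_le zero_le_one] at this
      exact this
    apply Integrable.mono hint
      ((hcont.mono Ioc_subset_Ioi_self).aestronglyMeasurable measurableSet_Ioc)
    filter_upwards [ae_restrict_mem measurableSet_Ioc] with x hx
    obtain ⟨hx0, hx1⟩ := hx
    have hax : (0:ℝ) < a + x := by linarith
    rw [Real.norm_eq_abs, Real.norm_eq_abs, abs_of_nonneg (by positivity), abs_of_nonneg (by positivity)]
    apply mul_le_mul_of_nonneg_right _ (by positivity)
    exact Real.rpow_le_rpow_of_nonpos ha (by linarith) hγ.le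
  have h2 : IntegrableOn (fun x : ℝ => (a + x) ^ γ * x ^ β) (Set.Ioi 1) := by
    have hint : IntegrableOn (fun x : ℝ => x ^ (γ + β)) (Set.Ioi 1) :=
      integrableOn_Ioi_rpow_of_lt hγβ one_pos
    apply Integrable.mono hint
      ((hcont.mono (Ioi_subset_Ioi zero_le_one)).aestronglyMeasurable measurableSet_Ioi)
    filter_upwards [ae_restrict_mem measurableSet_Ioi] with x hx
    have hx0 : (0:ℝ) < x := lt_trans one_pos hx
    have hax : (0:ℝ) < a + x := by linarith
    rw [Real.norm_eq_abs, Real.norm_eq_abs, abs_of_nonneg (by positivity), abs_of_nonneg (by positivity),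
      Real.rpow_add hx0]
    apply mul_le_mul_of_nonneg_right _ (by positivity)
    exact Real.rpow_le_rpow_of_nonpos hx0 (by linarith) hγ.le
  have := h1.union h2
  apply this.mono_set
  intro x hx
  rcases le_or_gt x 1 with h | h
  · exact Or.inl ⟨hx, h⟩
  · exact Or.inr h

/-- For `γ < -1/2`, `-1 < β < -1/2` and `A > 0`, the series `∑_{i=1}^∞ (A+i)^γ i^β`
converges and is bounded by `C·A^(γ+β+1)` with `C = ∫_0^∞ (1+y)^γ y^β dy`, a finite constant. -/
theorem stmt_2 (γ β A : ℝ) (hγ : γ < -1/2) (hβ1 : -1 < β) (hβ2 : β < -1/2) (hA : 0 < A) :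
    IntegrableOn (fun y : ℝ => (1 + y) ^ γ * y ^ β) (Set.Ioi 0) ∧
      Summable (fun i : ℕ+ => (A + (i : ℝ)) ^ γ * (i : ℝ) ^ β) ∧
      ∑' i : ℕ+, (A + (i : ℝ)) ^ γ * (i : ℝ) ^ β
        ≤ (∫ y in Set.Ioi (0 : ℝ), (1 + y) ^ γ * y ^ β) * A ^ (γ + β + 1) := by
  have hγ0 : γ < 0 := by linarith
  have hβ0 : β < 0 := by linarith
  have hγβ : γ + β < -1 := by linarith
  have hInt1 : IntegrableOn (fun y : ℝ => (1 + y) ^ γ * y ^ β) (Set.Ioi 0) :=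
    aux_integrable γ β 1 hγ0 hβ1 hγβ one_pos
  have hIntA : IntegrableOn (fun y : ℝ => (A + y) ^ γ * y ^ β) (Set.Ioi 0) :=
    aux_integrable γ β A hγ0 hβ1 hγβ hA
  set f : ℝ → ℝ := fun x => (A + x) ^ γ * x ^ β with hf
  set If : ℝ := ∫ x in Ioi (0:ℝ), f x with hIf
  -- each term is at most the integral over (i-1, i]
  have hterm : ∀ i : ℕ+, f i ≤ ∫ x in Ioc ((i:ℝ) - 1) (i:ℝ), f x := by
    intro i
    have hi1 : (1:ℝ) ≤ (i:ℝ) := by exact_mod_cast i.one_le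
    have hsub : Ioc ((i:ℝ) - 1) (i:ℝ) ⊆ Ioi 0 := fun x hx => by
      simp only [mem_Ioi]; have := hx.1; linarith
    have h := setIntegral_ge_of_const_le_real (c := f i) measurableSet_Ioc
      (by simp [Real.volume_Ioc]) ?_ (hIntA.mono_set hsub)
    · calc f i = f i * (volume (Ioc ((i:ℝ) - 1) (i:ℝ))).toReal := by
            simp [Real.volume_Ioc]
        _ ≤ _ := h
    · intro x hx
      obtain ⟨hx1, hx2⟩ := hx
      have hx0 : (0:ℝ) < x := by linarith
      apply mul_le_mul
      · exact Real.rpow_le_rpow_of_nonpos (by linarith) (by linarith) hγ0.le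
      · exact Real.rpow_le_rpow_of_nonpos hx0 hx2 hβ0.le
      · positivity
      · positivity
  have key : ∀ u : Finset ℕ+, ∑ i ∈ u, f i ≤ If := by
    intro u
    have hdisj : (↑u : Set ℕ+).Pairwise
        (Function.onFun Disjoint fun i : ℕ+ => Ioc ((i:ℝ) - 1) (i:ℝ)) := by
      intro i _ j _ hij
      apply Set.Ioc_disjoint_Ioc.mpr
      rcases lt_or_gt_of_ne hij with h | h
      · have hn : (i : ℕ) < (j : ℕ) := h
        have : ((i : ℕ) : ℝ) + 1 ≤ ((j : ℕ) : ℝ) := by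
          exact_mod_cast Nat.succ_le_of_lt hn
        calc min (i:ℝ) (j:ℝ) ≤ (i:ℝ) := min_le_left _ _
          _ ≤ (j:ℝ) - 1 := by push_cast at this ⊢; linarith
          _ ≤ max ((i:ℝ) - 1) ((j:ℝ) - 1) := le_max_right _ _
      · have hn : (j : ℕ) < (i : ℕ) := h
        have : ((j : ℕ) : ℝ) + 1 ≤ ((i : ℕ) : ℝ) := by
          exact_mod_cast Nat.succ_le_of_lt hn
        calc min (i:ℝ) (j:ℝ) ≤ (j:ℝ) := min_le_right _ _
          _ ≤ (i:ℝ) - 1 := by push_cast at this ⊢; linarith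
          _ ≤ max ((i:ℝ) - 1) ((j:ℝ) - 1) := le_max_left _ _
    have hsub : ∀ i : ℕ+, Ioc ((i:ℝ) - 1) (i:ℝ) ⊆ Ioi 0 := fun i x hx => by
      have hi1 : (1:ℝ) ≤ (i:ℝ) := by exact_mod_cast i.one_le
      simp only [mem_Ioi]; have := hx.1; linarith
    calc ∑ i ∈ u, f i ≤ ∑ i ∈ u, ∫ x in Ioc ((i:ℝ) - 1) (i:ℝ), f x :=
          Finset.sum_le_sum fun i _ => hterm i
      _ = ∫ x in ⋃ i ∈ u, Ioc ((i:ℝ) - 1) (i:ℝ), f x :=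
          (integral_biUnion_finset u (fun i _ => measurableSet_Ioc) hdisj
            (fun i _ => hIntA.mono_set (hsub i))).symm
      _ ≤ If := by
          apply setIntegral_mono_set hIntA
          · filter_upwards [ae_restrict_mem measurableSet_Ioi] with x hx
            have : (0:ℝ) < x := hx
            positivity
          · exact HasSubset.Subset.eventuallyLE (Set.iUnion₂_subset fun i _ => hsub i)
  have hnonneg : ∀ i : ℕ+, (0:ℝ) ≤ (A + (i : ℝ)) ^ γ * (i : ℝ) ^ β := by
    intro i
    have : (0:ℝ) < (i:ℝ) := by exact_mod_cast i.pos
    positivity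
  have hsummable : Summable (fun i : ℕ+ => (A + (i : ℝ)) ^ γ * (i : ℝ) ^ β) :=
    summable_of_sum_le hnonneg key
  refine ⟨hInt1, hsummable, ?_⟩
  have htsum : ∑' i : ℕ+, (A + (i : ℝ)) ^ γ * (i : ℝ) ^ β ≤ If :=
    Summable.tsum_le_of_sum_le hsummable key
  -- change of variables
  have hsubst := integral_comp_mul_left_Ioi f 0 hA
  rw [mul_zero] at hsubst
  have hcongr : ∫ x in Ioi (0:ℝ), f (A * x)
      = ∫ x in Ioi (0:ℝ), A ^ (γ + β) * ((1 + x) ^ γ * x ^ β) := by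
    apply setIntegral_congr_fun measurableSet_Ioi
    intro x hx
    have hx0 : (0:ℝ) < x := hx
    have h1x : (0:ℝ) ≤ 1 + x := by linarith
    simp only [hf]
    rw [show A + A * x = A * (1 + x) by ring, Real.mul_rpow hA.le h1x,
      Real.mul_rpow hA.le hx0.le, Real.rpow_add hA]
    ring
  rw [hcongr, MeasureTheory.integral_const_mul, smul_eq_mul] at hsubst
  have hIfeq : If = (∫ y in Ioi (0:ℝ), (1 + y) ^ γ * y ^ β) * A ^ (γ + β + 1) := by
    have hA1 : A ^ (γ + β + 1) = A ^ (γ + β) * A := by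
      rw [Real.rpow_add hA, Real.rpow_one]
    rw [hA1]
    have := hsubst
    field_simp at this
    nlinarith [this]
  rw [← hIfeq]
  exact htsum
end

section
/- Let g^(1) and g^(2) be symmetric GHK(B)'s on (0,∞)^{k₁} and (0,∞)^{k₂} with homogeneity exponents α₁ and α₂ respectively. Suppose k₁ ≥ 2 or k₂ ≥ 2, and α₁ + α₂ > -(k₁+k₂+1)/2. Let r be an integer with 0 ≤ r ≤ min(k₁,k₂) if k₁ ≠ k₂, and 0 ≤ r ≤ k₁ - 1 if k₁ = k₂, and set K = k₁ + k₂ - 2r. Then for every x = (x₁,…,x_K) ∈ (0,∞)^K the integral (g^(1) ⊗_r g^(2))(x) := ∫_{(0,∞)^r} g^(1)(y₁,…,y_r, x₁,…,x_{k₁-r}) g^(2)(y₁,…,y_r, x_{k₁-r+1},…,x_K) dy₁…dy_r converges absolutely (for r = 0 it is the pointwise tensor product g^(1)(x₁,…,x_{k₁})g^(2)(x_{k₁+1},…,x_K)), and if g^(1) ⊗_r g^(2) is not almost everywhere zero, then it is a generalized Hermite kernel (GHK) on (0,∞)^K with homogeneity exponent α₁ + α₂ + r, which lies in (-(K+1)/2,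 -K/2). -/
open MeasureTheory

/-- The open positive orthant in `ℝ^k`. -/
def posOrthant (k : ℕ) : Set (Fin k → ℝ) := {y | ∀ i, 0 < y i}

/-- A measurable function `g : (0,∞)^k → ℝ` is a generalized Hermite kernel (GHK) with
homogeneity exponent `α ∈ (-(k+1)/2, -k/2)` if it is homogeneous of degree `α` on the
positive orthant and `∫_{(0,∞)^k} |g(𝟏+x) g(x)| dx < ∞`. -/
def IsGHK (k : ℕ) (α : ℝ) (g : (Fin k → ℝ) → ℝ) : Prop :=
  Measurable g ∧
  (-((k : ℝ) + 1)/2 < α ∧ α < -(k : ℝ)/2) ∧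
  (∀ lam : ℝ, 0 < lam → ∀ x ∈ posOrthant k, g (fun i => lam * x i) = lam ^ α * g x) ∧
  IntegrableOn (fun x => g (fun i => 1 + x i) * g x) (posOrthant k)

/-- A GHK of Class (B): in addition, `g` is a.e. continuous on the positive orthant and
`|g(x)| ≤ c (x₁+…+x_k)^α` for some `c > 0`. -/
def IsGHKB (k : ℕ) (α : ℝ) (g : (Fin k → ℝ) → ℝ) : Prop :=
  IsGHK k α g ∧
  (∀ᵐ x ∂(volume.restrict (posOrthant k)), ContinuousWithinAt g (posOrthant k) x) ∧
  ∃ c : ℝ, 0 < c ∧ ∀ x ∈ posOrthant k, |g x| ≤ c * (∑ i, x i) ^ α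

/-- A function on `(0,∞)^k` (given on all of `ℝ^k`) is symmetric if it is invariant under
every permutation of its arguments. -/
def IsSymmFun (k : ℕ) (g : (Fin k → ℝ) → ℝ) : Prop :=
  ∀ σ : Equiv.Perm (Fin k), ∀ x : Fin k → ℝ, g (x ∘ σ) = g x

/-- The contraction `(g1 ⊗_r g2)(x) = ∫_{(0,∞)^r} g1(y, x₁) g2(y, x₂) dy`, where
`g1` has `r + m₁` arguments, `g2` has `r + m₂` arguments, `x₁` is the first `m₁`
coordinates of `x` and `x₂` the last `m₂` coordinates (for `r = 0` it is the pointwise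
tensor product). -/
noncomputable def contract (r m₁ m₂ : ℕ)
    (g1 : (Fin (r + m₁) → ℝ) → ℝ) (g2 : (Fin (r + m₂) → ℝ) → ℝ)
    (x : Fin (m₁ + m₂) → ℝ) : ℝ :=
  ∫ y in posOrthant r,
    g1 (Fin.append y fun j : Fin m₁ => x (Fin.castAdd m₂ j)) *
      g2 (Fin.append y fun j : Fin m₂ => x (Fin.natAdd m₁ j))

open Set Real


/-- 1-d integrability criterion. -/
lemma aux_int1d {c d p q : ℝ} (hc : 0 ≤ c) (hd : 0 ≤ d)
    (hp : p ≤ 0) (hq : q ≤ 0) (hpq : p + q < -1)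
    (hcp : 0 < c ∨ -1 < p) (hdq : 0 < d ∨ -1 < q) (hcd : 0 < c + d) :
    IntegrableOn (fun t => (c + t) ^ p * (d + t) ^ q) (Ioi (0:ℝ)) := by
  have hmeas : Measurable (fun t : ℝ => (c + t) ^ p * (d + t) ^ q) := by
    fun_prop
  have habs : ∀ t ∈ Ioi (0:ℝ), ‖(c + t) ^ p * (d + t) ^ q‖ = (c + t) ^ p * (d + t) ^ q := by
    intro t ht
    rw [Real.norm_eq_abs, abs_of_nonneg]
    exact mul_nonneg (rpow_nonneg (by linarith [ht.out]) _) (rpow_nonneg (by linarith [ht.out]) _)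
  have h0 : Ioi (0:ℝ) = Ioc (0:ℝ) 1 ∪ Ioi (1:ℝ) := by
    rw [Set.Ioc_union_Ioi_eq_Ioi]; norm_num
  rw [h0]
  apply IntegrableOn.union
  · -- near zero
    have hbd : ∀ g : ℝ → ℝ, IntegrableOn g (Ioc (0:ℝ) 1) →
        (∀ t ∈ Ioc (0:ℝ) 1, (c + t) ^ p * (d + t) ^ q ≤ g t) →
        IntegrableOn (fun t => (c + t) ^ p * (d + t) ^ q) (Ioc (0:ℝ) 1) := by
      intro g hg hle
      refine Integrable.mono' hg hmeas.aestronglyMeasurable ?_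
      refine (ae_restrict_iff' measurableSet_Ioc).2 (Filter.Eventually.of_forall ?_)
      intro t ht
      rw [Real.norm_eq_abs, abs_of_nonneg (mul_nonneg (rpow_nonneg (by linarith [ht.1]) _)
        (rpow_nonneg (by linarith [ht.1]) _))]
      exact hle t ht
    have hC : 0 < c ∨ (c = 0 ∧ -1 < p) := by
      rcases hc.lt_or_eq with h | h
      · exact Or.inl h
      · exact Or.inr ⟨h.symm, hcp.resolve_left (by rw [← h]; exact lt_irrefl 0)⟩
    have hD : 0 < d ∨ (d = 0 ∧ -1 < q) := by
      rcases hd.lt_or_eq with h | h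
      · exact Or.inl h
      · exact Or.inr ⟨h.symm, hdq.resolve_left (by rw [← h]; exact lt_irrefl 0)⟩
    rcases hC with hC | hC <;> rcases hD with hD | hD
    · -- both positive : constant bound
      refine hbd (fun _ => c ^ p * d ^ q) (integrableOn_const measure_Ioc_lt_top.ne) ?_
      intro t ht
      exact mul_le_mul (rpow_le_rpow_of_nonpos hC (by linarith [ht.1]) hp)
        (rpow_le_rpow_of_nonpos hD (by linarith [ht.1]) hq)
        (rpow_nonneg (by linarith [ht.1]) _) (rpow_nonneg hc _)
    · -- c > 0, d = 0
      refine hbd (fun t => c ^ p * t ^ q) ?_ ?_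
      · exact (((intervalIntegral.intervalIntegrable_rpow' hD.2).1)).const_mul _
      · intro t ht
        rw [hD.1, zero_add]
        exact mul_le_mul_of_nonneg_right
          (rpow_le_rpow_of_nonpos hC (by linarith [ht.1]) hp) (rpow_nonneg ht.1.le _)
    · -- c = 0, d > 0
      refine hbd (fun t => t ^ p * d ^ q) ?_ ?_
      · exact (((intervalIntegral.intervalIntegrable_rpow' hC.2).1)).mul_const _
      · intro t ht
        rw [hC.1, zero_add]
        exact mul_le_mul_of_nonneg_left
          (rpow_le_rpow_of_nonpos hD (by linarith [ht.1]) hq) (rpow_nonneg ht.1.le _)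
    · exfalso; rw [hC.1, hD.1] at hcd; norm_num at hcd
  · -- near infinity
    have h1 : IntegrableOn (fun t : ℝ => t ^ (p + q)) (Ioi (1:ℝ)) :=
      integrableOn_Ioi_rpow_of_lt hpq one_pos
    refine Integrable.mono' h1 hmeas.aestronglyMeasurable ?_
    refine (ae_restrict_iff' measurableSet_Ioi).2 (Filter.Eventually.of_forall ?_)
    intro t ht
    have ht0 : (0:ℝ) < t := lt_trans one_pos ht
    rw [Real.norm_eq_abs, abs_of_nonneg (mul_nonneg (rpow_nonneg (by linarith) _)
      (rpow_nonneg (by linarith) _)), Real.rpow_add ht0]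
    exact mul_le_mul (rpow_le_rpow_of_nonpos ht0 (by linarith) hp)
      (rpow_le_rpow_of_nonpos ht0 (by linarith) hq)
      (rpow_nonneg (by linarith) _) (rpow_nonneg ht0.le _)

/-- the beta-like constant -/
noncomputable def auxC (p ν : ℝ) : ℝ := ∫ s in Ioi (0:ℝ), (1 + s) ^ p * s ^ ν

lemma auxC_nonneg (p ν : ℝ) : 0 ≤ auxC p ν := by
  apply setIntegral_nonneg measurableSet_Ioi
  intro t ht
  exact mul_nonneg (rpow_nonneg (by linarith [ht.out]) _) (rpow_nonneg (le_of_lt ht.out) _)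

/-- scaling identity -/
lemma aux_scaling {a p ν : ℝ} (ha : 0 < a) :
    ∫ t in Ioi (0:ℝ), (a + t) ^ p * t ^ ν = a ^ (p + ν + 1) * auxC p ν := by
  have h := integral_comp_mul_left_Ioi (fun t => (a + t) ^ p * t ^ ν) 0 ha
  rw [mul_zero] at h
  -- h : ∫ x in Ioi 0, (a + a*x)^p * (a*x)^ν = a⁻¹ • ∫ x in Ioi 0, (a+x)^p * x^ν
  have h2 : ∫ x in Ioi (0:ℝ), (a + a * x) ^ p * (a * x) ^ ν
      = a ^ (p + ν) * auxC p ν := by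
    rw [show a ^ (p+ν) * auxC p ν = ∫ x in Ioi (0:ℝ), a ^ (p+ν) * ((1 + x) ^ p * x ^ ν)
      from (integral_const_mul _ _).symm]
    apply setIntegral_congr_fun measurableSet_Ioi
    intro x hx
    have hx0 : (0:ℝ) < x := hx.out
    have hax : a + a * x = a * (1 + x) := by ring
    dsimp only
    rw [hax, Real.mul_rpow ha.le (by linarith), Real.mul_rpow ha.le hx0.le,
      Real.rpow_add ha]
    ring
  rw [h2] at h
  have := congrArg (fun z => a * z) h
  simp only [smul_eq_mul, ← mul_assoc, mul_inv_cancel₀ ha.ne', one_mul] at this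
  rw [← this, Real.rpow_add_one ha.ne']
  ring

/-- one-dimensional bound -/
lemma aux_Jbound {a b p q ν : ℝ} (hp : p ≤ 0) (hq : q ≤ 0) (hν1 : -1 < ν) (hν0 : ν ≤ 0)
    (hqν : q ≤ ν) (hpν : p + ν < -1) (ha : 0 < a) (hb : 0 ≤ b) (hside : 0 < b ∨ ν = q) :
    ∫ t in Ioi (0:ℝ), (a + t) ^ p * (b + t) ^ q
      ≤ auxC p ν * (a ^ (p + ν + 1) * b ^ (q - ν)) := by
  have hint2 : IntegrableOn (fun t => b ^ (q - ν) * ((a + t) ^ p * t ^ ν)) (Ioi (0:ℝ)) := by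
    have h0 : IntegrableOn (fun t => (a + t) ^ p * ((0:ℝ) + t) ^ ν) (Ioi (0:ℝ)) :=
      aux_int1d ha.le le_rfl hp hν0 (by linarith) (Or.inl ha) (Or.inr hν1) (by linarith)
    simp only [zero_add] at h0
    exact h0.const_mul _
  have hint1 : IntegrableOn (fun t => (a + t) ^ p * (b + t) ^ q) (Ioi (0:ℝ)) := by
    refine aux_int1d ha.le hb hp hq (by linarith) (Or.inl ha) ?_ (by linarith)
    rcases hside with h | h
    · exact Or.inl h
    · exact Or.inr (by rw [← h]; exact hν1)
  have hle : ∀ t ∈ Ioi (0:ℝ), (a + t) ^ p * (b + t) ^ q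
      ≤ b ^ (q - ν) * ((a + t) ^ p * t ^ ν) := by
    intro t ht
    have ht0 : (0:ℝ) < t := ht.out
    have key : (b + t) ^ q ≤ b ^ (q - ν) * t ^ ν := by
      rcases hside with hbpos | heq
      · have : (b + t) ^ q = (b + t) ^ (q - ν) * (b + t) ^ ν := by
          rw [← Real.rpow_add (by linarith)]; ring_nf
        rw [this]
        exact mul_le_mul (rpow_le_rpow_of_nonpos hbpos (by linarith) (by linarith))
          (rpow_le_rpow_of_nonpos ht0 (by linarith) hν0)
          (rpow_nonneg (by linarith) _) (rpow_nonneg hbpos.le _)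
      · obtain rfl := heq
        rw [sub_self, Real.rpow_zero, one_mul]
        exact rpow_le_rpow_of_nonpos ht0 (by linarith) hν0
    calc (a + t) ^ p * (b + t) ^ q ≤ (a + t) ^ p * (b ^ (q - ν) * t ^ ν) :=
          mul_le_mul_of_nonneg_left key (rpow_nonneg (by linarith) _)
      _ = b ^ (q - ν) * ((a + t) ^ p * t ^ ν) := by ring
  calc ∫ t in Ioi (0:ℝ), (a + t) ^ p * (b + t) ^ q
      ≤ ∫ t in Ioi (0:ℝ), b ^ (q - ν) * ((a + t) ^ p * t ^ ν) :=
        setIntegral_mono_on hint1 hint2 measurableSet_Ioi hle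
    _ = b ^ (q - ν) * (a ^ (p + ν + 1) * auxC p ν) := by
        rw [integral_const_mul, aux_scaling ha]
    _ = auxC p ν * (a ^ (p + ν + 1) * b ^ (q - ν)) := by ring
lemma posOrthant_eq (k : ℕ) : posOrthant k = Set.pi Set.univ (fun _ : Fin k => Ioi (0:ℝ)) := by
  ext y; simp [posOrthant, Set.mem_pi]

lemma measurableSet_posOrthant (k : ℕ) : MeasurableSet (posOrthant k) := by
  rw [posOrthant_eq]
  exact MeasurableSet.univ_pi (fun _ => measurableSet_Ioi)

/-- product integrability over the orthant -/
lemma aux_prod_integrable {n : ℕ} (h : Fin n → ℝ → ℝ)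
    (hint : ∀ i, IntegrableOn (h i) (Ioi (0:ℝ))) :
    IntegrableOn (fun y : Fin n → ℝ => ∏ i, h i (y i)) (posOrthant n) := by
  have hInd : ∀ i, Integrable ((Ioi (0:ℝ)).indicator (h i)) :=
    fun i => (integrable_indicator_iff measurableSet_Ioi).2 (hint i)
  have hprod := Integrable.fin_nat_prod (fun i => hInd i)
  have heq : (posOrthant n).indicator (fun y : Fin n → ℝ => ∏ i, h i (y i))
      = fun y => ∏ i, (Ioi (0:ℝ)).indicator (h i) (y i) := by
    funext y
    by_cases hy : y ∈ posOrthant n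
    · rw [Set.indicator_of_mem hy]
      exact Finset.prod_congr rfl fun i _ => (Set.indicator_of_mem (hy i) _).symm
    · rw [Set.indicator_of_notMem hy]
      obtain ⟨i, hi⟩ := not_forall.1 hy
      exact (Finset.prod_eq_zero (Finset.mem_univ i)
        (by rw [Set.indicator_of_notMem (by simpa using hi)])).symm
  exact (integrable_indicator_iff (measurableSet_posOrthant n)).1 (heq ▸ hprod)

/-- product integral over the orthant -/
lemma aux_prod_integral {n : ℕ} (h : Fin n → ℝ → ℝ) :
    ∫ y in posOrthant n, ∏ i, h i (y i) = ∏ i, ∫ t in Ioi (0:ℝ), h i t := by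
  have heq : (posOrthant n).indicator (fun y : Fin n → ℝ => ∏ i, h i (y i))
      = fun y => ∏ i, (Ioi (0:ℝ)).indicator (h i) (y i) := by
    funext y
    by_cases hy : y ∈ posOrthant n
    · rw [Set.indicator_of_mem hy]
      exact Finset.prod_congr rfl fun i _ => (Set.indicator_of_mem (hy i) _).symm
    · rw [Set.indicator_of_notMem hy]
      obtain ⟨i, hi⟩ := not_forall.1 hy
      exact (Finset.prod_eq_zero (Finset.mem_univ i)
        (by rw [Set.indicator_of_notMem (by simpa using hi)])).symm
  rw [← integral_indicator (measurableSet_posOrthant n), heq, volume_pi,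
    MeasureTheory.integral_fin_nat_prod_eq_prod]
  exact Finset.prod_congr rfl fun i _ => integral_indicator measurableSet_Ioi
/-- splitting a power of a sum into a product -/
lemma aux_rpow_le_prod {n : ℕ} (hn : 0 < n) (S : ℝ) (v : Fin n → ℝ)
    (hv : ∀ j, 0 < v j) (hle : ∀ j, v j ≤ S) (e : ℝ) (he : e ≤ 0) :
    S ^ e ≤ ∏ j, (v j) ^ (e / n) := by
  have hS : 0 < S := lt_of_lt_of_le (hv ⟨0, hn⟩) (hle ⟨0, hn⟩)
  have h1 : S ^ e = ∏ _j : Fin n, S ^ (e / n) := by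
    rw [Finset.prod_const, Finset.card_univ, Fintype.card_fin,
      ← Real.rpow_natCast (S ^ (e / n)) n, ← Real.rpow_mul hS.le,
      div_mul_cancel₀ _ (by exact_mod_cast hn.ne' : (n:ℝ) ≠ 0)]
  rw [h1]
  apply Finset.prod_le_prod
  · intro j _; exact Real.rpow_nonneg hS.le _
  · intro j _
    exact Real.rpow_le_rpow_of_nonpos (hv j) (hle j)
      (div_nonpos_of_nonpos_of_nonneg he (Nat.cast_nonneg n))

lemma aux_append_mem {r m : ℕ} {y : Fin r → ℝ} {u : Fin m → ℝ}
    (hy : ∀ i, 0 < y i) (hu : ∀ j, 0 < u j) :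
    Fin.append y u ∈ posOrthant (r + m) := by
  intro i
  refine Fin.addCases (fun j => ?_) (fun j => ?_) i
  · rw [Fin.append_left]; exact hy j
  · rw [Fin.append_right]; exact hu j

lemma aux_append_sum {r m : ℕ} (y : Fin r → ℝ) (u : Fin m → ℝ) :
    ∑ i, Fin.append y u i = (∑ i, y i) + ∑ j, u j := by
  rw [Fin.sum_univ_add]
  simp [Fin.append_left, Fin.append_right]

lemma aux_measurable_append (r m : ℕ) :
    Measurable (fun p : (Fin r → ℝ) × (Fin m → ℝ) => Fin.append p.1 p.2) := by
  apply measurable_pi_lambda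
  intro i
  refine Fin.addCases (fun j => ?_) (fun j => ?_) i
  · simp only [Fin.append_left]
    exact (measurable_pi_apply j).comp measurable_fst
  · simp only [Fin.append_right]
    exact (measurable_pi_apply j).comp measurable_snd
section Core
variable {r m₁ m₂ : ℕ} {α₁ α₂ c₁ c₂ : ℝ}
  {g1 : (Fin (r + m₁) → ℝ) → ℝ} {g2 : (Fin (r + m₂) → ℝ) → ℝ}

/-- pointwise bound on the contraction integrand -/
lemma aux_integrand_bound (hr : 0 < r) (hα₁ : α₁ ≤ 0) (hα₂ : α₂ ≤ 0)
    (hc₁ : 0 ≤ c₁) (hc₂ : 0 ≤ c₂)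
    (hb1 : ∀ z ∈ posOrthant (r + m₁), |g1 z| ≤ c₁ * (∑ i, z i) ^ α₁)
    (hb2 : ∀ z ∈ posOrthant (r + m₂), |g2 z| ≤ c₂ * (∑ i, z i) ^ α₂)
    (u : Fin m₁ → ℝ) (v : Fin m₂ → ℝ) (hu : ∀ j, 0 < u j) (hv : ∀ j, 0 < v j)
    (y : Fin r → ℝ) (hy : ∀ i, 0 < y i) :
    |g1 (Fin.append y u) * g2 (Fin.append y v)|
      ≤ (c₁ * c₂) * ∏ i : Fin r,
          (((∑ j, u j) + y i) ^ (α₁ / r) * ((∑ j, v j) + y i) ^ (α₂ / r)) := by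
  set A := ∑ j, u j with hA
  set B := ∑ j, v j with hB
  have hA0 : 0 ≤ A := Finset.sum_nonneg fun j _ => (hu j).le
  have hB0 : 0 ≤ B := Finset.sum_nonneg fun j _ => (hv j).le
  have hy0 : 0 ≤ ∑ i, y i := Finset.sum_nonneg fun i _ => (hy i).le
  have hSa : (0:ℝ) ≤ (∑ i, y i) + A := by linarith
  have hSb : (0:ℝ) ≤ (∑ i, y i) + B := by linarith
  have h1 : |g1 (Fin.append y u)| ≤ c₁ * ((∑ i, y i) + A) ^ α₁ := by
    have := hb1 _ (aux_append_mem hy hu)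
    rwa [aux_append_sum] at this
  have h1' : |g2 (Fin.append y v)| ≤ c₂ * ((∑ i, y i) + B) ^ α₂ := by
    have := hb2 _ (aux_append_mem hy hv)
    rwa [aux_append_sum] at this
  have h2 : ((∑ i, y i) + A) ^ α₁ ≤ ∏ i, (A + y i) ^ (α₁ / r) := by
    refine aux_rpow_le_prod hr _ (fun i => A + y i)
      (fun i => by show (0:ℝ) < A + y i; linarith [hy i]) ?_ _ hα₁
    intro i
    show A + y i ≤ _
    have := Finset.single_le_sum (fun i _ => (hy i).le) (Finset.mem_univ i)
    linarith
  have h2' : ((∑ i, y i) + B) ^ α₂ ≤ ∏ i, (B + y i) ^ (α₂ / r) := by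
    refine aux_rpow_le_prod hr _ (fun i => B + y i)
      (fun i => by show (0:ℝ) < B + y i; linarith [hy i]) ?_ _ hα₂
    intro i
    show B + y i ≤ _
    have := Finset.single_le_sum (fun i _ => (hy i).le) (Finset.mem_univ i)
    linarith
  calc |g1 (Fin.append y u) * g2 (Fin.append y v)|
      = |g1 (Fin.append y u)| * |g2 (Fin.append y v)| := abs_mul _ _
    _ ≤ (c₁ * ((∑ i, y i) + A) ^ α₁) * (c₂ * ((∑ i, y i) + B) ^ α₂) :=
        mul_le_mul h1 h1' (abs_nonneg _) (mul_nonneg hc₁ (Real.rpow_nonneg hSa _))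
    _ = (c₁ * c₂) * (((∑ i, y i) + A) ^ α₁ * ((∑ i, y i) + B) ^ α₂) := by ring
    _ ≤ (c₁ * c₂) * ((∏ i, (A + y i) ^ (α₁ / r)) * (∏ i, (B + y i) ^ (α₂ / r))) := by
        refine mul_le_mul_of_nonneg_left ?_ (mul_nonneg hc₁ hc₂)
        refine mul_le_mul h2 h2' (Real.rpow_nonneg hSb _) ?_
        exact Finset.prod_nonneg fun i _ => Real.rpow_nonneg (by linarith [hy i]) _
    _ = (c₁ * c₂) * ∏ i, ((A + y i) ^ (α₁ / r) * (B + y i) ^ (α₂ / r)) := by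
        rw [Finset.prod_mul_distrib]

/-- Part 1 for `r ≥ 1` -/
lemma aux_part1 (hr : 0 < r) (hα₁ : α₁ ≤ 0) (hα₂ : α₂ ≤ 0)
    (hc₁ : 0 ≤ c₁) (hc₂ : 0 ≤ c₂) (hm1 : Measurable g1) (hm2 : Measurable g2)
    (hb1 : ∀ z ∈ posOrthant (r + m₁), |g1 z| ≤ c₁ * (∑ i, z i) ^ α₁)
    (hb2 : ∀ z ∈ posOrthant (r + m₂), |g2 z| ≤ c₂ * (∑ i, z i) ^ α₂)
    (u : Fin m₁ → ℝ) (v : Fin m₂ → ℝ) (hu : ∀ j, 0 < u j) (hv : ∀ j, 0 < v j)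
    (hpq : α₁ / r + α₂ / r < -1)
    (hAp : 0 < ∑ j, u j ∨ -1 < α₁ / r) (hBq : 0 < ∑ j, v j ∨ -1 < α₂ / r)
    (hAB : 0 < (∑ j, u j) + ∑ j, v j) :
    IntegrableOn (fun y : Fin r → ℝ => g1 (Fin.append y u) * g2 (Fin.append y v))
      (posOrthant r) := by
  set A := ∑ j, u j with hA
  set B := ∑ j, v j with hB
  have hA0 : 0 ≤ A := Finset.sum_nonneg fun j _ => (hu j).le
  have hB0 : 0 ≤ B := Finset.sum_nonneg fun j _ => (hv j).le
  have hΦ : IntegrableOn (fun t => (A + t) ^ (α₁ / r) * (B + t) ^ (α₂ / r)) (Ioi (0:ℝ)) :=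
    aux_int1d hA0 hB0 (div_nonpos_of_nonpos_of_nonneg hα₁ (Nat.cast_nonneg r))
      (div_nonpos_of_nonpos_of_nonneg hα₂ (Nat.cast_nonneg r)) hpq hAp hBq hAB
  have hG : IntegrableOn
      (fun y : Fin r → ℝ => (c₁ * c₂) * ∏ i, ((A + y i) ^ (α₁ / r) * (B + y i) ^ (α₂ / r)))
      (posOrthant r) :=
    (aux_prod_integrable _ (fun _ => hΦ)).const_mul _
  have hma : Measurable fun y : Fin r → ℝ => g1 (Fin.append y u) :=
    hm1.comp ((aux_measurable_append r m₁).comp (measurable_id.prodMk measurable_const))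
  have hmb : Measurable fun y : Fin r → ℝ => g2 (Fin.append y v) :=
    hm2.comp ((aux_measurable_append r m₂).comp (measurable_id.prodMk measurable_const))
  refine Integrable.mono' hG (hma.mul hmb).aestronglyMeasurable ?_
  refine (ae_restrict_iff' (measurableSet_posOrthant r)).2 (Filter.Eventually.of_forall ?_)
  intro y hy
  rw [Real.norm_eq_abs]
  exact aux_integrand_bound hr hα₁ hα₂ hc₁ hc₂ hb1 hb2 u v hu hv y hy

end Core
lemma aux_rpow_pow {a : ℝ} (ha : 0 ≤ a) (e : ℝ) (n : ℕ) : (a ^ e) ^ n = a ^ (e * n) := by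
  rw [← Real.rpow_natCast (a ^ e) n, ← Real.rpow_mul ha]

/-- bound for the full `r`-dimensional integral -/
lemma aux_key {r : ℕ} (hr : 0 < r) {a b p q ν : ℝ}
    (hp : p ≤ 0) (hq : q ≤ 0) (hν1 : -1 < ν) (hν0 : ν ≤ 0)
    (hqν : q ≤ ν) (hpν : p + ν < -1) (ha : 0 < a) (hb : 0 ≤ b) (hside : 0 < b ∨ ν = q) :
    ∫ y in posOrthant r, ∏ i : Fin r, ((a + y i) ^ p * (b + y i) ^ q)
      ≤ (auxC p ν * (a ^ (p + ν + 1) * b ^ (q - ν))) ^ r := by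
  rw [aux_prod_integral (fun _ t => (a + t) ^ p * (b + t) ^ q),
    Finset.prod_const, Finset.card_univ, Fintype.card_fin]
  refine pow_le_pow_left₀ ?_ (aux_Jbound hp hq hν1 hν0 hqν hpν ha hb hside) r
  apply setIntegral_nonneg measurableSet_Ioi
  intro t ht
  exact mul_nonneg (Real.rpow_nonneg (by linarith [ht.out]) _)
    (Real.rpow_nonneg (by linarith [ht.out]) _)

section C
variable {r m₁ m₂ : ℕ} {α₁ α₂ : ℝ}
  {g1 : (Fin (r + m₁) → ℝ) → ℝ} {g2 : (Fin (r + m₂) → ℝ) → ℝ}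

lemma aux_contract_measurable (hm1 : Measurable g1) (hm2 : Measurable g2) :
    Measurable (contract r m₁ m₂ g1 g2) := by
  have h : StronglyMeasurable (Function.uncurry fun (x : Fin (m₁ + m₂) → ℝ) (y : Fin r → ℝ) =>
      g1 (Fin.append y fun j : Fin m₁ => x (Fin.castAdd m₂ j)) *
        g2 (Fin.append y fun j : Fin m₂ => x (Fin.natAdd m₁ j))) := by
    apply Measurable.stronglyMeasurable
    apply Measurable.mul
    · exact hm1.comp ((aux_measurable_append r m₁).comp (measurable_snd.prodMk
        (measurable_pi_lambda _ fun j => (measurable_pi_apply _).comp measurable_fst)))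
    · exact hm2.comp ((aux_measurable_append r m₂).comp (measurable_snd.prodMk
        (measurable_pi_lambda _ fun j => (measurable_pi_apply _).comp measurable_fst)))
  exact (h.integral_prod_right' (ν := volume.restrict (posOrthant r))).measurable

lemma aux_contract_homog
    (hh1 : ∀ lam : ℝ, 0 < lam → ∀ z ∈ posOrthant (r + m₁),
      g1 (fun i => lam * z i) = lam ^ α₁ * g1 z)
    (hh2 : ∀ lam : ℝ, 0 < lam → ∀ z ∈ posOrthant (r + m₂),
      g2 (fun i => lam * z i) = lam ^ α₂ * g2 z)
    {lam : ℝ} (hlam : 0 < lam) (x : Fin (m₁ + m₂) → ℝ) (hx : x ∈ posOrthant (m₁ + m₂)) :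
    contract r m₁ m₂ g1 g2 (fun i => lam * x i)
      = lam ^ (α₁ + α₂ + r) * contract r m₁ m₂ g1 g2 x := by
  set u := fun j : Fin m₁ => x (Fin.castAdd m₂ j) with hu
  set v := fun j : Fin m₂ => x (Fin.natAdd m₁ j) with hv
  have hu' : ∀ j, 0 < u j := fun j => hx _
  have hv' : ∀ j, 0 < v j := fun j => hx _
  set f₀ : (Fin r → ℝ) → ℝ := (posOrthant r).indicator
    (fun y => g1 (Fin.append y fun j => lam * u j) * g2 (Fin.append y fun j => lam * v j))
    with hf₀
  have hL : contract r m₁ m₂ g1 g2 (fun i => lam * x i) = ∫ y, f₀ y := by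
    rw [hf₀, integral_indicator (measurableSet_posOrthant r)]
    rfl
  have hcomp : ∀ z : Fin r → ℝ, f₀ (lam • z)
      = lam ^ (α₁ + α₂) * (posOrthant r).indicator
          (fun y => g1 (Fin.append y u) * g2 (Fin.append y v)) z := by
    intro z
    by_cases hz : z ∈ posOrthant r
    · have hlz : lam • z ∈ posOrthant r := by
        intro i
        simp only [Pi.smul_apply, smul_eq_mul]
        exact mul_pos hlam (hz i)
      rw [hf₀, Set.indicator_of_mem hlz, Set.indicator_of_mem hz]
      have e1 : Fin.append (lam • z) (fun j => lam * u j)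
          = fun i => lam * (Fin.append z u i) := by
        funext i
        refine Fin.addCases (fun j => ?_) (fun j => ?_) i <;>
          simp [Fin.append_left, Fin.append_right]
      have e2 : Fin.append (lam • z) (fun j => lam * v j)
          = fun i => lam * (Fin.append z v i) := by
        funext i
        refine Fin.addCases (fun j => ?_) (fun j => ?_) i <;>
          simp [Fin.append_left, Fin.append_right]
      rw [e1, e2, hh1 lam hlam _ (aux_append_mem hz hu'), hh2 lam hlam _ (aux_append_mem hz hv'),
        Real.rpow_add hlam]
      ring
    · have hlz : lam • z ∉ posOrthant r := by
        intro hcon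
        apply hz
        intro i
        have := hcon i
        simp only [Pi.smul_apply, smul_eq_mul] at this
        nlinarith
      rw [hf₀, Set.indicator_of_notMem hlz, Set.indicator_of_notMem hz, mul_zero]
  have hcs := MeasureTheory.Measure.integral_comp_smul (μ := volume) f₀ lam
  rw [Module.finrank_fin_fun ℝ] at hcs
  have hR : ∫ z, f₀ (lam • z) = lam ^ (α₁ + α₂) * contract r m₁ m₂ g1 g2 x := by
    simp_rw [hcomp]
    rw [integral_const_mul, integral_indicator (measurableSet_posOrthant r)]
    rfl
  rw [hR] at hcs
  rw [hL]
  rw [abs_of_pos (inv_pos.2 (pow_pos hlam r)), smul_eq_mul] at hcs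
  have hne : (lam ^ r : ℝ) ≠ 0 := (pow_pos hlam r).ne'
  have : (lam ^ r : ℝ) * (lam ^ (α₁ + α₂) * contract r m₁ m₂ g1 g2 x) = ∫ y, f₀ y := by
    rw [hcs, ← mul_assoc, mul_inv_cancel₀ hne, one_mul]
  rw [← this, ← Real.rpow_natCast lam r, ← mul_assoc, ← Real.rpow_add hlam,
    show (r:ℝ) + (α₁ + α₂) = α₁ + α₂ + (r:ℝ) by ring]
end C
section D
variable {r m₁ m₂ : ℕ} {α₁ α₂ c₁ c₂ : ℝ}
  {g1 : (Fin (r + m₁) → ℝ) → ℝ} {g2 : (Fin (r + m₂) → ℝ) → ℝ}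

/-- `|contract x|` is bounded by the integral of the product majorant. -/
lemma aux_contract_abs_le (hr : 0 < r) (hα₁ : α₁ ≤ 0) (hα₂ : α₂ ≤ 0)
    (hc₁ : 0 ≤ c₁) (hc₂ : 0 ≤ c₂) (hm1 : Measurable g1) (hm2 : Measurable g2)
    (hb1 : ∀ z ∈ posOrthant (r + m₁), |g1 z| ≤ c₁ * (∑ i, z i) ^ α₁)
    (hb2 : ∀ z ∈ posOrthant (r + m₂), |g2 z| ≤ c₂ * (∑ i, z i) ^ α₂)
    (hpq : α₁ / r + α₂ / r < -1)
    (x : Fin (m₁ + m₂) → ℝ) (hx : x ∈ posOrthant (m₁ + m₂))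
    (hAp : 0 < ∑ j : Fin m₁, x (Fin.castAdd m₂ j) ∨ -1 < α₁ / r)
    (hBq : 0 < ∑ j : Fin m₂, x (Fin.natAdd m₁ j) ∨ -1 < α₂ / r)
    (hAB : 0 < (∑ j : Fin m₁, x (Fin.castAdd m₂ j)) + ∑ j : Fin m₂, x (Fin.natAdd m₁ j)) :
    |contract r m₁ m₂ g1 g2 x| ≤ (c₁ * c₂) *
      ∫ y in posOrthant r, ∏ i : Fin r,
        (((∑ j : Fin m₁, x (Fin.castAdd m₂ j)) + y i) ^ (α₁ / r) *
          ((∑ j : Fin m₂, x (Fin.natAdd m₁ j)) + y i) ^ (α₂ / r)) := by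
  set u := fun j : Fin m₁ => x (Fin.castAdd m₂ j) with hudef
  set v := fun j : Fin m₂ => x (Fin.natAdd m₁ j) with hvdef
  have hu : ∀ j, 0 < u j := fun j => hx _
  have hv : ∀ j, 0 < v j := fun j => hx _
  set A := ∑ j, u j with hA
  set B := ∑ j, v j with hB
  have hA0 : 0 ≤ A := Finset.sum_nonneg fun j _ => (hu j).le
  have hB0 : 0 ≤ B := Finset.sum_nonneg fun j _ => (hv j).le
  have hΦ : IntegrableOn (fun t => (A + t) ^ (α₁ / r) * (B + t) ^ (α₂ / r)) (Ioi (0:ℝ)) :=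
    aux_int1d hA0 hB0 (div_nonpos_of_nonpos_of_nonneg hα₁ (Nat.cast_nonneg r))
      (div_nonpos_of_nonpos_of_nonneg hα₂ (Nat.cast_nonneg r)) hpq hAp hBq hAB
  have hG : IntegrableOn
      (fun y : Fin r → ℝ => (c₁ * c₂) * ∏ i, ((A + y i) ^ (α₁ / r) * (B + y i) ^ (α₂ / r)))
      (posOrthant r) :=
    (aux_prod_integrable _ (fun _ => hΦ)).const_mul _
  have hint : IntegrableOn (fun y : Fin r → ℝ => g1 (Fin.append y u) * g2 (Fin.append y v))
      (posOrthant r) :=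
    aux_part1 hr hα₁ hα₂ hc₁ hc₂ hm1 hm2 hb1 hb2 u v hu hv hpq hAp hBq hAB
  calc |contract r m₁ m₂ g1 g2 x|
      ≤ ∫ y in posOrthant r, |g1 (Fin.append y u) * g2 (Fin.append y v)| := by
        rw [show contract r m₁ m₂ g1 g2 x
          = ∫ y in posOrthant r, g1 (Fin.append y u) * g2 (Fin.append y v) from rfl]
        simpa only [Real.norm_eq_abs] using MeasureTheory.norm_integral_le_integral_norm
          (μ := volume.restrict (posOrthant r))
          (f := fun y : Fin r → ℝ => g1 (Fin.append y u) * g2 (Fin.append y v))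
    _ ≤ ∫ y in posOrthant r,
          (c₁ * c₂) * ∏ i, ((A + y i) ^ (α₁ / r) * (B + y i) ^ (α₂ / r)) := by
        refine setIntegral_mono_on hint.abs hG (measurableSet_posOrthant r) ?_
        intro y hy
        exact aux_integrand_bound hr hα₁ hα₂ hc₁ hc₂ hb1 hb2 u v hu hv y hy
    _ = (c₁ * c₂) * ∫ y in posOrthant r,
          ∏ i, ((A + y i) ^ (α₁ / r) * (B + y i) ^ (α₂ / r)) := integral_const_mul _ _

end D

/-- block inequality for the condition-4 majorant -/
lemma aux_block {m : ℕ} (e : ℝ) (he : e ≤ 0) (hm : (m = 0 ∧ e = 0) ∨ 1 ≤ m)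
    (w : Fin m → ℝ) (hw : ∀ j, 0 < w j) :
    ((m : ℝ) + ∑ j, w j) ^ e * (∑ j, w j) ^ e
      ≤ ∏ j, ((1 + w j) ^ (e / (m:ℝ)) * (w j) ^ (e / (m:ℝ))) := by
  rcases hm with ⟨hm0, he0⟩ | hm1
  · subst hm0; subst he0
    simp [Real.rpow_zero]
  · have hmpos : (0:ℕ) < m := hm1
    have hwle : ∀ j, w j ≤ ∑ j, w j :=
      fun j => Finset.single_le_sum (fun i _ => (hw i).le) (Finset.mem_univ j)
    have : Nonempty (Fin m) := ⟨⟨0, hmpos⟩⟩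
    have hS : 0 < ∑ j, w j := Finset.sum_pos (fun i _ => hw i) Finset.univ_nonempty
    have h1 : ((m : ℝ) + ∑ j, w j) ^ e ≤ ∏ j, (1 + w j) ^ (e / (m:ℝ)) := by
      refine aux_rpow_le_prod hmpos _ (fun j => 1 + w j)
        (fun j => by show (0:ℝ) < 1 + w j; linarith [hw j]) ?_ _ he
      intro j
      show 1 + w j ≤ _
      have : (1:ℝ) ≤ m := by exact_mod_cast hm1
      linarith [hwle j]
    have h2 : (∑ j, w j) ^ e ≤ ∏ j, (w j) ^ (e / (m:ℝ)) :=
      aux_rpow_le_prod hmpos _ w hw hwle _ he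
    calc ((m : ℝ) + ∑ j, w j) ^ e * (∑ j, w j) ^ e
        ≤ (∏ j, (1 + w j) ^ (e / (m:ℝ))) * ∏ j, (w j) ^ (e / (m:ℝ)) := by
          refine mul_le_mul h1 h2 (Real.rpow_nonneg hS.le _) ?_
          exact Finset.prod_nonneg fun j _ => Real.rpow_nonneg (by linarith [hw j]) _
      _ = ∏ j, ((1 + w j) ^ (e / (m:ℝ)) * (w j) ^ (e / (m:ℝ))) := by
          rw [Finset.prod_mul_distrib]
/-- Condition 4 from a separated pointwise bound. -/
lemma aux_cond4 {m₁ m₂ : ℕ} (F : (Fin (m₁ + m₂) → ℝ) → ℝ) (hF : Measurable F)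
    (C e₁ e₂ : ℝ) (hC : 0 ≤ C)
    (h1 : (m₁ = 0 ∧ e₁ = 0) ∨ (-(m₁:ℝ) < e₁ ∧ 2*e₁ < -(m₁:ℝ)))
    (h2 : (m₂ = 0 ∧ e₂ = 0) ∨ (-(m₂:ℝ) < e₂ ∧ 2*e₂ < -(m₂:ℝ)))
    (hbd : ∀ x ∈ posOrthant (m₁ + m₂), |F x| ≤
      C * ((∑ j : Fin m₁, x (Fin.castAdd m₂ j)) ^ e₁ *
           (∑ j : Fin m₂, x (Fin.natAdd m₁ j)) ^ e₂)) :
    IntegrableOn (fun x => F (fun i => 1 + x i) * F x) (posOrthant (m₁ + m₂)) := by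
  have he₁0 : e₁ ≤ 0 := by
    rcases h1 with ⟨_, h⟩ | ⟨_, h⟩
    · exact h.le
    · have : (0:ℝ) ≤ m₁ := Nat.cast_nonneg _
      linarith
  have he₂0 : e₂ ≤ 0 := by
    rcases h2 with ⟨_, h⟩ | ⟨_, h⟩
    · exact h.le
    · have : (0:ℝ) ≤ m₂ := Nat.cast_nonneg _
      linarith
  set c : Fin (m₁ + m₂) → ℝ := Fin.addCases (fun _ => e₁ / m₁) (fun _ => e₂ / m₂) with hc
  have hcfacts : ∀ i, -1 < c i ∧ c i ≤ 0 ∧ c i + c i < -1 := by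
    intro i
    refine Fin.addCases (fun j => ?_) (fun j => ?_) i
    · have hm : 0 < m₁ := Nat.pos_of_ne_zero (by rintro rfl; exact j.elim0)
      have hmr : (0:ℝ) < m₁ := by exact_mod_cast hm
      rcases h1 with ⟨h0, _⟩ | ⟨ha, hb⟩
      · exact absurd h0 hm.ne'
      · simp only [hc, Fin.addCases_left]
        refine ⟨by rw [lt_div_iff₀ hmr]; linarith, div_nonpos_of_nonpos_of_nonneg he₁0 hmr.le,
          by rw [← add_div, div_lt_iff₀ hmr]; linarith⟩
    · have hm : 0 < m₂ := Nat.pos_of_ne_zero (by rintro rfl; exact j.elim0)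
      have hmr : (0:ℝ) < m₂ := by exact_mod_cast hm
      rcases h2 with ⟨h0, _⟩ | ⟨ha, hb⟩
      · exact absurd h0 hm.ne'
      · simp only [hc, Fin.addCases_right]
        refine ⟨by rw [lt_div_iff₀ hmr]; linarith, div_nonpos_of_nonpos_of_nonneg he₂0 hmr.le,
          by rw [← add_div, div_lt_iff₀ hmr]; linarith⟩
  set h : Fin (m₁ + m₂) → ℝ → ℝ := fun i t => (1 + t) ^ (c i) * t ^ (c i) with hh
  have hint : ∀ i, IntegrableOn (h i) (Ioi (0:ℝ)) := by
    intro i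
    obtain ⟨hci1, hci0, hci2⟩ := hcfacts i
    have : IntegrableOn (fun t : ℝ => (1 + t) ^ (c i) * ((0:ℝ) + t) ^ (c i)) (Ioi (0:ℝ)) :=
      aux_int1d (by norm_num) le_rfl hci0 hci0 hci2 (Or.inl one_pos) (Or.inr hci1)
        (by norm_num)
    simpa only [zero_add] using this
  have hG : IntegrableOn (fun x : Fin (m₁ + m₂) → ℝ => (C * C) * ∏ i, h i (x i))
      (posOrthant (m₁ + m₂)) := (aux_prod_integrable h hint).const_mul _
  have hmeas : Measurable fun x : Fin (m₁ + m₂) → ℝ => F (fun i => 1 + x i) * F x :=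
    (hF.comp (measurable_pi_lambda _ fun i => measurable_const.add (measurable_pi_apply i))).mul hF
  refine Integrable.mono' hG hmeas.aestronglyMeasurable ?_
  refine (ae_restrict_iff' (measurableSet_posOrthant _)).2 (Filter.Eventually.of_forall ?_)
  intro x hx
  set u := fun j : Fin m₁ => x (Fin.castAdd m₂ j) with hudef
  set v := fun j : Fin m₂ => x (Fin.natAdd m₁ j) with hvdef
  have hu : ∀ j, 0 < u j := fun j => hx _
  have hv : ∀ j, 0 < v j := fun j => hx _
  have hx1 : (fun i => 1 + x i) ∈ posOrthant (m₁ + m₂) := fun i => by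
    have := hx i; positivity
  have hb1 := hbd _ hx1
  have hb2 := hbd x hx
  have hsum1 : (∑ j : Fin m₁, (1 + x (Fin.castAdd m₂ j))) = (m₁ : ℝ) + ∑ j, u j := by
    rw [Finset.sum_add_distrib, Finset.sum_const, Finset.card_univ, Fintype.card_fin,
      nsmul_eq_mul, mul_one]
  have hsum2 : (∑ j : Fin m₂, (1 + x (Fin.natAdd m₁ j))) = (m₂ : ℝ) + ∑ j, v j := by
    rw [Finset.sum_add_distrib, Finset.sum_const, Finset.card_univ, Fintype.card_fin,
      nsmul_eq_mul, mul_one]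
  rw [hsum1, hsum2] at hb1
  have hbl1 : ((m₁:ℝ) + ∑ j, u j) ^ e₁ * (∑ j, u j) ^ e₁
      ≤ ∏ j, ((1 + u j) ^ (e₁ / (m₁:ℝ)) * (u j) ^ (e₁ / (m₁:ℝ))) := by
    refine aux_block e₁ he₁0 ?_ u hu
    rcases h1 with ⟨h0, hh0⟩ | ⟨ha, hb⟩
    · exact Or.inl ⟨h0, hh0⟩
    · right
      by_contra hcon
      push_neg at hcon
      have h0 : m₁ = 0 := by omega
      rw [h0] at ha hb
      simp only [Nat.cast_zero, neg_zero] at ha hb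
      linarith
  have hbl2 : ((m₂:ℝ) + ∑ j, v j) ^ e₂ * (∑ j, v j) ^ e₂
      ≤ ∏ j, ((1 + v j) ^ (e₂ / (m₂:ℝ)) * (v j) ^ (e₂ / (m₂:ℝ))) := by
    refine aux_block e₂ he₂0 ?_ v hv
    rcases h2 with ⟨h0, hh0⟩ | ⟨ha, hb⟩
    · exact Or.inl ⟨h0, hh0⟩
    · right
      by_contra hcon
      push_neg at hcon
      have h0 : m₂ = 0 := by omega
      rw [h0] at ha hb
      simp only [Nat.cast_zero, neg_zero] at ha hb
      linarith
  have hprodsplit : ∏ i, h i (x i)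
      = (∏ j, ((1 + u j) ^ (e₁ / (m₁:ℝ)) * (u j) ^ (e₁ / (m₁:ℝ)))) *
        ∏ j, ((1 + v j) ^ (e₂ / (m₂:ℝ)) * (v j) ^ (e₂ / (m₂:ℝ))) := by
    rw [Fin.prod_univ_add]
    congr 1
    · exact Finset.prod_congr rfl fun j _ => by
        simp only [hh, hc, hudef, Fin.addCases_left]
    · exact Finset.prod_congr rfl fun j _ => by
        simp only [hh, hc, hvdef, Fin.addCases_right]
  have hnn : ∀ z : ℝ, ∀ ee : ℝ, 0 ≤ z → (0:ℝ) ≤ z ^ ee := fun z ee hz => Real.rpow_nonneg hz _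
  rw [Real.norm_eq_abs, abs_mul, hprodsplit]
  have hA0 : 0 ≤ ∑ j, u j := Finset.sum_nonneg fun j _ => (hu j).le
  have hB0 : 0 ≤ ∑ j, v j := Finset.sum_nonneg fun j _ => (hv j).le
  calc |F (fun i => 1 + x i)| * |F x|
      ≤ (C * (((m₁:ℝ) + ∑ j, u j) ^ e₁ * ((m₂:ℝ) + ∑ j, v j) ^ e₂)) *
        (C * ((∑ j, u j) ^ e₁ * (∑ j, v j) ^ e₂)) := by
        refine mul_le_mul hb1 hb2 (abs_nonneg _) ?_
        positivity
    _ = (C * C) * ((((m₁:ℝ) + ∑ j, u j) ^ e₁ * (∑ j, u j) ^ e₁) *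
          (((m₂:ℝ) + ∑ j, v j) ^ e₂ * (∑ j, v j) ^ e₂)) := by ring
    _ ≤ (C * C) * ((∏ j, ((1 + u j) ^ (e₁ / (m₁:ℝ)) * (u j) ^ (e₁ / (m₁:ℝ)))) *
          ∏ j, ((1 + v j) ^ (e₂ / (m₂:ℝ)) * (v j) ^ (e₂ / (m₂:ℝ)))) := by
        refine mul_le_mul_of_nonneg_left ?_ (mul_nonneg hC hC)
        refine mul_le_mul hbl1 hbl2 ?_ ?_
        · exact mul_nonneg (hnn _ _ (by linarith)) (hnn _ _ hB0)
        · exact Finset.prod_nonneg fun j _ => mul_nonneg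
            (hnn _ _ (by linarith [hu j])) (hnn _ _ (hu j).le)

set_option maxHeartbeats 1600000 in
/-- Let `g1, g2` be symmetric GHK(B)'s on `(0,∞)^{k₁}` and `(0,∞)^{k₂}` with exponents
`α₁, α₂`, where `k₁ = r + m₁`, `k₂ = r + m₂` (so `0 ≤ r ≤ min(k₁,k₂)`, and `r ≤ k₁ - 1`
when `k₁ = k₂`, i.e. `m₁ ≥ 1` when `m₁ = m₂`). Assume `k₁ ≥ 2` or `k₂ ≥ 2` and
`α₁ + α₂ > -(k₁+k₂+1)/2`. Then for every `x` in the positive orthant of dimension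
`K = m₁ + m₂ = k₁ + k₂ - 2r` the contraction integral converges absolutely, and if
`g1 ⊗_r g2` is not a.e. zero on the orthant, it is a GHK on `(0,∞)^K` with homogeneity
exponent `α₁ + α₂ + r ∈ (-(K+1)/2, -K/2)`. -/
theorem stmt_4 (r m₁ m₂ : ℕ) (α₁ α₂ : ℝ)
    (g1 : (Fin (r + m₁) → ℝ) → ℝ) (g2 : (Fin (r + m₂) → ℝ) → ℝ)
    (hg1 : IsGHKB (r + m₁) α₁ g1) (hg2 : IsGHKB (r + m₂) α₂ g2)
    (hs1 : IsSymmFun (r + m₁) g1) (hs2 : IsSymmFun (r + m₂) g2)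
    (hk : 2 ≤ r + m₁ ∨ 2 ≤ r + m₂)
    (hr : m₁ = m₂ → 1 ≤ m₁)
    (hsum : -((((r + m₁ : ℕ) : ℝ)) + (((r + m₂ : ℕ) : ℝ)) + 1)/2 < α₁ + α₂) :
    (∀ x ∈ posOrthant (m₁ + m₂),
      IntegrableOn (fun y : Fin r → ℝ =>
        g1 (Fin.append y fun j : Fin m₁ => x (Fin.castAdd m₂ j)) *
          g2 (Fin.append y fun j : Fin m₂ => x (Fin.natAdd m₁ j))) (posOrthant r)) ∧
    (¬ (∀ᵐ x ∂(volume.restrict (posOrthant (m₁ + m₂))), contract r m₁ m₂ g1 g2 x = 0) →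
      IsGHK (m₁ + m₂) (α₁ + α₂ + r) (contract r m₁ m₂ g1 g2)) := by
  obtain ⟨⟨hm1, ⟨ha1, ha1'⟩, hhom1, hint1⟩, _, c₁, hc₁, hb1⟩ := hg1
  obtain ⟨⟨hm2, ⟨ha2, ha2'⟩, hhom2, hint2⟩, _, c₂, hc₂, hb2⟩ := hg2
  clear hs1 hs2 hk
  push_cast at ha1 ha1' ha2 ha2' hsum
  have hM10 : (0:ℝ) ≤ m₁ := Nat.cast_nonneg _
  have hM20 : (0:ℝ) ≤ m₂ := Nat.cast_nonneg _
  have hR0 : (0:ℝ) ≤ r := Nat.cast_nonneg _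
  have hα₁neg : α₁ < 0 := by linarith
  have hα₂neg : α₂ < 0 := by linarith
  have hKpos : 1 ≤ m₁ + m₂ := by
    rcases Nat.eq_zero_or_pos (m₁ + m₂) with h | h
    · have hm10 : m₁ = 0 := by omega
      have hm20 : m₂ = 0 := by omega
      exact absurd (hr (hm10.trans hm20.symm)) (by omega)
    · exact h
  have hMK : (1:ℝ) ≤ (m₁:ℝ) + m₂ := by exact_mod_cast hKpos
  -- Part 1
  have part1 : ∀ x ∈ posOrthant (m₁ + m₂),
      IntegrableOn (fun y : Fin r → ℝ =>
        g1 (Fin.append y fun j : Fin m₁ => x (Fin.castAdd m₂ j)) *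
          g2 (Fin.append y fun j : Fin m₂ => x (Fin.natAdd m₁ j))) (posOrthant r) := by
    intro x hx
    rcases Nat.eq_zero_or_pos r with hr0 | hrpos
    · subst hr0
      set F := fun y : Fin 0 → ℝ =>
        g1 (Fin.append y fun j : Fin m₁ => x (Fin.castAdd m₂ j)) *
          g2 (Fin.append y fun j : Fin m₂ => x (Fin.natAdd m₁ j)) with hF
      have hsub : Subsingleton (Fin 0 → ℝ) := ⟨fun a b => funext fun i => i.elim0⟩
      have hFconst : F = fun _ => F (fun i => i.elim0) :=
        funext fun y => congrArg F (@Subsingleton.elim _ hsub _ _)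
      rw [hFconst]
      refine integrableOn_const (LT.lt.ne ?_)
      refine lt_of_le_of_lt (measure_mono (Set.subset_univ _)) ?_
      rw [show (volume : Measure (Fin 0 → ℝ)) Set.univ = 1 by
        rw [volume_pi, MeasureTheory.Measure.pi_empty_univ]]
      exact ENNReal.one_lt_top
    · have hRpos : (0:ℝ) < r := by exact_mod_cast hrpos
      have hR1 : (1:ℝ) ≤ r := by exact_mod_cast hrpos
      refine aux_part1 hrpos hα₁neg.le hα₂neg.le hc₁.le hc₂.le hm1 hm2 hb1 hb2 _ _
        (fun j => hx _) (fun j => hx _) ?_ ?_ ?_ ?_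
      · rw [← add_div, div_lt_iff₀ hRpos]
        linarith
      · rcases Nat.eq_zero_or_pos m₁ with hm10 | hm1pos
        · right
          have : (m₁:ℝ) = 0 := by exact_mod_cast hm10
          rw [lt_div_iff₀ hRpos]
          linarith
        · left
          have : Nonempty (Fin m₁) := ⟨⟨0, hm1pos⟩⟩
          exact Finset.sum_pos (fun j _ => hx _) Finset.univ_nonempty
      · rcases Nat.eq_zero_or_pos m₂ with hm20 | hm2pos
        · right
          have : (m₂:ℝ) = 0 := by exact_mod_cast hm20
          rw [lt_div_iff₀ hRpos]
          linarith
        · left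
          have : Nonempty (Fin m₂) := ⟨⟨0, hm2pos⟩⟩
          exact Finset.sum_pos (fun j _ => hx _) Finset.univ_nonempty
      · have hA0 : 0 ≤ ∑ j : Fin m₁, x (Fin.castAdd m₂ j) :=
          Finset.sum_nonneg fun j _ => (hx _).le
        have hB0 : 0 ≤ ∑ j : Fin m₂, x (Fin.natAdd m₁ j) :=
          Finset.sum_nonneg fun j _ => (hx _).le
        rcases Nat.eq_zero_or_pos m₁ with hm10 | hm1pos
        · have hm2pos : 0 < m₂ := by omega
          have : Nonempty (Fin m₂) := ⟨⟨0, hm2pos⟩⟩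
          have : 0 < ∑ j : Fin m₂, x (Fin.natAdd m₁ j) :=
            Finset.sum_pos (fun j _ => hx _) Finset.univ_nonempty
          linarith
        · have : Nonempty (Fin m₁) := ⟨⟨0, hm1pos⟩⟩
          have : 0 < ∑ j : Fin m₁, x (Fin.castAdd m₂ j) :=
            Finset.sum_pos (fun j _ => hx _) Finset.univ_nonempty
          linarith
  refine ⟨part1, ?_⟩
  intro _
  have hF := aux_contract_measurable (r := r) (m₁ := m₁) (m₂ := m₂) hm1 hm2
  refine ⟨hF, ⟨by push_cast; linarith, by push_cast; linarith⟩,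
    fun lam hlam x hx => aux_contract_homog hhom1 hhom2 hlam x hx, ?_⟩
  -- condition 4
  rcases Nat.eq_zero_or_pos r with hr0 | hrpos
  · subst hr0
    have h00 : ((0:ℕ):ℝ) = 0 := Nat.cast_zero
    rcases Nat.eq_zero_or_pos m₁ with hm10 | hm1pos
    · subst hm10
      have hg1z : ∀ z : Fin (0 + 0) → ℝ, g1 z = 0 := by
        intro z
        have hmem : z ∈ posOrthant (0 + 0) := fun i => i.elim0
        have hz := hb1 z hmem
        rw [show (∑ i, z i) = 0 by simp, Real.zero_rpow hα₁neg.ne, mul_zero] at hz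
        exact abs_nonpos_iff.1 hz
      have hzero : ∀ x, contract 0 0 m₂ g1 g2 x = 0 := by
        intro x
        have : contract 0 0 m₂ g1 g2 x = ∫ _y in posOrthant 0, (0:ℝ) := by
          refine setIntegral_congr_fun (measurableSet_posOrthant 0) ?_
          intro y _
          dsimp only
          rw [hg1z]
          ring
        rw [this, integral_zero]
      have hfz : (fun x : Fin (0 + m₂) → ℝ =>
          contract 0 0 m₂ g1 g2 (fun i => 1 + x i) * contract 0 0 m₂ g1 g2 x)
          = fun _ => (0:ℝ) := funext fun x => by rw [hzero, hzero]; ring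
      rw [hfz]
      exact integrableOn_zero
    · rcases Nat.eq_zero_or_pos m₂ with hm20 | hm2pos
      · subst hm20
        have hg2z : ∀ z : Fin (0 + 0) → ℝ, g2 z = 0 := by
          intro z
          have hmem : z ∈ posOrthant (0 + 0) := fun i => i.elim0
          have hz := hb2 z hmem
          rw [show (∑ i, z i) = 0 by simp, Real.zero_rpow hα₂neg.ne, mul_zero] at hz
          exact abs_nonpos_iff.1 hz
        have hzero : ∀ x, contract 0 m₁ 0 g1 g2 x = 0 := by
          intro x
          have : contract 0 m₁ 0 g1 g2 x = ∫ _y in posOrthant 0, (0:ℝ) := by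
            refine setIntegral_congr_fun (measurableSet_posOrthant 0) ?_
            intro y _
            dsimp only
            rw [hg2z]
            ring
          rw [this, integral_zero]
        have hfz : (fun x : Fin (m₁ + 0) → ℝ =>
            contract 0 m₁ 0 g1 g2 (fun i => 1 + x i) * contract 0 m₁ 0 g1 g2 x)
            = fun _ => (0:ℝ) := funext fun x => by rw [hzero, hzero]; ring
        rw [hfz]
        exact integrableOn_zero
      · -- r = 0, m₁ ≥ 1, m₂ ≥ 1
        have hM1R : (1:ℝ) ≤ m₁ := by exact_mod_cast hm1pos
        have hM2R : (1:ℝ) ≤ m₂ := by exact_mod_cast hm2pos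
        have hvol : (volume (posOrthant 0)) = 1 := by
          rw [show posOrthant 0 = Set.univ from Set.eq_univ_iff_forall.2 fun y i => i.elim0,
            volume_pi, MeasureTheory.Measure.pi_empty_univ]
        have hcx : ∀ x' : Fin (m₁ + m₂) → ℝ, contract 0 m₁ m₂ g1 g2 x'
            = g1 (Fin.append (default : Fin 0 → ℝ) fun j => x' (Fin.castAdd m₂ j)) *
              g2 (Fin.append (default : Fin 0 → ℝ) fun j => x' (Fin.natAdd m₁ j)) := by
          intro x'
          rw [show contract 0 m₁ m₂ g1 g2 x'
            = ∫ y in posOrthant 0,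
                g1 (Fin.append y fun j => x' (Fin.castAdd m₂ j)) *
                  g2 (Fin.append y fun j => x' (Fin.natAdd m₁ j)) from rfl,
            MeasureTheory.integral_unique, measureReal_def, Measure.restrict_apply_univ, hvol,
            ENNReal.toReal_one, one_smul]
          rfl
        refine aux_cond4 _ hF (c₁ * c₂) α₁ α₂ (mul_nonneg hc₁.le hc₂.le)
          (Or.inr ⟨by linarith, by linarith⟩) (Or.inr ⟨by linarith, by linarith⟩) ?_
        intro x hx
        have hu : ∀ j : Fin m₁, 0 < x (Fin.castAdd m₂ j) := fun j => hx _
        have hv : ∀ j : Fin m₂, 0 < x (Fin.natAdd m₁ j) := fun j => hx _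
        have hd0 : ∀ i : Fin 0, 0 < (default : Fin 0 → ℝ) i := fun i => i.elim0
        have h1 := hb1 _ (aux_append_mem hd0 hu)
        have h2 := hb2 _ (aux_append_mem hd0 hv)
        rw [aux_append_sum] at h1 h2
        simp only [Finset.univ_eq_empty, Finset.sum_empty, zero_add] at h1 h2
        rw [hcx x, abs_mul]
        have hA0 : 0 ≤ ∑ j : Fin m₁, x (Fin.castAdd m₂ j) :=
          Finset.sum_nonneg fun j _ => (hu j).le
        have hB0 : 0 ≤ ∑ j : Fin m₂, x (Fin.natAdd m₁ j) :=
          Finset.sum_nonneg fun j _ => (hv j).le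
        calc |g1 _| * |g2 _|
            ≤ (c₁ * (∑ j : Fin m₁, x (Fin.castAdd m₂ j)) ^ α₁) *
              (c₂ * (∑ j : Fin m₂, x (Fin.natAdd m₁ j)) ^ α₂) :=
              mul_le_mul h1 h2 (abs_nonneg _)
                (mul_nonneg hc₁.le (Real.rpow_nonneg hA0 _))
          _ = (c₁ * c₂) * ((∑ j : Fin m₁, x (Fin.castAdd m₂ j)) ^ α₁ *
              (∑ j : Fin m₂, x (Fin.natAdd m₁ j)) ^ α₂) := by ring
  · -- r ≥ 1
    have hRpos : (0:ℝ) < r := by exact_mod_cast hrpos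
    have hRne : ((r:ℝ)) ≠ 0 := hRpos.ne'
    have hR1 : (1:ℝ) ≤ r := by exact_mod_cast hrpos
    have hpneg : α₁ / (r:ℝ) ≤ 0 := div_nonpos_of_nonpos_of_nonneg hα₁neg.le hR0
    have hqneg : α₂ / (r:ℝ) ≤ 0 := div_nonpos_of_nonpos_of_nonneg hα₂neg.le hR0
    have hpq : α₁ / (r:ℝ) + α₂ / (r:ℝ) < -1 := by
      rw [← add_div, div_lt_iff₀ hRpos]
      linarith
    have direct : ∀ ν : ℝ, -1 < ν → ν ≤ 0 → α₂ / (r:ℝ) ≤ ν → α₁ / (r:ℝ) + ν < -1 →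
        1 ≤ m₁ → (m₂ = 0 → ν = α₂ / (r:ℝ)) →
        ((m₂ = 0 ∧ (α₂ / (r:ℝ) - ν) * (r:ℝ) = 0) ∨
          (-(m₂:ℝ) < (α₂ / (r:ℝ) - ν) * (r:ℝ) ∧
            2 * ((α₂ / (r:ℝ) - ν) * (r:ℝ)) < -(m₂:ℝ))) →
        (-(m₁:ℝ) < (α₁ / (r:ℝ) + ν + 1) * (r:ℝ) ∧
          2 * ((α₁ / (r:ℝ) + ν + 1) * (r:ℝ)) < -(m₁:ℝ)) →
        IntegrableOn (fun x : Fin (m₁ + m₂) → ℝ =>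
          contract r m₁ m₂ g1 g2 (fun i => 1 + x i) * contract r m₁ m₂ g1 g2 x)
          (posOrthant (m₁ + m₂)) := by
      intro ν hν1 hν0 hqν hpν hm1pos hm20ν h2or h1r
      refine aux_cond4 _ hF (c₁ * c₂ * (auxC (α₁ / (r:ℝ)) ν) ^ r)
        ((α₁ / (r:ℝ) + ν + 1) * (r:ℝ)) ((α₂ / (r:ℝ) - ν) * (r:ℝ))
        (mul_nonneg (mul_nonneg hc₁.le hc₂.le) (pow_nonneg (auxC_nonneg _ _) _))
        (Or.inr h1r) h2or ?_
      intro x hx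
      have hApos : 0 < ∑ j : Fin m₁, x (Fin.castAdd m₂ j) := by
        have : Nonempty (Fin m₁) := ⟨⟨0, hm1pos⟩⟩
        exact Finset.sum_pos (fun j _ => hx _) Finset.univ_nonempty
      have hB0 : 0 ≤ ∑ j : Fin m₂, x (Fin.natAdd m₁ j) :=
        Finset.sum_nonneg fun j _ => (hx _).le
      have hside : (0 < ∑ j : Fin m₂, x (Fin.natAdd m₁ j)) ∨ ν = α₂ / (r:ℝ) := by
        rcases Nat.eq_zero_or_pos m₂ with h | h
        · exact Or.inr (hm20ν h)
        · left
          have : Nonempty (Fin m₂) := ⟨⟨0, h⟩⟩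
          exact Finset.sum_pos (fun j _ => hx _) Finset.univ_nonempty
      have hBq : (0 < ∑ j : Fin m₂, x (Fin.natAdd m₁ j)) ∨ -1 < α₂ / (r:ℝ) := by
        rcases hside with h | h
        · exact Or.inl h
        · exact Or.inr (h ▸ hν1)
      have habs := aux_contract_abs_le hrpos hα₁neg.le hα₂neg.le hc₁.le hc₂.le hm1 hm2
        hb1 hb2 hpq x hx (Or.inl hApos) hBq (by linarith)
      have hkey := aux_key hrpos hpneg hqneg hν1 hν0 hqν hpν hApos hB0 hside
      refine habs.trans ((mul_le_mul_of_nonneg_left hkey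
        (mul_nonneg hc₁.le hc₂.le)).trans_eq ?_)
      rw [mul_pow, mul_pow, aux_rpow_pow hApos.le, aux_rpow_pow hB0]
      ring
    rcases Nat.eq_zero_or_pos m₁ with hm10 | hm1pos
    · -- swapped case : m₁ = 0, m₂ ≥ 1
      subst hm10
      have hm2pos : 0 < m₂ := by omega
      have hM2R : (1:ℝ) ≤ m₂ := by exact_mod_cast hm2pos
      have hM1z : ((0:ℕ):ℝ) = 0 := Nat.cast_zero
      have hp1 : -1 < α₁ / (r:ℝ) := by
        rw [lt_div_iff₀ hRpos]
        linarith
      refine aux_cond4 _ hF (c₁ * c₂ * (auxC (α₂ / (r:ℝ)) (α₁ / (r:ℝ))) ^ r)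
        0 ((α₂ / (r:ℝ) + α₁ / (r:ℝ) + 1) * (r:ℝ))
        (mul_nonneg (mul_nonneg hc₁.le hc₂.le) (pow_nonneg (auxC_nonneg _ _) _))
        (Or.inl ⟨rfl, rfl⟩)
        (Or.inr ⟨by rw [show (α₂ / (r:ℝ) + α₁ / (r:ℝ) + 1) * (r:ℝ) = α₁ + α₂ + r by
            field_simp; ring]; linarith,
          by rw [show (α₂ / (r:ℝ) + α₁ / (r:ℝ) + 1) * (r:ℝ) = α₁ + α₂ + r by
            field_simp; ring]; linarith⟩) ?_
      intro x hx
      have hAz : (∑ j : Fin 0, x (Fin.castAdd m₂ j)) = 0 := by simp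
      have hBpos : 0 < ∑ j : Fin m₂, x (Fin.natAdd 0 j) := by
        have : Nonempty (Fin m₂) := ⟨⟨0, hm2pos⟩⟩
        exact Finset.sum_pos (fun j _ => hx _) Finset.univ_nonempty
      have hA0 : 0 ≤ ∑ j : Fin 0, x (Fin.castAdd m₂ j) := le_of_eq hAz.symm
      have habs := aux_contract_abs_le hrpos hα₁neg.le hα₂neg.le hc₁.le hc₂.le hm1 hm2
        hb1 hb2 hpq x hx (Or.inr hp1) (Or.inl hBpos) (by linarith)
      have hswap : (∫ y in posOrthant r, ∏ i : Fin r,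
            (((∑ j : Fin 0, x (Fin.castAdd m₂ j)) + y i) ^ (α₁ / (r:ℝ)) *
              ((∑ j : Fin m₂, x (Fin.natAdd 0 j)) + y i) ^ (α₂ / (r:ℝ))))
          = ∫ y in posOrthant r, ∏ i : Fin r,
            (((∑ j : Fin m₂, x (Fin.natAdd 0 j)) + y i) ^ (α₂ / (r:ℝ)) *
              ((∑ j : Fin 0, x (Fin.castAdd m₂ j)) + y i) ^ (α₁ / (r:ℝ))) := by
        refine setIntegral_congr_fun (measurableSet_posOrthant r) ?_
        intro y _
        exact Finset.prod_congr rfl fun i _ => mul_comm _ _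
      rw [hswap] at habs
      have hkey := aux_key hrpos hqneg hpneg hp1 hpneg le_rfl (by linarith) hBpos hA0
        (Or.inr rfl)
      refine habs.trans ((mul_le_mul_of_nonneg_left hkey
        (mul_nonneg hc₁.le hc₂.le)).trans_eq ?_)
      rw [sub_self, Real.rpow_zero, mul_one, mul_pow, aux_rpow_pow hBpos.le]
      ring
    · have hM1R : (1:ℝ) ≤ m₁ := by exact_mod_cast hm1pos
      rcases Nat.eq_zero_or_pos m₂ with hm20 | hm2pos
      · -- m₂ = 0 case
        have hM2z : (m₂:ℝ) = 0 := by exact_mod_cast hm20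
        have hq1 : -1 < α₂ / (r:ℝ) := by
          rw [lt_div_iff₀ hRpos]
          linarith
        have heq : (α₁ / (r:ℝ) + α₂ / (r:ℝ) + 1) * (r:ℝ) = α₁ + α₂ + r := by
          field_simp
        refine direct (α₂ / (r:ℝ)) hq1 hqneg le_rfl hpq hm1pos (fun _ => rfl)
          (Or.inl ⟨hm20, by ring⟩) ⟨?_, ?_⟩
        · rw [heq]; linarith
        · rw [heq]; linarith
      · -- main case m₁ ≥ 1, m₂ ≥ 1
        have hM2R : (1:ℝ) ≤ m₂ := by exact_mod_cast hm2pos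
        have hLU : max (max (-(r:ℝ)) (α₂ + (m₂:ℝ)/2)) (-α₁ - r - m₁)
            < min (min 0 (-α₁ - r - (m₁:ℝ)/2)) (α₂ + (m₂:ℝ)) := by
          simp only [max_lt_iff, lt_min_iff]
          repeat' apply And.intro
          all_goals linarith
        obtain ⟨lam, hb1', hb2', hb3', hb4', hb5', hb6'⟩ :
            ∃ lam : ℝ, -(r:ℝ) < lam ∧ α₂ + (m₂:ℝ)/2 < lam ∧ -α₁ - r - m₁ < lam ∧
              lam < 0 ∧ lam < -α₁ - r - (m₁:ℝ)/2 ∧ lam < α₂ + m₂ := by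
          set L := max (max (-(r:ℝ)) (α₂ + (m₂:ℝ)/2)) (-α₁ - r - m₁) with hLdef
          set U := min (min 0 (-α₁ - r - (m₁:ℝ)/2)) (α₂ + (m₂:ℝ)) with hUdef
          have hL1 : -(r:ℝ) ≤ L := (le_max_left _ _).trans (le_max_left _ _)
          have hL2 : α₂ + (m₂:ℝ)/2 ≤ L := (le_max_right _ _).trans (le_max_left _ _)
          have hL3 : -α₁ - r - m₁ ≤ L := le_max_right _ _
          have hU1 : U ≤ 0 := (min_le_left _ _).trans (min_le_left _ _)
          have hU2 : U ≤ -α₁ - r - (m₁:ℝ)/2 := (min_le_left _ _).trans (min_le_right _ _)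
          have hU3 : U ≤ α₂ + (m₂:ℝ) := min_le_right _ _
          exact ⟨(L + U)/2, by linarith, by linarith, by linarith, by linarith,
            by linarith, by linarith⟩
        have hν1 : -1 < lam / (r:ℝ) := by
          rw [lt_div_iff₀ hRpos]; linarith
        have hν0 : lam / (r:ℝ) ≤ 0 :=
          div_nonpos_of_nonpos_of_nonneg (by linarith) hR0
        have hqν : α₂ / (r:ℝ) ≤ lam / (r:ℝ) := by
          gcongr
          linarith
        have hpν : α₁ / (r:ℝ) + lam / (r:ℝ) < -1 := by
          rw [← add_div, div_lt_iff₀ hRpos]; linarith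
        have he₁ : (α₁ / (r:ℝ) + lam / (r:ℝ) + 1) * (r:ℝ) = α₁ + lam + r := by
          field_simp
        have he₂ : (α₂ / (r:ℝ) - lam / (r:ℝ)) * (r:ℝ) = α₂ - lam := by
          field_simp
        refine direct (lam / (r:ℝ)) hν1 hν0 hqν hpν hm1pos
          (fun h => absurd h hm2pos.ne') (Or.inr ⟨?_, ?_⟩) ⟨?_, ?_⟩
        · rw [he₂]; linarith
        · rw [he₂]; linarith
        · rw [he₁]; linarith
        · rw [he₁]; linarith
end

section
/- Let k ≥ 1 be an integer, let γ₁,…,γ_k < -1/2 be real numbers, set α = γ₁+…+γ_k and H* = α + k/2 + 1, and suppose H* > 1/2. Let c₀ > 0 and let a: (ℤ₊)^k → ℝ satisfy |a(i₁,…,i_k)| ≤ c₀·i₁^{γ₁}…i_k^{γ_k} for all positive integers i₁,…,i_k, and let Σ: {1,…,k}×{1,…,k} → ℝ satisfy |Σ(p,q)| ≤ 1 for all p, q. For each integer n ≥ 1 define γ(n) = ∑_{σ ∈ S_k} ∑'_{(i₁,…,i_k) ∈ (ℤ₊)^k} a(i₁,…,i_k)·a(i_{σ(1)}+n,…,i_{σ(k)}+n)·∏_{p=1}^k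 Σ(p, σ(p)), where S_k is the set of all permutations of {1,…,k} and ∑' denotes summation restricted to tuples with pairwise distinct coordinates (i_p ≠ i_q for p ≠ q). Then all these series converge absolutely and there is a constant c₂ > 0 (depending only on c₀, k, γ₁,…,γ_k) such that |γ(n)| ≤ c₂·n^{2H*-2} for all n ≥ 1. -/
set_option maxHeartbeats 1000000


lemma aux_sum_rpow_le (r : ℝ) (hr1 : -1 < r) (hr2 : r < 0) (n : ℕ) (hn : 1 ≤ n) :
    ∑ i ∈ Finset.range n, ((i + 1 : ℕ) : ℝ) ^ r ≤ (1 + 1/(r+1)) * (n : ℝ) ^ (r+1) := by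
  have hr1' : 0 < r + 1 := by linarith
  obtain ⟨m, rfl⟩ : ∃ m, n = m + 1 := ⟨n - 1, (Nat.succ_pred_eq_of_pos hn).symm⟩
  rw [Finset.sum_range_succ']
  have hanti : AntitoneOn (fun x : ℝ => x ^ r) (Set.Icc 1 (1 + (m : ℝ))) := by
    intro x hx y hy hxy
    exact Real.rpow_le_rpow_of_nonpos (lt_of_lt_of_le one_pos hx.1) hxy hr2.le
  have h1 := hanti.sum_le_integral
  rw [integral_rpow (Or.inl hr1)] at h1
  have hterm : ∀ i ∈ Finset.range m,
      ((i + 1 + 1 : ℕ) : ℝ) ^ r = (fun x : ℝ => x ^ r) ((1:ℝ) + ((i + 1 : ℕ) : ℝ)) := by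
    intro i _
    show _ = ((1:ℝ) + ((i + 1 : ℕ) : ℝ)) ^ r
    congr 1
    push_cast; ring
  rw [Finset.sum_congr rfl hterm]
  set X : ℝ := (1 + (m:ℝ)) ^ (r + 1) with hX
  have hX1 : 1 ≤ X := Real.one_le_rpow (le_add_of_nonneg_right (Nat.cast_nonneg m)) hr1'.le
  have hcast : ((m + 1 : ℕ) : ℝ) ^ (r+1) = X := by rw [hX]; congr 1; push_cast; ring
  rw [hcast]
  have h2 : (X - (1:ℝ) ^ (r+1)) / (r + 1) ≤ X / (r+1) := by
    rw [Real.one_rpow]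
    gcongr
    linarith
  have h3 : ((0:ℕ) + 1 : ℕ) = 1 := rfl
  rw [h3, Nat.cast_one, Real.one_rpow]
  have h4 : (1 + 1/(r+1)) * X = X/(r+1) + X := by field_simp; ring
  have h5 : ∑ i ∈ Finset.range m, ((1:ℝ) + ((i + 1 : ℕ) : ℝ)) ^ r ≤ X / (r+1) :=
    le_trans h1 (by rw [hX]; exact h2.trans_eq rfl)
  linarith

lemma aux_tail_rpow_le (s : ℝ) (hs : s < -1) (n : ℕ) (hn : 1 ≤ n) :
    ∑' m : ℕ, ((m + n + 1 : ℕ) : ℝ) ^ s ≤ (1/(-(s+1))) * (n : ℝ) ^ (s+1) := by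
  have hs1 : s + 1 < 0 := by linarith
  have hn0 : (0:ℝ) < n := by exact_mod_cast hn
  apply Real.tsum_le_of_sum_range_le (fun _ => Real.rpow_nonneg (Nat.cast_nonneg _) s)
  intro N
  have hanti : AntitoneOn (fun x : ℝ => x ^ s) (Set.Icc (n:ℝ) ((n:ℝ) + N)) := by
    intro x hx y hy hxy
    exact Real.rpow_le_rpow_of_nonpos (lt_of_lt_of_le hn0 hx.1) hxy (by linarith)
  have h1 := hanti.sum_le_integral
  rw [integral_rpow (Or.inr ⟨hs.ne, Set.notMem_uIcc_of_lt hn0 (by positivity)⟩)] at h1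
  have hterm : ∀ i ∈ Finset.range N,
      ((i + n + 1 : ℕ) : ℝ) ^ s = (fun x : ℝ => x ^ s) ((n:ℝ) + ((i + 1 : ℕ) : ℝ)) := by
    intro i _
    show _ = ((n:ℝ) + ((i + 1 : ℕ) : ℝ)) ^ s
    congr 1
    push_cast; ring
  rw [Finset.sum_congr rfl hterm]
  refine h1.trans ?_
  have hA : (0:ℝ) ≤ ((n:ℝ) + N) ^ (s+1) := Real.rpow_nonneg (by positivity) _
  rw [div_le_iff_of_neg hs1]
  have h : 1 / -(s+1) * (n:ℝ) ^ (s+1) * (s+1) = -((n:ℝ) ^ (s+1)) := by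
    field_simp
    rw [div_self (by linarith)]
  rw [h]; linarith

lemma aux_onedim (p q : ℝ) (hp1 : -1 < p) (hp2 : p < -1/2) (hq1 : -1 < q) (hq2 : q < -1/2) :
    ∃ C : ℝ, 0 < C ∧ ∀ n : ℕ+,
      Summable (fun j : ℕ+ => ((j : ℕ) : ℝ) ^ p * (((j : ℕ) + (n : ℕ) : ℕ) : ℝ) ^ q) ∧
      ∑' j : ℕ+, ((j : ℕ) : ℝ) ^ p * (((j : ℕ) + (n : ℕ) : ℕ) : ℝ) ^ q
        ≤ C * ((n : ℕ) : ℝ) ^ (p+q+1) := by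
  have hp1' : 0 < p + 1 := by linarith
  have hs : p + q < -1 := by linarith
  have hs1 : p + q + 1 < 0 := by linarith
  have hC1 : 0 < 1/(p+1) := by positivity
  have hC2 : 0 < 1/(-(p+q+1)) := by rw [one_div]; exact inv_pos.mpr (by linarith)
  refine ⟨(1 + 1/(p+1)) + 1/(-(p+q+1)), by linarith, fun n => ?_⟩
  have hn0 : (0:ℝ) < (n:ℕ) := by exact_mod_cast n.pos
  set f : ℕ+ → ℝ := fun j => ((j : ℕ) : ℝ) ^ p * (((j : ℕ) + (n : ℕ) : ℕ) : ℝ) ^ q with hf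
  -- pointwise domination by j ^ (p+q)
  have hfle : ∀ j : ℕ+, f j ≤ ((j:ℕ) : ℝ) ^ (p + q) := by
    intro j
    have hj0 : (0:ℝ) < (j:ℕ) := by exact_mod_cast j.pos
    have h1 : (((j : ℕ) + (n : ℕ) : ℕ) : ℝ) ^ q ≤ ((j:ℕ):ℝ) ^ q := by
      apply Real.rpow_le_rpow_of_nonpos hj0 (by push_cast; linarith) (by linarith)
    calc f j ≤ ((j:ℕ):ℝ) ^ p * ((j:ℕ):ℝ) ^ q := by
          exact mul_le_mul_of_nonneg_left h1 (Real.rpow_nonneg hj0.le p)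
      _ = ((j:ℕ):ℝ) ^ (p+q) := (Real.rpow_add hj0 p q).symm
  have hf0 : ∀ j, 0 ≤ f j := fun j =>
    mul_nonneg (Real.rpow_nonneg (Nat.cast_nonneg _) _) (Real.rpow_nonneg (Nat.cast_nonneg _) _)
  have hbig : Summable (fun j : ℕ+ => ((j:ℕ) : ℝ) ^ (p + q)) :=
    (Real.summable_nat_rpow.mpr hs).comp_injective PNat.coe_injective
  have hfsum : Summable f := Summable.of_nonneg_of_le hf0 hfle hbig
  refine ⟨hfsum, ?_⟩
  -- transfer to ℕ
  have htrans : ∑' j : ℕ+, f j = ∑' m : ℕ, f (Equiv.pnatEquivNat.symm m) :=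
    (Equiv.pnatEquivNat.symm.tsum_eq f).symm
  have hcoe : ∀ m : ℕ, ((Equiv.pnatEquivNat.symm m : ℕ+) : ℕ) = m + 1 := by
    intro m; simp [Equiv.pnatEquivNat]
  set F : ℕ → ℝ := fun m => ((m + 1 : ℕ) : ℝ) ^ p * ((m + 1 + (n:ℕ) : ℕ) : ℝ) ^ q with hF
  have hFeq : (fun m : ℕ => f (Equiv.pnatEquivNat.symm m)) = F := by
    funext m; rw [hf, hF]; simp only [hcoe]
  rw [htrans, hFeq]
  -- dominating function G
  set G : ℕ → ℝ := fun m => if m < (n:ℕ) then ((m + 1 : ℕ) : ℝ) ^ p * ((n:ℕ) : ℝ) ^ q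
      else ((m + 1 : ℕ) : ℝ) ^ (p + q) with hG
  have hm10 : ∀ m : ℕ, (0:ℝ) < ((m+1:ℕ):ℝ) := fun m => by positivity
  have hFG : ∀ m : ℕ, F m ≤ G m := by
    intro m
    rw [hF, hG]
    by_cases h : m < (n:ℕ) <;> simp only [h, if_true, if_false, reduceIte]
    · apply mul_le_mul_of_nonneg_left ?_ (Real.rpow_nonneg (Nat.cast_nonneg _) p)
      apply Real.rpow_le_rpow_of_nonpos hn0 (by push_cast; linarith) (by linarith)
    · calc ((m+1:ℕ):ℝ) ^ p * ((m + 1 + (n:ℕ) : ℕ) : ℝ) ^ q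
          ≤ ((m+1:ℕ):ℝ) ^ p * ((m+1:ℕ):ℝ) ^ q := by
            apply mul_le_mul_of_nonneg_left ?_ (Real.rpow_nonneg (Nat.cast_nonneg _) p)
            apply Real.rpow_le_rpow_of_nonpos (hm10 m) (by push_cast; linarith) (by linarith)
        _ = ((m+1:ℕ):ℝ) ^ (p+q) := (Real.rpow_add (hm10 m) p q).symm
  have hG0 : ∀ m : ℕ, 0 ≤ G m := by
    intro m; rw [hG]
    by_cases h : m < (n:ℕ) <;>
      simp only [h, if_true, if_false, reduceIte] <;>
      positivity
  have hGle : ∀ m : ℕ, G m ≤ ((m+1:ℕ):ℝ) ^ (p+q) := by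
    intro m; rw [hG]
    by_cases h : m < (n:ℕ) <;> simp only [h, if_true, if_false, reduceIte]
    · have h1 : ((n:ℕ):ℝ) ^ q ≤ ((m+1:ℕ):ℝ) ^ q := by
        apply Real.rpow_le_rpow_of_nonpos (hm10 m) (by exact_mod_cast h) (by linarith)
      calc ((m+1:ℕ):ℝ) ^ p * ((n:ℕ):ℝ) ^ q ≤ ((m+1:ℕ):ℝ) ^ p * ((m+1:ℕ):ℝ) ^ q :=
            mul_le_mul_of_nonneg_left h1 (Real.rpow_nonneg (Nat.cast_nonneg _) p)
        _ = ((m+1:ℕ):ℝ) ^ (p+q) := (Real.rpow_add (hm10 m) p q).symm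
    · exact le_rfl
  have hbigN : Summable (fun m : ℕ => ((m+1:ℕ):ℝ) ^ (p+q)) := by
    have := Real.summable_nat_rpow.mpr hs
    exact (summable_nat_add_iff 1).mpr this |>.congr (by intro m; push_cast; norm_num)
  have hGsum : Summable G := Summable.of_nonneg_of_le hG0 hGle hbigN
  have hFsum : Summable F := Summable.of_nonneg_of_le (fun m => by
    exact mul_nonneg (Real.rpow_nonneg (Nat.cast_nonneg _) _) (Real.rpow_nonneg (Nat.cast_nonneg _) _)) hFG hGsum
  have step1 : ∑' m : ℕ, F m ≤ ∑' m : ℕ, G m := Summable.tsum_le_tsum hFG hFsum hGsum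
  refine step1.trans ?_
  -- split G
  have hsplit := Summable.sum_add_tsum_nat_add (f := G) (n:ℕ) hGsum
  rw [← hsplit]
  have hhead : ∑ i ∈ Finset.range (n:ℕ), G i
      = (∑ i ∈ Finset.range (n:ℕ), ((i + 1 : ℕ) : ℝ) ^ p) * ((n:ℕ) : ℝ) ^ q := by
    rw [Finset.sum_mul]
    apply Finset.sum_congr rfl
    intro i hi
    rw [hG]
    simp only [Finset.mem_range.mp hi, if_true, reduceIte]
  have htail : ∀ i : ℕ, G (i + (n:ℕ)) = ((i + (n:ℕ) + 1 : ℕ) : ℝ) ^ (p+q) := by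
    intro i
    rw [hG]
    simp only [Nat.not_lt.mpr (Nat.le_add_left _ _), if_false, reduceIte]
  have hheadle : ∑ i ∈ Finset.range (n:ℕ), G i
      ≤ (1 + 1/(p+1)) * ((n:ℕ):ℝ) ^ (p+q+1) := by
    rw [hhead]
    calc (∑ i ∈ Finset.range (n:ℕ), ((i + 1 : ℕ) : ℝ) ^ p) * ((n:ℕ) : ℝ) ^ q
        ≤ ((1 + 1/(p+1)) * ((n:ℕ):ℝ) ^ (p+1)) * ((n:ℕ) : ℝ) ^ q := by
          apply mul_le_mul_of_nonneg_right (aux_sum_rpow_le p hp1 (by linarith) (n:ℕ) n.one_le)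
            (Real.rpow_nonneg hn0.le q)
      _ = (1 + 1/(p+1)) * ((n:ℕ):ℝ) ^ (p+q+1) := by
          rw [mul_assoc, ← Real.rpow_add hn0]
          ring_nf
  have htaille : ∑' i : ℕ, G (i + (n:ℕ)) ≤ (1/(-(p+q+1))) * ((n:ℕ):ℝ) ^ (p+q+1) := by
    calc ∑' i : ℕ, G (i + (n:ℕ)) = ∑' i : ℕ, ((i + (n:ℕ) + 1 : ℕ) : ℝ) ^ (p+q) := by
          exact tsum_congr htail
      _ ≤ (1/(-(p+q+1))) * ((n:ℕ):ℝ) ^ (p+q+1) := aux_tail_rpow_le (p+q) hs (n:ℕ) n.one_le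
  calc ∑ i ∈ Finset.range (n:ℕ), G i + ∑' i : ℕ, G (i + (n:ℕ))
      ≤ (1 + 1/(p+1)) * ((n:ℕ):ℝ) ^ (p+q+1) + (1/(-(p+q+1))) * ((n:ℕ):ℝ) ^ (p+q+1) :=
        add_le_add hheadle htaille
    _ = ((1 + 1/(p+1)) + 1/(-(p+q+1))) * ((n:ℕ):ℝ) ^ (p+q+1) := by ring


lemma aux_prodsum : ∀ (k : ℕ) (f : Fin k → ℕ+ → ℝ), (∀ m j, 0 ≤ f m j) →
    (∀ m, Summable (f m)) →
    Summable (fun i : Fin k → ℕ+ => ∏ m, f m (i m)) ∧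
    (∑' i : Fin k → ℕ+, ∏ m, f m (i m)) = ∏ m, ∑' j : ℕ+, f m j := by
  intro k
  induction k with
  | zero =>
    intro f _ _
    have h1 : (fun i : Fin 0 → ℕ+ => ∏ m, f m (i m)) = fun _ => 1 := by
      funext i; simp
    rw [h1]
    have h2 : HasSum (fun _ : Fin 0 → ℕ+ => (1:ℝ)) 1 :=
      hasSum_single (f := fun _ : Fin 0 → ℕ+ => (1:ℝ)) (default : Fin 0 → ℕ+)
        (fun b hb => absurd (Subsingleton.elim b default) hb)
    exact ⟨h2.summable, by rw [h2.tsum_eq]; simp⟩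
  | succ k ih =>
    intro f hf0 hfs
    obtain ⟨ihS, ihT⟩ := ih (fun m => f m.succ) (fun m j => hf0 m.succ j) (fun m => hfs m.succ)
    set e := Fin.consEquiv (fun _ : Fin (k+1) => ℕ+) with he
    set g : ℕ+ × (Fin k → ℕ+) → ℝ := fun x => f 0 x.1 * ∏ m : Fin k, f m.succ (x.2 m) with hg
    have hcomp : (fun i : Fin (k+1) → ℕ+ => ∏ m, f m (i m)) ∘ e = g := by
      funext x
      simp only [Function.comp_apply, hg, he]
      rw [Fin.prod_univ_succ]
      simp [Fin.consEquiv]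
    have h1 : (0:ℕ+ → ℝ) ≤ f 0 := fun j => hf0 0 j
    have h2 : (0:(Fin k → ℕ+) → ℝ) ≤ fun i => ∏ m : Fin k, f m.succ (i m) :=
      fun i => Finset.prod_nonneg (fun m _ => hf0 m.succ (i m))
    have hgsum' := Summable.mul_of_nonneg (hfs 0) ihS h1 h2
    have hgsum : Summable g := hgsum'
    have hSum : Summable (fun i : Fin (k+1) → ℕ+ => ∏ m, f m (i m)) := by
      rw [← e.summable_iff, hcomp]; exact hgsum
    refine ⟨hSum, ?_⟩
    have ht : ∑' i : Fin (k+1) → ℕ+, ∏ m, f m (i m) = ∑' x : ℕ+ × (Fin k → ℕ+), g x := by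
      rw [← e.tsum_eq]
      exact tsum_congr (fun x => congrFun hcomp x)
    have hslice : ∀ b : ℕ+, Summable (fun c : Fin k → ℕ+ => g (b, c)) := by
      intro b
      have h := ihS.mul_left (f 0 b)
      exact h
    have hps := Summable.tsum_prod' hgsum hslice
    rw [ht, hps]
    have hb : ∀ b : ℕ+, ∑' c : Fin k → ℕ+, g (b, c) = f 0 b * ∏ m : Fin k, ∑' j : ℕ+, f m.succ j := by
      intro b
      rw [hg]
      simp only
      rw [tsum_mul_left, ihT]
    rw [tsum_congr hb, tsum_mul_right, Fin.prod_univ_succ]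

/-- Off-diagonal autocovariance bound, long-memory case (`H* > 1/2`). For coefficients
`a` on `(ℤ₊)^k` bounded by `c₀ i₁^{γ₁}⋯i_k^{γ_k}` with all `γ_j < -1/2`, and correlations
`Σ` bounded by `1`, the autocovariance
`γ(n) = ∑_{σ ∈ S_k} ∑'_{i injective} a(i) a(i∘σ + n) ∏_p Σ(p,σ(p))`
is absolutely convergent and satisfies `|γ(n)| ≤ c₂ n^{2H*-2}` with
`H* = ∑γ_j + k/2 + 1`. -/
theorem stmt_10 (k : ℕ) (hk : 1 ≤ k) (γ : Fin k → ℝ) (hγ : ∀ j, γ j < -1/2)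
    (c₀ : ℝ) (hc₀ : 0 < c₀) (H : ℝ) (hH : H = (∑ j, γ j) + (k : ℝ)/2 + 1)
    (hH' : 1/2 < H)
    (a : (Fin k → ℕ+) → ℝ)
    (ha : ∀ i : Fin k → ℕ+, |a i| ≤ c₀ * ∏ j, ((i j : ℕ) : ℝ) ^ (γ j))
    (S : Fin k → Fin k → ℝ) (hS : ∀ p q, |S p q| ≤ 1) :
    (∀ n : ℕ+, ∀ σ : Equiv.Perm (Fin k),
      Summable (fun i : {i : Fin k → ℕ+ // Function.Injective i} =>
        a i.1 * a (fun p => i.1 (σ p) + n) * ∏ p, S p (σ p))) ∧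
    ∃ c₂ : ℝ, 0 < c₂ ∧ ∀ n : ℕ+,
      |∑ σ : Equiv.Perm (Fin k),
          ∑' i : {i : Fin k → ℕ+ // Function.Injective i},
            a i.1 * a (fun p => i.1 (σ p) + n) * ∏ p, S p (σ p)|
        ≤ c₂ * ((n : ℕ) : ℝ) ^ (2*H - 2) := by
  classical
  -- Step 1: every exponent is > -1
  have hγ1 : ∀ j, -1 < γ j := by
    intro j
    have hsumγ : -(1:ℝ)/2 - (k:ℝ)/2 < ∑ m, γ m := by rw [hH] at hH'; linarith
    have hcard : (Finset.univ.erase j).card = k - 1 := by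
      rw [Finset.card_erase_of_mem (Finset.mem_univ j), Finset.card_univ, Fintype.card_fin]
    have h1 := Finset.sum_le_card_nsmul (Finset.univ.erase j) γ (-1/2)
      (fun m _ => (hγ m).le)
    rw [hcard, nsmul_eq_mul] at h1
    have hcast : ((k-1:ℕ):ℝ) = (k:ℝ) - 1 := by
      rw [Nat.cast_sub hk, Nat.cast_one]
    rw [hcast] at h1
    have h2 : ∑ m, γ m = γ j + ∑ m ∈ Finset.univ.erase j, γ m :=
      (Finset.add_sum_erase _ γ (Finset.mem_univ j)).symm
    linarith
  -- choose per-pair constants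
  have key : ∀ p q : Fin k, ∃ C : ℝ, 0 < C ∧ ∀ n : ℕ+,
      Summable (fun j : ℕ+ => ((j : ℕ) : ℝ) ^ (γ p) * (((j : ℕ) + (n : ℕ) : ℕ) : ℝ) ^ (γ q)) ∧
      ∑' j : ℕ+, ((j : ℕ) : ℝ) ^ (γ p) * (((j : ℕ) + (n : ℕ) : ℕ) : ℝ) ^ (γ q)
        ≤ C * ((n : ℕ) : ℝ) ^ (γ p + γ q + 1) := by
    intro p q
    obtain ⟨C, hC, h⟩ := aux_onedim (γ p) (γ q) (hγ1 p) (hγ p) (hγ1 q) (hγ q)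
    exact ⟨C, hC, h⟩
  choose C hC0 hCkey using key
  have main : ∀ n : ℕ+, ∀ σ : Equiv.Perm (Fin k),
      Summable (fun i : {i : Fin k → ℕ+ // Function.Injective i} =>
        a i.1 * a (fun p => i.1 (σ p) + n) * ∏ p, S p (σ p)) ∧
      |∑' i : {i : Fin k → ℕ+ // Function.Injective i},
        a i.1 * a (fun p => i.1 (σ p) + n) * ∏ p, S p (σ p)|
        ≤ (c₀^2 * ∏ m, C m (σ⁻¹ m)) * ((n:ℕ):ℝ) ^ (2*H - 2) := by
    intro n σ
    have hn0 : (0:ℝ) < ((n:ℕ):ℝ) := by exact_mod_cast n.pos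
    set f : Fin k → ℕ+ → ℝ :=
      fun m j => ((j:ℕ):ℝ) ^ (γ m) * (((j:ℕ)+(n:ℕ):ℕ):ℝ) ^ (γ (σ⁻¹ m)) with hfdef
    set T : (Fin k → ℕ+) → ℝ :=
      fun i => a i * a (fun p => i (σ p) + n) * ∏ p, S p (σ p) with hTdef
    have hf0 : ∀ m j, 0 ≤ f m j := fun m j =>
      mul_nonneg (Real.rpow_nonneg (Nat.cast_nonneg _) _) (Real.rpow_nonneg (Nat.cast_nonneg _) _)
    have hfs : ∀ m, Summable (f m) := fun m => (hCkey m (σ⁻¹ m) n).1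
    -- domination
    have hprodS : |∏ p, S p (σ p)| ≤ 1 := by
      rw [Finset.abs_prod]
      exact Finset.prod_le_one (fun p _ => abs_nonneg _) (fun p _ => hS p (σ p))
    have hdom : ∀ i : Fin k → ℕ+, |T i| ≤ c₀^2 * ∏ m, f m (i m) := by
      intro i
      have h1 := ha i
      have h2 : |a (fun p => i (σ p) + n)|
          ≤ c₀ * ∏ m, ((((i m):ℕ):ℝ) + ((n:ℕ):ℝ)) ^ (γ (σ⁻¹ m)) := by
        refine (ha (fun p => i (σ p) + n)).trans_eq ?_
        congr 1
        have hre := Equiv.prod_comp σ (fun m => ((((i m):ℕ):ℝ) + ((n:ℕ):ℝ)) ^ (γ (σ⁻¹ m)))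
        rw [← hre]
        apply Finset.prod_congr rfl
        intro p _
        rw [show σ⁻¹ (σ p) = p by simp]
        congr 1
        push_cast
        ring
      have hA0 : (0:ℝ) ≤ ∏ j, ((i j : ℕ) : ℝ) ^ (γ j) :=
        Finset.prod_nonneg (fun j _ => Real.rpow_nonneg (Nat.cast_nonneg _) _)
      have hB0 : (0:ℝ) ≤ ∏ m, ((((i m):ℕ):ℝ) + ((n:ℕ):ℝ)) ^ (γ (σ⁻¹ m)) :=
        Finset.prod_nonneg (fun m _ => Real.rpow_nonneg (by positivity) _)
      have habs : |T i| = |a i| * |a (fun p => i (σ p) + n)| * |∏ p, S p (σ p)| := by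
        rw [hTdef]; simp [abs_mul]
      rw [habs]
      have step : |a i| * |a (fun p => i (σ p) + n)| * |∏ p, S p (σ p)|
          ≤ (c₀ * ∏ j, ((i j : ℕ) : ℝ) ^ (γ j))
            * (c₀ * ∏ m, ((((i m):ℕ):ℝ) + ((n:ℕ):ℝ)) ^ (γ (σ⁻¹ m))) * 1 := by
        apply mul_le_mul (mul_le_mul h1 h2 (abs_nonneg _) (by positivity)) hprodS (abs_nonneg _)
        positivity
      refine step.trans_eq ?_
      rw [mul_one]
      have hmerge : (∏ j, ((i j : ℕ) : ℝ) ^ (γ j))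
          * (∏ m, ((((i m):ℕ):ℝ) + ((n:ℕ):ℝ)) ^ (γ (σ⁻¹ m))) = ∏ m, f m (i m) := by
        rw [← Finset.prod_mul_distrib]
        apply Finset.prod_congr rfl
        intro m _
        rw [hfdef]
        congr 2
        push_cast
        ring
      calc (c₀ * ∏ j, ((i j : ℕ) : ℝ) ^ (γ j))
            * (c₀ * ∏ m, ((((i m):ℕ):ℝ) + ((n:ℕ):ℝ)) ^ (γ (σ⁻¹ m)))
          = c₀^2 * ((∏ j, ((i j : ℕ) : ℝ) ^ (γ j))
            * (∏ m, ((((i m):ℕ):ℝ) + ((n:ℕ):ℝ)) ^ (γ (σ⁻¹ m)))) := by ring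
        _ = c₀^2 * ∏ m, f m (i m) := by rw [hmerge]
    obtain ⟨hPsum, hPeq⟩ := aux_prodsum k f hf0 hfs
    have hDsum : Summable (fun i : Fin k → ℕ+ => c₀^2 * ∏ m, f m (i m)) := hPsum.mul_left _
    have hTabs : Summable (fun i : Fin k → ℕ+ => |T i|) :=
      Summable.of_nonneg_of_le (fun i => abs_nonneg _) hdom hDsum
    have hTsum : Summable T := summable_abs_iff.mp hTabs
    have hTsub : Summable (T ∘ (Subtype.val : {i : Fin k → ℕ+ // Function.Injective i} → _)) :=
      hTsum.comp_injective Subtype.coe_injective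
    constructor
    · exact hTsub
    · have hTabssub : Summable (fun i : {i : Fin k → ℕ+ // Function.Injective i} => |T i.1|) :=
        hTabs.comp_injective Subtype.coe_injective
      have heq : (fun i : {i : Fin k → ℕ+ // Function.Injective i} =>
          a i.1 * a (fun p => i.1 (σ p) + n) * ∏ p, S p (σ p))
          = fun i : {i : Fin k → ℕ+ // Function.Injective i} => T i.1 := rfl
      rw [heq]
      have h5 : |∑' i : {i : Fin k → ℕ+ // Function.Injective i}, T i.1|
          ≤ ∑' i : {i : Fin k → ℕ+ // Function.Injective i}, |T i.1| := by
        have hnorm := norm_tsum_le_tsum_norm (f := fun i : {i : Fin k → ℕ+ // Function.Injective i} => T i.1)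
          (by simpa [Real.norm_eq_abs] using hTabssub)
        simpa [Real.norm_eq_abs] using hnorm
      have h6 : ∑' i : {i : Fin k → ℕ+ // Function.Injective i}, |T i.1|
          ≤ ∑' i : Fin k → ℕ+, |T i| :=
        Summable.tsum_subtype_le (fun i : Fin k → ℕ+ => |T i|) {i | Function.Injective i}
          (fun i => abs_nonneg _) hTabs
      have h7 : ∑' i : Fin k → ℕ+, |T i| ≤ ∑' i : Fin k → ℕ+, c₀^2 * ∏ m, f m (i m) :=
        Summable.tsum_le_tsum hdom hTabs hDsum
      have h8 : ∑' i : Fin k → ℕ+, c₀^2 * ∏ m, f m (i m) = c₀^2 * ∏ m, ∑' j : ℕ+, f m j := by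
        rw [tsum_mul_left, hPeq]
      have h9 : ∏ m, ∑' j : ℕ+, f m j
          ≤ ∏ m, (C m (σ⁻¹ m) * ((n:ℕ):ℝ) ^ (γ m + γ (σ⁻¹ m) + 1)) :=
        Finset.prod_le_prod (fun m _ => tsum_nonneg (hf0 m)) (fun m _ => (hCkey m (σ⁻¹ m) n).2)
      have hexp : ∑ m, (γ m + γ (σ⁻¹ m) + 1) = 2*H - 2 := by
        have hperm : ∑ m, γ (σ⁻¹ m) = ∑ m, γ m := Equiv.sum_comp σ⁻¹ γ
        rw [Finset.sum_add_distrib, Finset.sum_add_distrib, hperm, hH]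
        simp [Finset.card_univ]
        ring
      have h10 : ∏ m, (C m (σ⁻¹ m) * ((n:ℕ):ℝ) ^ (γ m + γ (σ⁻¹ m) + 1))
          = (∏ m, C m (σ⁻¹ m)) * ((n:ℕ):ℝ) ^ (2*H - 2) := by
        rw [Finset.prod_mul_distrib, ← Real.rpow_sum_of_pos hn0, hexp]
      calc |∑' i : {i : Fin k → ℕ+ // Function.Injective i}, T i.1|
          ≤ ∑' i : Fin k → ℕ+, c₀^2 * ∏ m, f m (i m) := le_trans h5 (le_trans h6 h7)
        _ = c₀^2 * ∏ m, ∑' j : ℕ+, f m j := h8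
        _ ≤ c₀^2 * ((∏ m, C m (σ⁻¹ m)) * ((n:ℕ):ℝ) ^ (2*H - 2)) := by
            rw [← h10]
            exact mul_le_mul_of_nonneg_left h9 (by positivity)
        _ = (c₀^2 * ∏ m, C m (σ⁻¹ m)) * ((n:ℕ):ℝ) ^ (2*H - 2) := by ring
  refine ⟨fun n σ => (main n σ).1,
    ⟨∑ σ : Equiv.Perm (Fin k), c₀^2 * ∏ m, C m (σ⁻¹ m), ?_, ?_⟩⟩
  · apply Finset.sum_pos
    · intro σ _
      have : (0:ℝ) < ∏ m, C m (σ⁻¹ m) := Finset.prod_pos (fun m _ => hC0 m (σ⁻¹ m))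
      positivity
    · exact Finset.univ_nonempty
  · intro n
    calc |∑ σ : Equiv.Perm (Fin k),
          ∑' i : {i : Fin k → ℕ+ // Function.Injective i},
            a i.1 * a (fun p => i.1 (σ p) + n) * ∏ p, S p (σ p)|
        ≤ ∑ σ : Equiv.Perm (Fin k),
          |∑' i : {i : Fin k → ℕ+ // Function.Injective i},
            a i.1 * a (fun p => i.1 (σ p) + n) * ∏ p, S p (σ p)| :=
          Finset.abs_sum_le_sum_abs _ _
      _ ≤ ∑ σ : Equiv.Perm (Fin k), (c₀^2 * ∏ m, C m (σ⁻¹ m)) * ((n:ℕ):ℝ) ^ (2*H - 2) :=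
          Finset.sum_le_sum (fun σ _ => (main n σ).2)
      _ = (∑ σ : Equiv.Perm (Fin k), c₀^2 * ∏ m, C m (σ⁻¹ m)) * ((n:ℕ):ℝ) ^ (2*H - 2) :=
          (Finset.sum_mul _ _ _).symm
end

section
/- Let k ≥ 1 be an integer, let γ₁,…,γ_k < -1/2 be real numbers, set α = γ₁+…+γ_k and H* = α + k/2 + 1, and suppose H* < 1/2. Let c₀ > 0 and let a: (ℤ₊)^k → ℝ satisfy |a(i₁,…,i_k)| ≤ c₀·i₁^{γ₁}…i_k^{γ_k} for all positive integers i₁,…,i_k, and let Σ: {1,…,k}×{1,…,k} → ℝ satisfy |Σ(p,q)| ≤ 1 for all p, q. For each integer n ≥ 0 define γ(n) = ∑_{σ ∈ S_k} ∑'_{(i₁,…,i_k) ∈ (ℤ₊)^k} a(i₁,…,i_k)·a(i_{σ(1)}+n,…,i_{σ(k)}+n)·∏_{p=1}^k Σ(p, σ(p)), where S_k is the set of all permutations of {1,…,k} and ∑' denotes summation restricted to tuples with pairwise distinct coordinates. Then all these series converge absolutely and ∑_{n=0}^∞ |γ(n)| < ∞; consequently there is c₁ > 0 such that |∑_{m=1}^N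 ∑_{n=1}^N γ(|m-n|)| ≤ c₁·N for all N ≥ 1. -/
open Finset
set_option maxHeartbeats 1000000

lemma aux_summable_pnat_rpow {β : ℝ} (hβ : β < -1) :
    Summable (fun i : ℕ+ => ((i : ℕ) : ℝ) ^ β) :=
  (Real.summable_nat_rpow.mpr hβ).comp_injective (fun _ _ h => PNat.coe_injective h)

lemma aux_pi_prod : ∀ (k : ℕ) (f : Fin k → ℕ+ → ℝ), (∀ j i, 0 ≤ f j i) → (∀ j, Summable (f j)) →
    Summable (fun i : Fin k → ℕ+ => ∏ j, f j (i j)) ∧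
      ∑' i : Fin k → ℕ+, ∏ j, f j (i j) = ∏ j, ∑' x, f j x := by
  intro k
  induction k with
  | zero =>
    intro f _ _
    constructor
    · exact summable_of_finite_support (Set.toFinite _)
    · simp [tsum_fintype]
  | succ k ih =>
    intro f h0 hs
    obtain ⟨ihS, ihT⟩ := ih (fun j => f j.succ) (fun j i => h0 _ _) (fun j => hs _)
    have ihS' : Summable (fun i : Fin k → ℕ+ => ∏ j, f j.succ (i j)) := ihS
    have ihT' : ∑' i : Fin k → ℕ+, ∏ j, f j.succ (i j) = ∏ j : Fin k, ∑' x, f j.succ x := ihT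
    have hnn : 0 ≤ fun i : Fin k → ℕ+ => ∏ j, f j.succ (i j) :=
      fun x => Finset.prod_nonneg fun j _ => h0 _ _
    have hnn0 : 0 ≤ f 0 := fun x => h0 0 x
    have hg := Summable.mul_of_nonneg (hs 0) ihS' hnn0 hnn
    have key : ∀ i : Fin (k+1) → ℕ+, ∏ j, f j (i j)
        = f 0 (i 0) * ∏ j : Fin k, f j.succ (i j.succ) := fun i => Fin.prod_univ_succ _
    let e : (Fin (k+1) → ℕ+) ≃ ℕ+ × (Fin k → ℕ+) :=
      { toFun := fun i => (i 0, fun j => i j.succ)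
        invFun := fun p => Fin.cons p.1 p.2
        left_inv := fun i => by
          funext j
          refine Fin.cases ?_ ?_ j <;> simp
        right_inv := fun p => by simp }
    have hco : ∀ i : Fin (k+1) → ℕ+,
        (fun p : ℕ+ × (Fin k → ℕ+) => f 0 p.1 * ∏ j, f j.succ (p.2 j)) (e i)
          = ∏ j, f j (i j) := by
      intro i
      rw [key i]
      rfl
    have hgs : Summable (fun i : Fin (k+1) → ℕ+ => ∏ j, f j (i j)) := by
      have h2 := hg.comp_injective e.injective
      refine h2.congr fun i => ?_
      exact hco i
    refine ⟨hgs, ?_⟩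
    have habs1 : Summable (fun x : ℕ+ => ‖f 0 x‖) := by
      simp only [Real.norm_eq_abs]; exact (hs 0).abs
    have habs2 : Summable (fun i : Fin k → ℕ+ => ‖∏ j, f j.succ (i j)‖) := by
      simp only [Real.norm_eq_abs]; exact ihS'.abs
    calc ∑' i : Fin (k+1) → ℕ+, ∏ j, f j (i j)
        = ∑' p : ℕ+ × (Fin k → ℕ+), f 0 p.1 * ∏ j, f j.succ (p.2 j) := by
          rw [← e.tsum_eq]
          exact tsum_congr fun i => (hco i).symm
      _ = (∑' x, f 0 x) * (∑' i : Fin k → ℕ+, ∏ j, f j.succ (i j)) :=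
          (tsum_mul_tsum_of_summable_norm habs1 habs2).symm
      _ = ∏ j, ∑' x, f j x := by rw [ihT', Fin.prod_univ_succ]

lemma aux_rpow {x n γ' θ : ℝ} (hx : 1 ≤ x) (hn : 1 ≤ n) (hθ : θ ≤ 0) (hγθ : γ' ≤ θ) :
    (x + n) ^ γ' ≤ n ^ θ * x ^ (γ' - θ) := by
  have hx0 : (0:ℝ) < x := lt_of_lt_of_le one_pos hx
  have hn0 : (0:ℝ) < n := lt_of_lt_of_le one_pos hn
  have hxn : (0:ℝ) < x + n := by linarith
  have e : (x+n)^γ' = (x+n)^θ * (x+n)^(γ'-θ) := by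
    rw [← Real.rpow_add hxn]; ring_nf
  rw [e]
  have h1 : (x+n)^θ ≤ n^θ := Real.rpow_le_rpow_of_nonpos hn0 (by linarith) hθ
  have h2 : (x+n)^(γ'-θ) ≤ x^(γ'-θ) := Real.rpow_le_rpow_of_nonpos hx0 (by linarith) (by linarith)
  exact mul_le_mul h1 h2 (Real.rpow_nonneg hxn.le _) (Real.rpow_nonneg hn0.le _)

lemma aux_arith {k : ℕ} (γ : Fin k → ℝ) (hγ : ∀ j, γ j < -1/2)
    (hα : 2 * (∑ j, γ j) + k < -1) :
    (∑ j, γ j) + (∑ j, max (γ j + 1) 0) < -1 := by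
  have key : (∑ j, γ j) + (∑ j, max (γ j + 1) 0) = ∑ j, max (2 * γ j + 1) (γ j) := by
    rw [← Finset.sum_add_distrib]
    refine Finset.sum_congr rfl fun j _ => ?_
    rcases le_total (γ j) (-1) with h | h
    · rw [max_eq_right (by linarith), max_eq_right (by linarith)]; ring
    · rw [max_eq_left (by linarith), max_eq_left (by linarith)]; ring
  rw [key]
  by_cases h : ∀ j, -1 ≤ γ j
  · have : ∀ j ∈ Finset.univ, max (2 * γ j + 1) (γ j) = 2 * γ j + 1 := fun j _ =>
      max_eq_left (by linarith [h j])
    rw [Finset.sum_congr rfl this, Finset.sum_add_distrib, ← Finset.mul_sum]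
    simp only [Finset.sum_const, Finset.card_univ, Fintype.card_fin, nsmul_eq_mul, mul_one]
    linarith
  · push_neg at h
    obtain ⟨j₀, hj₀⟩ := h
    rw [← Finset.add_sum_erase _ _ (Finset.mem_univ j₀)]
    have h1 : max (2 * γ j₀ + 1) (γ j₀) ≤ γ j₀ := max_le (by linarith) le_rfl
    have h2 : ∑ j ∈ Finset.univ.erase j₀, max (2 * γ j + 1) (γ j) ≤ 0 :=
      Finset.sum_nonpos fun j _ => max_le (by linarith [hγ j]) (by linarith [hγ j])
    linarith



/-- Off-diagonal autocovariance summability, short-memory case (`H* < 1/2`). For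
coefficients `a` on `(ℤ₊)^k` bounded by `c₀ i₁^{γ₁}⋯i_k^{γ_k}` with all `γ_j < -1/2`, and
correlations `Σ` bounded by `1`, the autocovariances
`γ(n) = ∑_{σ ∈ S_k} ∑'_{i injective} a(i) a(i∘σ + n) ∏_p Σ(p,σ(p))` are absolutely
convergent, absolutely summable in `n`, and `|∑_{m,n=1}^N γ(|m-n|)| ≤ c₁ N`. -/
theorem stmt_12 (k : ℕ) (hk : 1 ≤ k) (γ : Fin k → ℝ) (hγ : ∀ j, γ j < -1/2)
    (c₀ : ℝ) (hc₀ : 0 < c₀) (H : ℝ) (hH : H = (∑ j, γ j) + (k : ℝ)/2 + 1)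
    (hH' : H < 1/2)
    (a : (Fin k → ℕ+) → ℝ)
    (ha : ∀ i : Fin k → ℕ+, |a i| ≤ c₀ * ∏ j, ((i j : ℕ) : ℝ) ^ (γ j))
    (S : Fin k → Fin k → ℝ) (hS : ∀ p q, |S p q| ≤ 1)
    (gam : ℕ → ℝ)
    (hgam : ∀ n : ℕ, gam n = ∑ σ : Equiv.Perm (Fin k),
      ∑' i : {i : Fin k → ℕ+ // Function.Injective i},
        a i.1 * a (fun p => (⟨(i.1 (σ p) : ℕ) + n, Nat.add_pos_left (i.1 (σ p)).2 n⟩ : ℕ+))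
          * ∏ p, S p (σ p)) :
    (∀ n : ℕ, ∀ σ : Equiv.Perm (Fin k),
      Summable (fun i : {i : Fin k → ℕ+ // Function.Injective i} =>
        a i.1 * a (fun p => (⟨(i.1 (σ p) : ℕ) + n, Nat.add_pos_left (i.1 (σ p)).2 n⟩ : ℕ+))
          * ∏ p, S p (σ p))) ∧
    Summable (fun n : ℕ => |gam n|) ∧
    ∃ c₁ : ℝ, 0 < c₁ ∧ ∀ N : ℕ, 1 ≤ N →
      |∑ m ∈ Finset.Icc 1 N, ∑ n ∈ Finset.Icc 1 N, gam ((m : ℤ) - (n : ℤ)).natAbs|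
        ≤ c₁ * N := by
  classical
  have hkR : (0:ℝ) < (k:ℝ) := by exact_mod_cast hk
  have hα2 : 2 * (∑ j, γ j) + (k:ℝ) < -1 := by rw [hH] at hH'; linarith
  set α : ℝ := ∑ j, γ j with hαdef
  set M : ℝ := ∑ j, max (γ j + 1) 0 with hMdef
  have hαM : α + M < -1 := aux_arith γ hγ hα2
  set δ : ℝ := (-1 - (α + M)) / (2*k) with hδdef
  have hδpos : 0 < δ := div_pos (by linarith) (by linarith)
  set s : ℝ := (α + M - 1)/2 with hsdef
  have hs : s < -1 := by rw [hsdef]; linarith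
  set θ : Equiv.Perm (Fin k) → Fin k → ℝ :=
    fun σ j => min (max (γ (σ⁻¹ j)) (γ j + γ (σ⁻¹ j) + 1 + δ)) 0 with hθdef
  have hθ0 : ∀ σ j, θ σ j ≤ 0 := fun σ j => min_le_right _ _
  have hθγ' : ∀ σ j, γ (σ⁻¹ j) ≤ θ σ j := fun σ j =>
    le_min (le_max_left _ _) (by linarith [hγ (σ⁻¹ j)])
  have hθβ : ∀ σ j, γ j + γ (σ⁻¹ j) - θ σ j < -1 := by
    intro σ j
    have h1 : γ j + γ (σ⁻¹ j) + 1 < θ σ j :=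
      lt_min (lt_of_lt_of_le (by linarith) (le_max_right _ _))
        (by linarith [hγ j, hγ (σ⁻¹ j)])
    linarith
  have hΘ : ∀ σ, ∑ j, θ σ j ≤ s := by
    intro σ
    have h1 : ∀ j ∈ Finset.univ, θ σ j ≤ γ (σ⁻¹ j) + max (γ j + 1) 0 + δ := by
      intro j _
      refine le_trans (min_le_left _ _) (max_le ?_ ?_)
      · have := le_max_right (γ j + 1) (0:ℝ); linarith
      · have := le_max_left (γ j + 1) (0:ℝ); linarith
    refine le_trans (Finset.sum_le_sum h1) ?_
    have h2 : ∑ j, (γ (σ⁻¹ j) + max (γ j + 1) 0 + δ)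
        = (∑ j, γ (σ⁻¹ j)) + M + (k:ℝ) * δ := by
      rw [Finset.sum_add_distrib, Finset.sum_add_distrib]
      simp [hMdef, Finset.sum_const, Finset.card_univ, nsmul_eq_mul]
    have h3 : ∑ j, γ (σ⁻¹ j) = α := Equiv.sum_comp σ⁻¹ γ
    have hk0 : (k:ℝ) ≠ 0 := ne_of_gt hkR
    have h4 : (k:ℝ) * δ = (-1 - (α + M))/2 := by
      rw [hδdef]; field_simp
    rw [h2, h3, h4, hsdef]; linarith
  have hx1 : ∀ (i : Fin k → ℕ+) (j : Fin k), (1:ℝ) ≤ ((i j : ℕ):ℝ) := by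
    intro i j; exact_mod_cast (i j).one_le
  have hx0 : ∀ (i : Fin k → ℕ+) (j : Fin k), (0:ℝ) < ((i j : ℕ):ℝ) :=
    fun i j => lt_of_lt_of_le one_pos (hx1 i j)
  -- the fundamental pointwise bound
  have habs : ∀ (n : ℕ) (σ : Equiv.Perm (Fin k)) (i : Fin k → ℕ+),
      |a i * a (fun p => (⟨(i (σ p) : ℕ) + n, Nat.add_pos_left (i (σ p)).2 n⟩ : ℕ+))
          * ∏ p, S p (σ p)|
        ≤ c₀^2 * ∏ j, ((i j : ℕ):ℝ) ^ (γ j) * (((i j : ℕ):ℝ) + (n:ℝ)) ^ (γ (σ⁻¹ j)) := by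
    intro n σ i
    have hb := ha i
    have hc := ha (fun p => (⟨(i (σ p) : ℕ) + n, Nat.add_pos_left (i (σ p)).2 n⟩ : ℕ+))
    have hc' : |a (fun p => (⟨(i (σ p) : ℕ) + n, Nat.add_pos_left (i (σ p)).2 n⟩ : ℕ+))|
        ≤ c₀ * ∏ j, (((i j : ℕ):ℝ) + (n:ℝ)) ^ (γ (σ⁻¹ j)) := by
      refine hc.trans (le_of_eq ?_)
      congr 1
      rw [← Equiv.prod_comp σ (fun j => (((i j : ℕ):ℝ) + (n:ℝ)) ^ (γ (σ⁻¹ j)))]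
      refine Finset.prod_congr rfl fun p _ => ?_
      have h5 : σ⁻¹ (σ p) = p := Equiv.symm_apply_apply σ p
      rw [h5]
      exact congrArg (fun x : ℝ => x ^ γ p) (Nat.cast_add _ _)
    have hSb : |∏ p, S p (σ p)| ≤ 1 := by
      rw [Finset.abs_prod]
      exact Finset.prod_le_one (fun p _ => abs_nonneg _) (fun p _ => hS p (σ p))
    have hnn1 : (0:ℝ) ≤ c₀ * ∏ j, ((i j : ℕ):ℝ) ^ (γ j) :=
      mul_nonneg hc₀.le (Finset.prod_nonneg fun j _ => Real.rpow_nonneg (hx0 i j).le _)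
    have hnn2 : (0:ℝ) ≤ c₀ * ∏ j, (((i j : ℕ):ℝ) + (n:ℝ)) ^ (γ (σ⁻¹ j)) :=
      mul_nonneg hc₀.le (Finset.prod_nonneg fun j _ =>
        Real.rpow_nonneg (by positivity) _)
    calc |a i * a (fun p => (⟨(i (σ p) : ℕ) + n, Nat.add_pos_left (i (σ p)).2 n⟩ : ℕ+))
          * ∏ p, S p (σ p)|
        = |a i| * |a (fun p => (⟨(i (σ p) : ℕ) + n, Nat.add_pos_left (i (σ p)).2 n⟩ : ℕ+))|
          * |∏ p, S p (σ p)| := by rw [abs_mul, abs_mul]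
      _ ≤ (c₀ * ∏ j, ((i j : ℕ):ℝ) ^ (γ j))
            * (c₀ * ∏ j, (((i j : ℕ):ℝ) + (n:ℝ)) ^ (γ (σ⁻¹ j))) * 1 := by
          refine mul_le_mul ?_ hSb (abs_nonneg _) (mul_nonneg hnn1 hnn2)
          exact mul_le_mul hb hc' (abs_nonneg _) hnn1
      _ = c₀^2 * ∏ j, ((i j : ℕ):ℝ) ^ (γ j) * (((i j : ℕ):ℝ) + (n:ℝ)) ^ (γ (σ⁻¹ j)) := by
          rw [mul_one, Finset.prod_mul_distrib]; ring
  -- bound 1 : valid for all n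
  have hb1 : ∀ (n : ℕ) (σ : Equiv.Perm (Fin k)) (i : Fin k → ℕ+),
      (∏ j, ((i j : ℕ):ℝ) ^ (γ j) * (((i j : ℕ):ℝ) + (n:ℝ)) ^ (γ (σ⁻¹ j)))
        ≤ ∏ j, ((i j : ℕ):ℝ) ^ (γ j + γ (σ⁻¹ j)) := by
    intro n σ i
    refine Finset.prod_le_prod (fun j _ => ?_) (fun j _ => ?_)
    · exact mul_nonneg (Real.rpow_nonneg (hx0 i j).le _) (Real.rpow_nonneg (by positivity) _)
    · rw [Real.rpow_add (hx0 i j)]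
      refine mul_le_mul_of_nonneg_left ?_ (Real.rpow_nonneg (hx0 i j).le _)
      refine Real.rpow_le_rpow_of_nonpos (hx0 i j) ?_ (by linarith [hγ (σ⁻¹ j)])
      have : (0:ℝ) ≤ (n:ℝ) := Nat.cast_nonneg n
      linarith
  -- bound 2 : decay in n, for n ≥ 1
  have hb2 : ∀ (n : ℕ), 1 ≤ n → ∀ (σ : Equiv.Perm (Fin k)) (i : Fin k → ℕ+),
      (∏ j, ((i j : ℕ):ℝ) ^ (γ j) * (((i j : ℕ):ℝ) + (n:ℝ)) ^ (γ (σ⁻¹ j)))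
        ≤ (n:ℝ) ^ (∑ j, θ σ j) * ∏ j, ((i j : ℕ):ℝ) ^ (γ j + γ (σ⁻¹ j) - θ σ j) := by
    intro n hn σ i
    have hnR : (1:ℝ) ≤ (n:ℝ) := by exact_mod_cast hn
    have hnR0 : (0:ℝ) < (n:ℝ) := lt_of_lt_of_le one_pos hnR
    have step : ∀ j ∈ Finset.univ,
        ((i j : ℕ):ℝ) ^ (γ j) * (((i j : ℕ):ℝ) + (n:ℝ)) ^ (γ (σ⁻¹ j))
          ≤ (n:ℝ) ^ (θ σ j) * ((i j : ℕ):ℝ) ^ (γ j + γ (σ⁻¹ j) - θ σ j) := by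
      intro j _
      have h1 := aux_rpow (hx1 i j) hnR (hθ0 σ j) (hθγ' σ j)
      calc ((i j : ℕ):ℝ) ^ (γ j) * (((i j : ℕ):ℝ) + (n:ℝ)) ^ (γ (σ⁻¹ j))
          ≤ ((i j : ℕ):ℝ) ^ (γ j) * ((n:ℝ) ^ (θ σ j) * ((i j : ℕ):ℝ) ^ (γ (σ⁻¹ j) - θ σ j)) :=
            mul_le_mul_of_nonneg_left h1 (Real.rpow_nonneg (hx0 i j).le _)
        _ = (n:ℝ) ^ (θ σ j) * ((i j : ℕ):ℝ) ^ (γ j + γ (σ⁻¹ j) - θ σ j) := by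
            have he : γ j + γ (σ⁻¹ j) - θ σ j = γ j + (γ (σ⁻¹ j) - θ σ j) := by ring
            rw [he, Real.rpow_add (hx0 i j)]; ring
    refine le_trans (Finset.prod_le_prod (fun j _ => ?_) step) (le_of_eq ?_)
    · exact mul_nonneg (Real.rpow_nonneg (hx0 i j).le _) (Real.rpow_nonneg (by positivity) _)
    · rw [Finset.prod_mul_distrib, ← Real.rpow_sum_of_pos hnR0]
  -- summability of the majorants
  have hg1 : ∀ σ : Equiv.Perm (Fin k),
      Summable (fun i : Fin k → ℕ+ => ∏ j, ((i j : ℕ):ℝ) ^ (γ j + γ (σ⁻¹ j))) := by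
    intro σ
    exact (aux_pi_prod k (fun j x => ((x : ℕ):ℝ) ^ (γ j + γ (σ⁻¹ j)))
      (fun j x => Real.rpow_nonneg (Nat.cast_nonneg _) _)
      (fun j => aux_summable_pnat_rpow (by linarith [hγ j, hγ (σ⁻¹ j)]))).1
  have hg2 : ∀ σ : Equiv.Perm (Fin k),
      Summable (fun i : Fin k → ℕ+ => ∏ j, ((i j : ℕ):ℝ) ^ (γ j + γ (σ⁻¹ j) - θ σ j)) ∧
      ∑' i : Fin k → ℕ+, ∏ j, ((i j : ℕ):ℝ) ^ (γ j + γ (σ⁻¹ j) - θ σ j)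
        = ∏ j, ∑' x : ℕ+, ((x : ℕ):ℝ) ^ (γ j + γ (σ⁻¹ j) - θ σ j) := by
    intro σ
    exact aux_pi_prod k (fun j x => ((x : ℕ):ℝ) ^ (γ j + γ (σ⁻¹ j) - θ σ j))
      (fun j x => Real.rpow_nonneg (Nat.cast_nonneg _) _)
      (fun j => aux_summable_pnat_rpow (hθβ σ j))
  set C : Equiv.Perm (Fin k) → ℝ :=
    fun σ => ∏ j, ∑' x : ℕ+, ((x : ℕ):ℝ) ^ (γ j + γ (σ⁻¹ j) - θ σ j) with hCdef
  have hCnn : ∀ σ, 0 ≤ C σ := fun σ => Finset.prod_nonneg fun j _ =>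
    tsum_nonneg fun x => Real.rpow_nonneg (Nat.cast_nonneg _) _
  -- Part 1
  have hpart1 : ∀ n : ℕ, ∀ σ : Equiv.Perm (Fin k),
      Summable (fun i : {i : Fin k → ℕ+ // Function.Injective i} =>
        a i.1 * a (fun p => (⟨(i.1 (σ p) : ℕ) + n, Nat.add_pos_left (i.1 (σ p)).2 n⟩ : ℕ+))
          * ∏ p, S p (σ p)) := by
    intro n σ
    have hgsub : Summable (fun i : {i : Fin k → ℕ+ // Function.Injective i} =>
        c₀^2 * ∏ j, ((i.1 j : ℕ):ℝ) ^ (γ j + γ (σ⁻¹ j))) :=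
      ((hg1 σ).comp_injective Subtype.val_injective).mul_left _
    refine Summable.of_norm_bounded hgsub (fun i => ?_)
    rw [Real.norm_eq_abs]
    exact (habs n σ i.1).trans (mul_le_mul_of_nonneg_left (hb1 n σ i.1) (sq_nonneg c₀))
  -- the decay bound for |gam n|, n ≥ 1
  set K : ℝ := ∑ σ : Equiv.Perm (Fin k), c₀^2 * C σ with hKdef
  have hKnn : 0 ≤ K := Finset.sum_nonneg fun σ _ => mul_nonneg (sq_nonneg _) (hCnn σ)
  have hgamle : ∀ n : ℕ, 1 ≤ n → |gam n| ≤ K * (n:ℝ) ^ s := by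
    intro n hn
    have hnR : (1:ℝ) ≤ (n:ℝ) := by exact_mod_cast hn
    rw [hgam n]
    refine (Finset.abs_sum_le_sum_abs _ _).trans ?_
    have hterm : ∀ σ ∈ (Finset.univ : Finset (Equiv.Perm (Fin k))),
        |∑' i : {i : Fin k → ℕ+ // Function.Injective i},
          a i.1 * a (fun p => (⟨(i.1 (σ p) : ℕ) + n, Nat.add_pos_left (i.1 (σ p)).2 n⟩ : ℕ+))
            * ∏ p, S p (σ p)| ≤ c₀^2 * C σ * (n:ℝ) ^ s := by
      intro σ _
      have hsubS : Summable (fun i : {i : Fin k → ℕ+ // Function.Injective i} =>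
          c₀^2 * ((n:ℝ) ^ (∑ j, θ σ j)
            * ∏ j, ((i.1 j : ℕ):ℝ) ^ (γ j + γ (σ⁻¹ j) - θ σ j))) :=
        ((((hg2 σ).1.comp_injective Subtype.val_injective).mul_left
          ((n:ℝ) ^ (∑ j, θ σ j))).mul_left (c₀^2))
      have hfullS : Summable (fun i : Fin k → ℕ+ =>
          c₀^2 * ((n:ℝ) ^ (∑ j, θ σ j)
            * ∏ j, ((i j : ℕ):ℝ) ^ (γ j + γ (σ⁻¹ j) - θ σ j))) :=
        (((hg2 σ).1.mul_left ((n:ℝ) ^ (∑ j, θ σ j))).mul_left (c₀^2))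
      have habs_sum : Summable (fun i : {i : Fin k → ℕ+ // Function.Injective i} =>
          |a i.1 * a (fun p => (⟨(i.1 (σ p) : ℕ) + n, Nat.add_pos_left (i.1 (σ p)).2 n⟩ : ℕ+))
            * ∏ p, S p (σ p)|) := (hpart1 n σ).abs
      have h1 : |∑' i : {i : Fin k → ℕ+ // Function.Injective i},
            a i.1 * a (fun p => (⟨(i.1 (σ p) : ℕ) + n, Nat.add_pos_left (i.1 (σ p)).2 n⟩ : ℕ+))
              * ∏ p, S p (σ p)|
          ≤ ∑' i : {i : Fin k → ℕ+ // Function.Injective i},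
            |a i.1 * a (fun p => (⟨(i.1 (σ p) : ℕ) + n, Nat.add_pos_left (i.1 (σ p)).2 n⟩ : ℕ+))
              * ∏ p, S p (σ p)| := by
        have hn2 : Summable (fun i : {i : Fin k → ℕ+ // Function.Injective i} =>
            ‖a i.1 * a (fun p => (⟨(i.1 (σ p) : ℕ) + n, Nat.add_pos_left (i.1 (σ p)).2 n⟩ : ℕ+))
              * ∏ p, S p (σ p)‖) := by
          simp only [Real.norm_eq_abs]; exact habs_sum
        have h9 := norm_tsum_le_tsum_norm hn2
        simp only [Real.norm_eq_abs] at h9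
        exact h9
      have h2 : ∑' i : {i : Fin k → ℕ+ // Function.Injective i},
            |a i.1 * a (fun p => (⟨(i.1 (σ p) : ℕ) + n, Nat.add_pos_left (i.1 (σ p)).2 n⟩ : ℕ+))
              * ∏ p, S p (σ p)|
          ≤ ∑' i : {i : Fin k → ℕ+ // Function.Injective i},
            c₀^2 * ((n:ℝ) ^ (∑ j, θ σ j)
              * ∏ j, ((i.1 j : ℕ):ℝ) ^ (γ j + γ (σ⁻¹ j) - θ σ j)) := by
        refine Summable.tsum_le_tsum (fun i => ?_) habs_sum hsubS
        refine (habs n σ i.1).trans ?_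
        exact mul_le_mul_of_nonneg_left (hb2 n hn σ i.1) (sq_nonneg c₀)
      have h3 : ∑' i : {i : Fin k → ℕ+ // Function.Injective i},
            c₀^2 * ((n:ℝ) ^ (∑ j, θ σ j)
              * ∏ j, ((i.1 j : ℕ):ℝ) ^ (γ j + γ (σ⁻¹ j) - θ σ j))
          ≤ ∑' i : Fin k → ℕ+,
            c₀^2 * ((n:ℝ) ^ (∑ j, θ σ j)
              * ∏ j, ((i j : ℕ):ℝ) ^ (γ j + γ (σ⁻¹ j) - θ σ j)) := by
        refine Summable.tsum_le_tsum_of_inj (Subtype.val) Subtype.val_injective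
          (fun c _ => ?_) (fun i => le_rfl) hsubS hfullS
        positivity
      have h4 : ∑' i : Fin k → ℕ+,
            c₀^2 * ((n:ℝ) ^ (∑ j, θ σ j)
              * ∏ j, ((i j : ℕ):ℝ) ^ (γ j + γ (σ⁻¹ j) - θ σ j))
          = c₀^2 * ((n:ℝ) ^ (∑ j, θ σ j) * C σ) := by
        rw [tsum_mul_left, tsum_mul_left, (hg2 σ).2]
      have h5 : c₀^2 * ((n:ℝ) ^ (∑ j, θ σ j) * C σ) ≤ c₀^2 * C σ * (n:ℝ) ^ s := by
        have h6 : (n:ℝ) ^ (∑ j, θ σ j) ≤ (n:ℝ) ^ s :=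
          Real.rpow_le_rpow_of_exponent_le hnR (hΘ σ)
        have h7 : c₀^2 * ((n:ℝ) ^ (∑ j, θ σ j) * C σ) = (c₀^2 * C σ) * (n:ℝ) ^ (∑ j, θ σ j) := by
          ring
        rw [h7]
        exact mul_le_mul_of_nonneg_left h6 (mul_nonneg (sq_nonneg _) (hCnn σ))
      linarith [h1.trans (h2.trans (h3.trans (le_of_eq h4)))]
    refine (Finset.sum_le_sum hterm).trans (le_of_eq ?_)
    rw [hKdef, Finset.sum_mul]
  -- Part 2 : summability of |gam|
  have hpart2 : Summable (fun n : ℕ => |gam n|) := by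
    rw [← summable_nat_add_iff 1]
    have h0 : Summable (fun n : ℕ => ((n:ℝ)) ^ s) := Real.summable_nat_rpow.mpr hs
    have h1 : Summable (fun n : ℕ => (((n + 1 : ℕ)):ℝ) ^ s) := (summable_nat_add_iff 1).mpr h0
    refine Summable.of_nonneg_of_le (fun n => abs_nonneg _) (fun n => ?_) (h1.mul_left K)
    exact hgamle (n+1) (by omega)
  -- Part 3
  set T : ℝ := ∑' n, |gam n| with hTdef
  have hTnn : 0 ≤ T := tsum_nonneg fun n => abs_nonneg _
  refine ⟨hpart1, hpart2, 2*T+1, by linarith, ?_⟩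
  intro N hN
  have inner : ∀ m ∈ Finset.Icc 1 N,
      ∑ n ∈ Finset.Icc 1 N, |gam ((m:ℤ) - (n:ℤ)).natAbs| ≤ 2*T := by
    intro m hm
    rw [Finset.mem_Icc] at hm
    have hsplit : Finset.Icc 1 N = Finset.Icc 1 m ∪ Finset.Icc (m+1) N := by
      ext x; simp only [Finset.mem_Icc, Finset.mem_union]; omega
    have hdisj : Disjoint (Finset.Icc 1 m) (Finset.Icc (m+1) N) := by
      rw [Finset.disjoint_left]
      intro x hx hx'
      simp only [Finset.mem_Icc] at hx hx'
      omega
    rw [hsplit, Finset.sum_union hdisj]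
    have hA : ∑ n ∈ Finset.Icc 1 m, |gam ((m:ℤ) - (n:ℤ)).natAbs| ≤ T := by
      have hinj : ∀ x ∈ Finset.Icc 1 m, ∀ y ∈ Finset.Icc 1 m,
          ((m:ℤ) - (x:ℤ)).natAbs = ((m:ℤ) - (y:ℤ)).natAbs → x = y := by
        intro x hx y hy h
        simp only [Finset.mem_Icc] at hx hy
        omega
      calc ∑ n ∈ Finset.Icc 1 m, |gam ((m:ℤ) - (n:ℤ)).natAbs|
          = ∑ d ∈ (Finset.Icc 1 m).image (fun n : ℕ => ((m:ℤ) - (n:ℤ)).natAbs), |gam d| :=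
            (Finset.sum_image (f := fun d => |gam d|) hinj).symm
        _ ≤ T := Summable.sum_le_tsum _ (fun d _ => abs_nonneg _) hpart2
    have hB : ∑ n ∈ Finset.Icc (m+1) N, |gam ((m:ℤ) - (n:ℤ)).natAbs| ≤ T := by
      have hinj : ∀ x ∈ Finset.Icc (m+1) N, ∀ y ∈ Finset.Icc (m+1) N,
          ((m:ℤ) - (x:ℤ)).natAbs = ((m:ℤ) - (y:ℤ)).natAbs → x = y := by
        intro x hx y hy h
        simp only [Finset.mem_Icc] at hx hy
        omega
      calc ∑ n ∈ Finset.Icc (m+1) N, |gam ((m:ℤ) - (n:ℤ)).natAbs|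
          = ∑ d ∈ (Finset.Icc (m+1) N).image (fun n : ℕ => ((m:ℤ) - (n:ℤ)).natAbs), |gam d| :=
            (Finset.sum_image (f := fun d => |gam d|) hinj).symm
        _ ≤ T := Summable.sum_le_tsum _ (fun d _ => abs_nonneg _) hpart2
    linarith
  have hNR : (1:ℝ) ≤ (N:ℝ) := by exact_mod_cast hN
  calc |∑ m ∈ Finset.Icc 1 N, ∑ n ∈ Finset.Icc 1 N, gam ((m:ℤ) - (n:ℤ)).natAbs|
      ≤ ∑ m ∈ Finset.Icc 1 N, |∑ n ∈ Finset.Icc 1 N, gam ((m:ℤ) - (n:ℤ)).natAbs| :=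
        Finset.abs_sum_le_sum_abs _ _
    _ ≤ ∑ m ∈ Finset.Icc 1 N, ∑ n ∈ Finset.Icc 1 N, |gam ((m:ℤ) - (n:ℤ)).natAbs| :=
        Finset.sum_le_sum fun m _ => Finset.abs_sum_le_sum_abs _ _
    _ ≤ ∑ m ∈ Finset.Icc 1 N, 2*T := Finset.sum_le_sum inner
    _ = ((Finset.Icc 1 N).card : ℝ) * (2*T) := by rw [Finset.sum_const, nsmul_eq_mul]
    _ = (N:ℝ) * (2*T) := by rw [Nat.card_Icc]; norm_num
    _ ≤ (2*T+1) * (N:ℝ) := by nlinarith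
end

section
/- Let s ≥ 1 be an integer and let α₁ < -s/2 and α₂ < -s/2 be real numbers. Then there exists a constant C > 0 (depending only on s, α₁, α₂) such that for all reals A > 0 and B > 0, the series ∑_{u ∈ (ℤ₊)^s} (u₁+…+u_s+A)^{α₁} (u₁+…+u_s+B)^{α₂} converges and is bounded by C·A^{α₁+s/2}·B^{α₂+s/2}. -/
open Finset in
lemma one_dim (δ : ℝ) (hδ : δ < -1) :
    ∃ C : ℝ, 0 < C ∧ ∀ A : ℝ, 0 < A →
      Summable (fun i : ℕ+ => ((i : ℝ) + A) ^ δ) ∧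
      ∑' i : ℕ+, ((i : ℝ) + A) ^ δ ≤ C * A ^ (δ + 1) := by
  have hδ1 : δ + 1 < 0 := by linarith
  have hC : 0 < -1 / (δ + 1) := div_pos_of_neg_of_neg (by norm_num) hδ1
  refine ⟨-1 / (δ + 1), hC, fun A hA => ?_⟩
  set g : ℕ → ℝ := fun n => ((n : ℝ) + 1 + A) ^ δ with hgdef
  have hgnonneg : ∀ n, 0 ≤ g n := fun n => by
    have : (0:ℝ) < (n:ℝ) + 1 + A := by positivity
    positivity
  have key : ∀ n : ℕ, ∑ i ∈ range n, g i ≤ -1 / (δ + 1) * A ^ (δ + 1) := by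
    intro n
    have hanti : AntitoneOn (fun x : ℝ => (x + A) ^ δ) (Set.Icc (0:ℝ) (0 + (n:ℝ))) := by
      intro x hx y _ hxy
      exact Real.rpow_le_rpow_of_nonpos (by linarith [hx.1]) (by linarith) (by linarith)
    have h1 := hanti.sum_le_integral
    have h2 : (∫ x in (0:ℝ)..(0 + (n:ℝ)), (x + A) ^ δ)
        = (((n:ℝ) + A) ^ (δ + 1) - A ^ (δ + 1)) / (δ + 1) := by
      rw [intervalIntegral.integral_comp_add_right (fun x => x ^ δ) A]
      rw [integral_rpow (Or.inr ⟨by linarith, by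
        rw [Set.mem_uIcc]
        push_neg
        constructor <;> intro h <;> nlinarith [Nat.cast_nonneg (α := ℝ) n]⟩)]
      norm_num
    have h3 : (((n:ℝ) + A) ^ (δ + 1) - A ^ (δ + 1)) / (δ + 1) ≤ -1 / (δ + 1) * A ^ (δ + 1) := by
      rw [div_le_iff_of_neg hδ1]
      have h4 : -1 / (δ + 1) * A ^ (δ + 1) * (δ + 1) = -A ^ (δ + 1) := by field_simp; rw [div_self hδ1.ne]
      rw [h4]
      nlinarith [Real.rpow_nonneg (by positivity : (0:ℝ) ≤ (n:ℝ) + A) (δ + 1)]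
    calc ∑ i ∈ range n, g i = ∑ i ∈ range n, (fun x : ℝ => (x + A) ^ δ) (0 + ((i:ℕ) + 1 : ℕ)) := by
          apply Finset.sum_congr rfl
          intro i _
          simp [hgdef]
      _ ≤ ∫ x in (0:ℝ)..(0 + (n:ℝ)), (x + A) ^ δ := h1
      _ ≤ -1 / (δ + 1) * A ^ (δ + 1) := h2 ▸ h3
  have hgsum : Summable g := summable_of_sum_range_le hgnonneg key
  have hgtsum : ∑' n, g n ≤ -1 / (δ + 1) * A ^ (δ + 1) :=
    Summable.tsum_le_of_sum_range_le hgsum key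
  have hfg : (fun i : ℕ+ => ((i : ℝ) + A) ^ δ) = g ∘ Equiv.pnatEquivNat := by
    funext i
    simp only [Function.comp, hgdef, Equiv.pnatEquivNat_apply]
    congr 1
    have : (i.natPred : ℝ) + 1 = (i : ℝ) := by
      rw [← Nat.cast_succ]
      exact_mod_cast congrArg (Nat.cast (R := ℝ)) (PNat.natPred_add_one i)
    linarith
  constructor
  · rw [hfg]; exact Equiv.pnatEquivNat.summable_iff.mpr hgsum
  · rw [hfg]
    calc ∑' i : ℕ+, (g ∘ Equiv.pnatEquivNat) i = ∑' n, g n := Equiv.pnatEquivNat.tsum_eq g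
      _ ≤ -1 / (δ + 1) * A ^ (δ + 1) := hgtsum

lemma two_dim_aux (γ β : ℝ) (hγ : γ < -1/2) (hβ : β < -1/2)
    (one_dim : ∀ δ : ℝ, δ < -1 →
      ∃ C : ℝ, 0 < C ∧ ∀ A : ℝ, 0 < A →
        Summable (fun i : ℕ+ => ((i : ℝ) + A) ^ δ) ∧
        ∑' i : ℕ+, ((i : ℝ) + A) ^ δ ≤ C * A ^ (δ + 1)) :
    ∃ C : ℝ, 0 < C ∧ ∀ A B : ℝ, 0 < A → 0 < B →
      Summable (fun i : ℕ+ => ((i : ℝ) + A) ^ γ * ((i : ℝ) + B) ^ β) ∧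
      ∑' i : ℕ+, ((i : ℝ) + A) ^ γ * ((i : ℝ) + B) ^ β
        ≤ C * A ^ (γ + 1/2) * B ^ (β + 1/2) := by
  obtain ⟨C₁, hC₁, H₁⟩ := one_dim (2*γ) (by linarith)
  obtain ⟨C₂, hC₂, H₂⟩ := one_dim (2*β) (by linarith)
  refine ⟨(C₁ + C₂)/2, by positivity, fun A B hA hB => ?_⟩
  obtain ⟨hS₁, hT₁⟩ := H₁ A hA
  obtain ⟨hS₂, hT₂⟩ := H₂ B hB
  set t : ℝ := A ^ (-(γ + 1/2)) * B ^ (β + 1/2) with ht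
  have htpos : 0 < t := by positivity
  have hti : t * t⁻¹ = 1 := mul_inv_cancel₀ htpos.ne'
  have hpt : ∀ i : ℕ+, ((i : ℝ) + A) ^ γ * ((i : ℝ) + B) ^ β ≤
      (t * ((i : ℝ) + A) ^ (2*γ) + t⁻¹ * ((i : ℝ) + B) ^ (2*β)) / 2 := by
    intro i
    have hiA : (0:ℝ) < (i : ℝ) + A := by positivity
    have hiB : (0:ℝ) < (i : ℝ) + B := by positivity
    have e1 : ((i : ℝ) + A) ^ (2*γ) = ((i : ℝ) + A) ^ γ * ((i : ℝ) + A) ^ γ := by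
      rw [two_mul, Real.rpow_add hiA]
    have e2 : ((i : ℝ) + B) ^ (2*β) = ((i : ℝ) + B) ^ β * ((i : ℝ) + B) ^ β := by
      rw [two_mul, Real.rpow_add hiB]
    rw [e1, e2]
    set a := ((i : ℝ) + A) ^ γ
    set b := ((i : ℝ) + B) ^ β
    have ha : 0 ≤ a := Real.rpow_nonneg hiA.le γ
    have hb : 0 ≤ b := Real.rpow_nonneg hiB.le β
    nlinarith [sq_nonneg (t*a - b), mul_pos htpos htpos, sq_nonneg a, sq_nonneg b]
  have hmajS : Summable (fun i : ℕ+ =>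
      (t * ((i : ℝ) + A) ^ (2*γ) + t⁻¹ * ((i : ℝ) + B) ^ (2*β)) / 2) :=
    ((hS₁.mul_left t).add (hS₂.mul_left t⁻¹)).div_const 2
  have hnonneg : ∀ i : ℕ+, 0 ≤ ((i : ℝ) + A) ^ γ * ((i : ℝ) + B) ^ β := by
    intro i
    have hiA : (0:ℝ) < (i : ℝ) + A := by positivity
    have hiB : (0:ℝ) < (i : ℝ) + B := by positivity
    positivity
  have hsum : Summable (fun i : ℕ+ => ((i : ℝ) + A) ^ γ * ((i : ℝ) + B) ^ β) :=
    Summable.of_nonneg_of_le hnonneg hpt hmajS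
  refine ⟨hsum, ?_⟩
  have e2 : t * A ^ (2*γ + 1) = A ^ (γ + 1/2) * B ^ (β + 1/2) := by
    rw [ht, mul_right_comm, ← Real.rpow_add hA]
    congr 2
    ring
  have e3 : t⁻¹ * B ^ (2*β + 1) = A ^ (γ + 1/2) * B ^ (β + 1/2) := by
    rw [ht, mul_inv, ← Real.rpow_neg hA.le, ← Real.rpow_neg hB.le, neg_neg,
      mul_assoc, ← Real.rpow_add hB]
    congr 2
    ring
  calc ∑' i : ℕ+, ((i : ℝ) + A) ^ γ * ((i : ℝ) + B) ^ β
      ≤ ∑' i : ℕ+, (t * ((i : ℝ) + A) ^ (2*γ) + t⁻¹ * ((i : ℝ) + B) ^ (2*β)) / 2 :=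
        Summable.tsum_le_tsum hpt hsum hmajS
    _ = (t * ∑' i : ℕ+, ((i : ℝ) + A) ^ (2*γ) + t⁻¹ * ∑' i : ℕ+, ((i : ℝ) + B) ^ (2*β)) / 2 := by
        rw [tsum_div_const, Summable.tsum_add (hS₁.mul_left t) (hS₂.mul_left t⁻¹),
          tsum_mul_left, tsum_mul_left]
    _ ≤ (t * (C₁ * A ^ (2*γ + 1)) + t⁻¹ * (C₂ * B ^ (2*β + 1))) / 2 := by
        gcongr
    _ = (C₁ + C₂)/2 * A ^ (γ + 1/2) * B ^ (β + 1/2) := by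
        rw [show t * (C₁ * A ^ (2*γ + 1)) = C₁ * (t * A ^ (2*γ + 1)) by ring,
          show t⁻¹ * (C₂ * B ^ (2*β + 1)) = C₂ * (t⁻¹ * B ^ (2*β + 1)) by ring, e2, e3]
        ring

lemma main_aux
    (two_dim : ∀ γ β : ℝ, γ < -1/2 → β < -1/2 →
      ∃ C : ℝ, 0 < C ∧ ∀ A B : ℝ, 0 < A → 0 < B →
        Summable (fun i : ℕ+ => ((i : ℝ) + A) ^ γ * ((i : ℝ) + B) ^ β) ∧
        ∑' i : ℕ+, ((i : ℝ) + A) ^ γ * ((i : ℝ) + B) ^ β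
          ≤ C * A ^ (γ + 1/2) * B ^ (β + 1/2)) :
    ∀ s : ℕ, ∀ α₁ α₂ : ℝ, α₁ < -(s : ℝ)/2 → α₂ < -(s : ℝ)/2 →
    ∃ C : ℝ, 0 < C ∧ ∀ A B : ℝ, 0 < A → 0 < B →
      Summable (fun u : Fin s → ℕ+ =>
        ((∑ j, (u j : ℝ)) + A) ^ α₁ * ((∑ j, (u j : ℝ)) + B) ^ α₂) ∧
      ∑' u : Fin s → ℕ+, ((∑ j, (u j : ℝ)) + A) ^ α₁ * ((∑ j, (u j : ℝ)) + B) ^ α₂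
        ≤ C * A ^ (α₁ + s/2) * B ^ (α₂ + s/2) := by
  intro s
  induction s with
  | zero =>
    intro α₁ α₂ _ _
    refine ⟨1, one_pos, fun A B hA hB => ?_⟩
    have hempty : ∀ u : Fin 0 → ℕ+, (∑ j, (u j : ℝ)) = 0 := fun u => by simp
    constructor
    · exact .of_finite
    · rw [tsum_eq_single (default : Fin 0 → ℕ+) (fun b hb => absurd (Subsingleton.elim b default) hb)]
      rw [hempty]
      simp
  | succ s IH =>
    intro α₁ α₂ h1 h2
    have hs0 : (0:ℝ) ≤ (s:ℝ) := Nat.cast_nonneg s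
    have hsc : ((s+1 : ℕ) : ℝ) = (s:ℝ) + 1 := by push_cast; ring
    rw [hsc] at h1 h2
    obtain ⟨C₂, hC₂, H₂⟩ := two_dim α₁ α₂ (by linarith) (by linarith)
    obtain ⟨Cs, hCs, Hs⟩ := IH (α₁ + 1/2) (α₂ + 1/2) (by linarith) (by linarith)
    refine ⟨C₂ * Cs, by positivity, fun A B hA hB => ?_⟩
    set T : (Fin s → ℕ+) → ℝ := fun v => ∑ j, (v j : ℝ) with hTdef
    have hT : ∀ v, 0 ≤ T v := fun v =>
      Finset.sum_nonneg fun j _ => by positivity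
    set F : (Fin (s+1) → ℕ+) → ℝ := fun u =>
      ((∑ j, (u j : ℝ)) + A) ^ α₁ * ((∑ j, (u j : ℝ)) + B) ^ α₂ with hFdef
    set ee : ((Fin s → ℕ+) × ℕ+) ≃ (Fin (s+1) → ℕ+) :=
      (Equiv.prodComm _ _).trans (Fin.consEquiv fun _ => ℕ+) with heedef
    have hsum_cons : ∀ (i : ℕ+) (v : Fin s → ℕ+),
        (∑ j, ((Fin.cons i v : Fin (s+1) → ℕ+) j : ℝ)) = (i : ℝ) + T v := by
      intro i v
      rw [Fin.sum_univ_succ]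
      simp [hTdef]
    have hG : ∀ p : (Fin s → ℕ+) × ℕ+, F (ee p) =
        ((p.2 : ℝ) + (T p.1 + A)) ^ α₁ * ((p.2 : ℝ) + (T p.1 + B)) ^ α₂ := by
      intro p
      simp only [heedef, Equiv.trans_apply, Equiv.prodComm_apply, Prod.swap,
        Fin.consEquiv_apply, hFdef]
      rw [hsum_cons]
      ring_nf
    have inner : ∀ v : Fin s → ℕ+,
        Summable (fun i : ℕ+ => ((i : ℝ) + (T v + A)) ^ α₁ * ((i : ℝ) + (T v + B)) ^ α₂) ∧
        ∑' i : ℕ+, ((i : ℝ) + (T v + A)) ^ α₁ * ((i : ℝ) + (T v + B)) ^ α₂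
          ≤ C₂ * (T v + A) ^ (α₁ + 1/2) * (T v + B) ^ (α₂ + 1/2) := fun v =>
      H₂ (T v + A) (T v + B) (by have := hT v; linarith) (by have := hT v; linarith)
    obtain ⟨outerS, outerT⟩ := Hs A B hA hB
    -- outer summable fn matches
    have houter : Summable (fun v : Fin s → ℕ+ =>
        (T v + A) ^ (α₁ + 1/2) * (T v + B) ^ (α₂ + 1/2)) := outerS
    have hGnonneg : ∀ p : (Fin s → ℕ+) × ℕ+, 0 ≤ F (ee p) := by
      intro p
      rw [hG]
      have h1 : (0:ℝ) < (p.2 : ℝ) + (T p.1 + A) := by have := hT p.1; positivity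
      have h2 : (0:ℝ) < (p.2 : ℝ) + (T p.1 + B) := by have := hT p.1; positivity
      positivity
    have hinnerS : ∀ v, Summable fun i : ℕ+ => F (ee (v, i)) := by
      intro v
      have := (inner v).1
      simpa [hG] using this
    have htsum_le : ∀ v : Fin s → ℕ+, ∑' i : ℕ+, F (ee (v, i))
        ≤ C₂ * ((T v + A) ^ (α₁ + 1/2) * (T v + B) ^ (α₂ + 1/2)) := by
      intro v
      have h := (inner v).2
      rw [← mul_assoc]
      calc ∑' i : ℕ+, F (ee (v, i))
          = ∑' i : ℕ+, ((i : ℝ) + (T v + A)) ^ α₁ * ((i : ℝ) + (T v + B)) ^ α₂ := by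
            congr 1; funext i; rw [hG]
        _ ≤ _ := h
    have houterS : Summable fun v : Fin s → ℕ+ => ∑' i : ℕ+, F (ee (v, i)) := by
      apply Summable.of_nonneg_of_le
        (fun v => tsum_nonneg fun i => hGnonneg (v, i)) htsum_le
      exact houter.mul_left C₂
    have hGsum : Summable (fun p : (Fin s → ℕ+) × ℕ+ => F (ee p)) :=
      (summable_prod_of_nonneg (fun p => hGnonneg p)).mpr ⟨hinnerS, houterS⟩
    have hFsum : Summable F := ee.summable_iff.mp hGsum
    refine ⟨hFsum, ?_⟩
    have step1 : ∑' u : Fin (s+1) → ℕ+, F u = ∑' v : Fin s → ℕ+, ∑' i : ℕ+, F (ee (v, i)) := by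
      rw [← ee.tsum_eq F]
      exact Summable.tsum_prod' hGsum hinnerS
    rw [step1]
    calc ∑' v : Fin s → ℕ+, ∑' i : ℕ+, F (ee (v, i))
        ≤ ∑' v : Fin s → ℕ+, C₂ * ((T v + A) ^ (α₁ + 1/2) * (T v + B) ^ (α₂ + 1/2)) :=
          Summable.tsum_le_tsum htsum_le houterS (houter.mul_left C₂)
      _ = C₂ * ∑' v : Fin s → ℕ+, (T v + A) ^ (α₁ + 1/2) * (T v + B) ^ (α₂ + 1/2) :=
          tsum_mul_left
      _ ≤ C₂ * (Cs * A ^ (α₁ + 1/2 + (s:ℝ)/2) * B ^ (α₂ + 1/2 + (s:ℝ)/2)) := by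
          apply mul_le_mul_of_nonneg_left _ hC₂.le
          exact outerT
      _ = C₂ * Cs * A ^ (α₁ + ((s+1:ℕ):ℝ)/2) * B ^ (α₂ + ((s+1:ℕ):ℝ)/2) := by
          rw [hsc]
          rw [show α₁ + 1/2 + (s:ℝ)/2 = α₁ + ((s:ℝ)+1)/2 by ring,
            show α₂ + 1/2 + (s:ℝ)/2 = α₂ + ((s:ℝ)+1)/2 by ring]
          ring

/-- For an integer `s ≥ 1` and reals `α₁, α₂ < -s/2`, there is `C > 0` (depending only on
`s, α₁, α₂`) such that for all `A, B > 0` the series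
`∑_{u ∈ (ℤ₊)^s} (u₁+…+u_s+A)^{α₁} (u₁+…+u_s+B)^{α₂}` converges and is bounded by
`C·A^{α₁+s/2}·B^{α₂+s/2}`. -/
theorem stmt_13 (s : ℕ) (hs : 1 ≤ s) (α₁ α₂ : ℝ)
    (h1 : α₁ < -(s : ℝ)/2) (h2 : α₂ < -(s : ℝ)/2) :
    ∃ C : ℝ, 0 < C ∧ ∀ A B : ℝ, 0 < A → 0 < B →
      Summable (fun u : Fin s → ℕ+ =>
        ((∑ j, (u j : ℝ)) + A) ^ α₁ * ((∑ j, (u j : ℝ)) + B) ^ α₂) ∧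
      ∑' u : Fin s → ℕ+, ((∑ j, (u j : ℝ)) + A) ^ α₁ * ((∑ j, (u j : ℝ)) + B) ^ α₂
        ≤ C * A ^ (α₁ + s/2) * B ^ (α₂ + s/2) :=
  main_aux (fun γ β hγ hβ => two_dim_aux γ β hγ hβ one_dim) s α₁ α₂ h1 h2
end

section
/- Let s ≥ 1 be an integer and let α₁, α₂ be real numbers with -(s+1)/2 < α₁ < -s/2 and α₂ < -s/2. Then there exists a constant C > 0 (depending only on s, α₁, α₂) such that for every real B > 0, the series ∑_{u ∈ (ℤ₊)^s} (u₁+…+u_s)^{α₁} (u₁+…+u_s+B)^{α₂} converges and is bounded by C·B^{α₁+α₂+s}. -/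
open Finset
open scoped ENNReal NNReal

/-- Mean value theorem instance for rpow on `[x, x+1]`. -/
lemma mvt_rpow (p : ℝ) (x : ℝ) (hx : 0 ≤ x) (hp : x ≠ 0 ∨ 0 < p) :
    ∃ ξ : ℝ, x < ξ ∧ ξ < x + 1 ∧ (x + 1) ^ p - x ^ p = p * ξ ^ (p - 1) := by
  have hab : x < x + 1 := by linarith
  have hcont : ContinuousOn (fun y : ℝ => y ^ p) (Set.Icc x (x + 1)) := by
    intro y hy
    refine (Real.continuousAt_rpow_const y p ?_).continuousWithinAt
    rcases hp with h | h
    · exact Or.inl (by rcases hy with ⟨h1, _⟩; intro h0; exact h (le_antisymm (h0 ▸ h1) hx))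
    · exact Or.inr h.le
  have hderiv : ∀ y ∈ Set.Ioo x (x + 1), HasDerivAt (fun y : ℝ => y ^ p) (p * y ^ (p - 1)) y := by
    intro y hy
    exact Real.hasDerivAt_rpow_const (Or.inl (lt_of_le_of_lt hx hy.1).ne')
  obtain ⟨c, hc, hceq⟩ := exists_hasDerivAt_eq_slope (fun y : ℝ => y ^ p)
    (fun y => p * y ^ (p - 1)) hab hcont hderiv
  refine ⟨c, hc.1, hc.2, ?_⟩
  rw [hceq]; ring

lemma head_sum (γ : ℝ) (hγ1 : -1 < γ) (hγ2 : γ < 0) (N : ℕ) :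
    ∑ n ∈ range (N + 1), (n : ℝ) ^ γ ≤ (N : ℝ) ^ (γ + 1) / (γ + 1) := by
  have hp : 0 < γ + 1 := by linarith
  induction N with
  | zero =>
      simp [Real.zero_rpow (ne_of_lt hγ2), Real.zero_rpow (ne_of_gt hp)]
  | succ N ih =>
      rw [Finset.sum_range_succ]
      obtain ⟨ξ, hξ1, hξ2, hξeq⟩ := mvt_rpow (γ + 1) (N : ℝ) (Nat.cast_nonneg N) (Or.inr hp)
      have hξpos : (0 : ℝ) < ξ := lt_of_le_of_lt (Nat.cast_nonneg N) hξ1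
      have hstep : ((N : ℝ) + 1) ^ γ ≤ (((N : ℝ) + 1) ^ (γ + 1) - (N : ℝ) ^ (γ + 1)) / (γ + 1) := by
        rw [hξeq, mul_div_cancel_left₀ _ (ne_of_gt hp)]
        have h1 : γ + 1 - 1 = γ := by ring
        rw [h1]
        exact Real.rpow_le_rpow_of_nonpos hξpos hξ2.le hγ2.le
      push_cast
      calc ∑ x ∈ range (N + 1), (x : ℝ) ^ γ + ((N : ℝ) + 1) ^ γ
          ≤ (N : ℝ) ^ (γ + 1) / (γ + 1)
            + (((N : ℝ) + 1) ^ (γ + 1) - (N : ℝ) ^ (γ + 1)) / (γ + 1) := add_le_add ih hstep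
        _ = ((N : ℝ) + 1) ^ (γ + 1) / (γ + 1) := by rw [← add_div]; ring_nf

lemma tail_sum_aux (ρ : ℝ) (hρ : ρ < -1) (N : ℕ) (hN : 1 ≤ N) (M : ℕ) (hM : N ≤ M) :
    ∑ n ∈ Ioc N M, (n : ℝ) ^ ρ ≤ ((N : ℝ) ^ (ρ + 1) - (M : ℝ) ^ (ρ + 1)) / (-(ρ + 1)) := by
  have hq : ρ + 1 < 0 := by linarith
  induction M, hM using Nat.le_induction with
  | base => simp
  | succ M hM ih =>
      rw [Finset.sum_Ioc_succ_top hM]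
      obtain ⟨ξ, hξ1, hξ2, hξeq⟩ := mvt_rpow (ρ + 1) (M : ℝ) (Nat.cast_nonneg M)
        (Or.inl (ne_of_gt (by exact_mod_cast Nat.lt_of_lt_of_le Nat.zero_lt_one (hN.trans hM))))
      have hξpos : (0 : ℝ) < ξ := lt_of_le_of_lt (Nat.cast_nonneg M) hξ1
      have hstep : ((M : ℝ) + 1) ^ ρ ≤ ((M : ℝ) ^ (ρ + 1) - ((M : ℝ) + 1) ^ (ρ + 1)) / (-(ρ + 1)) := by
        have h1 : ρ + 1 - 1 = ρ := by ring
        rw [h1] at hξeq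
        have h2 : ((M : ℝ) + 1) ^ ρ ≤ ξ ^ ρ :=
          Real.rpow_le_rpow_of_nonpos hξpos hξ2.le (by linarith)
        have h3 : (M : ℝ) ^ (ρ + 1) - ((M : ℝ) + 1) ^ (ρ + 1) = (-(ρ + 1)) * ξ ^ ρ := by
          linarith [hξeq]
        rw [h3, mul_div_cancel_left₀ _ (by linarith : -(ρ + 1) ≠ 0)]
        exact h2
      push_cast
      calc ∑ n ∈ Ioc N M, (n : ℝ) ^ ρ + ((M : ℝ) + 1) ^ ρ
          ≤ ((N : ℝ) ^ (ρ + 1) - (M : ℝ) ^ (ρ + 1)) / (-(ρ + 1))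
            + ((M : ℝ) ^ (ρ + 1) - ((M : ℝ) + 1) ^ (ρ + 1)) / (-(ρ + 1)) := add_le_add ih hstep
        _ = ((N : ℝ) ^ (ρ + 1) - ((M : ℝ) + 1) ^ (ρ + 1)) / (-(ρ + 1)) := by
            rw [← add_div]; ring_nf

lemma head_sum' (γ : ℝ) (hγ : -1 < γ) (N : ℕ) :
    ∑ n ∈ range (N + 1), (n : ℝ) ^ γ ≤ (1 / (γ + 1) + 1) * ((N : ℝ) + 1) ^ (γ + 1) := by
  have hp : 0 < γ + 1 := by linarith
  have hpow : (0:ℝ) ≤ ((N : ℝ) + 1) ^ (γ + 1) := by positivity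
  rcases lt_or_ge γ 0 with hγ2 | hγ2
  · calc ∑ n ∈ range (N + 1), (n : ℝ) ^ γ ≤ (N : ℝ) ^ (γ + 1) / (γ + 1) :=
          head_sum γ hγ hγ2 N
      _ ≤ ((N : ℝ) + 1) ^ (γ + 1) / (γ + 1) := by
          rw [div_le_div_iff_of_pos_right hp]
          exact Real.rpow_le_rpow (Nat.cast_nonneg N) (by linarith) hp.le
      _ = 1 / (γ + 1) * ((N : ℝ) + 1) ^ (γ + 1) := by ring
      _ ≤ (1 / (γ + 1) + 1) * ((N : ℝ) + 1) ^ (γ + 1) := by nlinarith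
  · have hgt : ∀ n ∈ range (N + 1), (n : ℝ) ^ γ ≤ ((N : ℝ) + 1) ^ γ := by
      intro n hn
      apply Real.rpow_le_rpow (Nat.cast_nonneg n) ?_ hγ2
      have h := Finset.mem_range.mp hn
      have : (n : ℝ) ≤ ((N : ℝ) + 1) := by exact_mod_cast Nat.le_of_lt_succ h |>.trans (Nat.le_succ N)
      exact this
    calc ∑ n ∈ range (N + 1), (n : ℝ) ^ γ
        ≤ ∑ _n ∈ range (N + 1), ((N : ℝ) + 1) ^ γ := Finset.sum_le_sum hgt
      _ = ((N : ℝ) + 1) * ((N : ℝ) + 1) ^ γ := by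
          rw [Finset.sum_const, Finset.card_range]; push_cast; ring
      _ = ((N : ℝ) + 1) ^ (γ + 1) := by
          rw [Real.rpow_add_one (by positivity : ((N : ℝ) + 1) ≠ 0) γ]; ring
      _ ≤ (1 / (γ + 1) + 1) * ((N : ℝ) + 1) ^ (γ + 1) := by nlinarith [hpow, one_div_pos.mpr hp]

lemma tail_sum (ρ : ℝ) (hρ : ρ < -1) (N : ℕ) (hN : 1 ≤ N) (M : ℕ) :
    ∑ n ∈ Ioc N M, (n : ℝ) ^ ρ ≤ (N : ℝ) ^ (ρ + 1) / (-(ρ + 1)) := by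
  have hq : ρ + 1 < 0 := by linarith
  rcases le_or_gt M N with h | h
  · rw [Finset.Ioc_eq_empty (by omega)]
    simp only [Finset.sum_empty]
    apply div_nonneg (by positivity) (by linarith)
  · have := tail_sum_aux ρ hρ N hN M h.le
    have hMpos : (0:ℝ) < (M : ℝ) ^ (ρ + 1) := by
      have : (0:ℝ) < (M : ℝ) := by exact_mod_cast Nat.lt_of_lt_of_le Nat.zero_lt_one (hN.trans h.le)
      positivity
    calc ∑ n ∈ Ioc N M, (n : ℝ) ^ ρ ≤ ((N : ℝ) ^ (ρ + 1) - (M : ℝ) ^ (ρ + 1)) / (-(ρ + 1)) := this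
      _ ≤ (N : ℝ) ^ (ρ + 1) / (-(ρ + 1)) := by
          rw [div_le_div_iff_of_pos_right (by linarith : (0:ℝ) < -(ρ + 1))]
          linarith

lemma oneD (γ δ : ℝ) (hγ : -1 < γ) (hδ : δ < 0) (hρ : γ + δ < -1) :
    ∃ D : ℝ, 0 < D ∧ ∀ B : ℝ, 0 < B → ∀ M : ℕ,
      ∑ n ∈ Icc 1 M, (n : ℝ) ^ γ * ((n : ℝ) + B) ^ δ ≤ D * B ^ (γ + δ + 1) := by
  have hp : 0 < γ + 1 := by linarith
  have hq : γ + δ + 1 < 0 := by linarith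
  have hq' : (0:ℝ) < -(γ + δ + 1) := by linarith
  refine ⟨(1/(γ+1)+1) * 3 ^ (γ+1) + 1/(-(γ+δ+1)) + 1, ?_, ?_⟩
  · have h3 : (0:ℝ) < (3:ℝ) ^ (γ+1) := Real.rpow_pos_of_pos (by norm_num) _
    have h1 : (0:ℝ) < 1/(γ+1) := by positivity
    have h2 : (0:ℝ) < 1/(-(γ+δ+1)) := by positivity
    nlinarith
  intro B hB M
  have hBq : (0:ℝ) < B ^ (γ+δ+1) := Real.rpow_pos_of_pos hB _
  have hg0 : ∀ n : ℕ, 0 ≤ (n : ℝ) ^ γ * ((n : ℝ) + B) ^ δ := by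
    intro n; positivity
  have hgle : ∀ n : ℕ, 1 ≤ n → (n : ℝ) ^ γ * ((n : ℝ) + B) ^ δ ≤ (n : ℝ) ^ (γ + δ) := by
    intro n hn
    have hnpos : (0:ℝ) < n := by exact_mod_cast hn
    have h1 : ((n:ℝ) + B) ^ δ ≤ (n:ℝ) ^ δ :=
      Real.rpow_le_rpow_of_nonpos hnpos (by linarith) hδ.le
    calc (n : ℝ) ^ γ * ((n : ℝ) + B) ^ δ ≤ (n : ℝ) ^ γ * (n : ℝ) ^ δ :=
          mul_le_mul_of_nonneg_left h1 (by positivity)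
      _ = (n : ℝ) ^ (γ + δ) := (Real.rpow_add hnpos γ δ).symm
  set N := ⌈B⌉₊ with hNdef
  have hN1 : 1 ≤ N := Nat.one_le_ceil_iff.mpr hB
  have hBN : B ≤ (N : ℝ) := Nat.le_ceil B
  have hsplit : ∑ n ∈ Icc 1 M, (n : ℝ) ^ γ * ((n : ℝ) + B) ^ δ
      ≤ ∑ n ∈ Icc 1 M ∩ range (N+1), (n : ℝ) ^ γ * ((n : ℝ) + B) ^ δ
        + ∑ n ∈ Ioc N M, (n : ℝ) ^ γ * ((n : ℝ) + B) ^ δ := by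
    rw [← Finset.sum_inter_add_sum_sdiff (Icc 1 M) (range (N+1))]
    apply add_le_add le_rfl
    apply Finset.sum_le_sum_of_subset_of_nonneg ?_ (fun n _ _ => hg0 n)
    intro n hn
    simp only [Finset.mem_sdiff, Finset.mem_range, Finset.mem_Ioc, Finset.mem_Icc] at hn ⊢
    omega
  have htail : ∑ n ∈ Ioc N M, (n : ℝ) ^ γ * ((n : ℝ) + B) ^ δ
      ≤ 1/(-(γ+δ+1)) * B ^ (γ+δ+1) := by
    calc ∑ n ∈ Ioc N M, (n : ℝ) ^ γ * ((n : ℝ) + B) ^ δ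
        ≤ ∑ n ∈ Ioc N M, (n : ℝ) ^ (γ + δ) := by
          refine Finset.sum_le_sum fun n hn => hgle n ?_
          have := (Finset.mem_Ioc.mp hn).1
          omega
      _ ≤ (N : ℝ) ^ (γ + δ + 1) / (-(γ + δ + 1)) := tail_sum (γ+δ) hρ N hN1 M
      _ ≤ B ^ (γ + δ + 1) / (-(γ + δ + 1)) := by
          rw [div_le_div_iff_of_pos_right hq']
          exact Real.rpow_le_rpow_of_nonpos hB hBN hq.le
      _ = 1/(-(γ+δ+1)) * B ^ (γ+δ+1) := by ring
  rcases le_or_gt B 1 with hB1 | hB1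
  · -- small B : N = 1
    have hNeq : N = 1 := le_antisymm (Nat.ceil_le.mpr (by exact_mod_cast hB1)) hN1
    have hhead : ∑ n ∈ Icc 1 M ∩ range (N+1), (n : ℝ) ^ γ * ((n : ℝ) + B) ^ δ
        ≤ 1 * B ^ (γ+δ+1) := by
      have hsub : Icc 1 M ∩ range (N+1) ⊆ {1} := by
        intro n hn
        simp only [Finset.mem_inter, Finset.mem_Icc, Finset.mem_range, Finset.mem_singleton,
          hNeq] at hn ⊢
        omega
      have hone : ((1:ℕ) : ℝ) ^ γ * (((1:ℕ) : ℝ) + B) ^ δ ≤ 1 * B ^ (γ+δ+1) := by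
        rw [Nat.cast_one, Real.one_rpow, one_mul, one_mul]
        calc ((1:ℝ) + B) ^ δ ≤ 1 := Real.rpow_le_one_of_one_le_of_nonpos (by linarith) hδ.le
          _ ≤ B ^ (γ+δ+1) := Real.one_le_rpow_of_pos_of_le_one_of_nonpos hB hB1 hq.le
      calc ∑ n ∈ Icc 1 M ∩ range (N+1), (n : ℝ) ^ γ * ((n : ℝ) + B) ^ δ
          ≤ ∑ n ∈ ({1} : Finset ℕ), (n : ℝ) ^ γ * ((n : ℝ) + B) ^ δ :=
            Finset.sum_le_sum_of_subset_of_nonneg hsub (fun n _ _ => hg0 n)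
        _ = ((1:ℕ) : ℝ) ^ γ * (((1:ℕ) : ℝ) + B) ^ δ := Finset.sum_singleton _ _
        _ ≤ 1 * B ^ (γ+δ+1) := hone
    calc ∑ n ∈ Icc 1 M, (n : ℝ) ^ γ * ((n : ℝ) + B) ^ δ
        ≤ 1 * B ^ (γ+δ+1) + 1/(-(γ+δ+1)) * B ^ (γ+δ+1) :=
          hsplit.trans (add_le_add hhead htail)
      _ ≤ ((1/(γ+1)+1) * 3 ^ (γ+1) + 1/(-(γ+δ+1)) + 1) * B ^ (γ+δ+1) := by
          have h3 : (0:ℝ) < (3:ℝ) ^ (γ+1) := Real.rpow_pos_of_pos (by norm_num) _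
          have h1 : (0:ℝ) < 1/(γ+1) := by positivity
          nlinarith [mul_nonneg (mul_nonneg (by linarith : (0:ℝ) ≤ 1/(γ+1)+1) h3.le) hBq.le]
  · -- large B
    have hhead : ∑ n ∈ Icc 1 M ∩ range (N+1), (n : ℝ) ^ γ * ((n : ℝ) + B) ^ δ
        ≤ ((1/(γ+1)+1) * 3 ^ (γ+1)) * B ^ (γ+δ+1) := by
      have hBd : (0:ℝ) < B ^ δ := Real.rpow_pos_of_pos hB _
      have step1 : ∀ n : ℕ, (n : ℝ) ^ γ * ((n : ℝ) + B) ^ δ ≤ (n : ℝ) ^ γ * B ^ δ := by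
        intro n
        refine mul_le_mul_of_nonneg_left ?_ (by positivity)
        exact Real.rpow_le_rpow_of_nonpos hB
          (by linarith [(Nat.cast_nonneg n : (0:ℝ) ≤ (n:ℝ))]) hδ.le
      calc ∑ n ∈ Icc 1 M ∩ range (N+1), (n : ℝ) ^ γ * ((n : ℝ) + B) ^ δ
          ≤ ∑ n ∈ range (N+1), (n : ℝ) ^ γ * ((n : ℝ) + B) ^ δ :=
            Finset.sum_le_sum_of_subset_of_nonneg Finset.inter_subset_right
              (fun n _ _ => hg0 n)
        _ ≤ ∑ n ∈ range (N+1), (n : ℝ) ^ γ * B ^ δ :=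
            Finset.sum_le_sum fun n _ => step1 n
        _ = (∑ n ∈ range (N+1), (n : ℝ) ^ γ) * B ^ δ := by rw [Finset.sum_mul]
        _ ≤ ((1/(γ+1)+1) * ((N : ℝ) + 1) ^ (γ + 1)) * B ^ δ := by
            refine mul_le_mul_of_nonneg_right (head_sum' γ hγ N) hBd.le
        _ ≤ ((1/(γ+1)+1) * (3*B) ^ (γ + 1)) * B ^ δ := by
            have hNB : (N : ℝ) + 1 ≤ 3 * B := by
              have := Nat.ceil_lt_add_one hB.le
              linarith
            have h1 : (0:ℝ) < 1/(γ+1) := by positivity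
            have h2 : ((N : ℝ) + 1) ^ (γ + 1) ≤ (3*B) ^ (γ + 1) :=
              Real.rpow_le_rpow (by positivity) hNB hp.le
            have h3 : (0:ℝ) ≤ 1/(γ+1)+1 := by linarith
            exact mul_le_mul_of_nonneg_right (mul_le_mul_of_nonneg_left h2 h3) hBd.le
        _ = ((1/(γ+1)+1) * 3 ^ (γ+1)) * B ^ (γ+δ+1) := by
            rw [Real.mul_rpow (by norm_num : (0:ℝ) ≤ 3) hB.le]
            have hbb : B ^ (γ+1) * B ^ δ = B ^ (γ+δ+1) := by
              rw [← Real.rpow_add hB]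
              congr 1
              ring
            calc (1/(γ+1)+1) * ((3:ℝ) ^ (γ+1) * B ^ (γ+1)) * B ^ δ
                = (1/(γ+1)+1) * 3 ^ (γ+1) * (B ^ (γ+1) * B ^ δ) := by ring
              _ = (1/(γ+1)+1) * 3 ^ (γ+1) * B ^ (γ+δ+1) := by rw [hbb]
    calc ∑ n ∈ Icc 1 M, (n : ℝ) ^ γ * ((n : ℝ) + B) ^ δ
        ≤ ((1/(γ+1)+1) * 3 ^ (γ+1)) * B ^ (γ+δ+1) + 1/(-(γ+δ+1)) * B ^ (γ+δ+1) :=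
          hsplit.trans (add_le_add hhead htail)
      _ ≤ ((1/(γ+1)+1) * 3 ^ (γ+1) + 1/(-(γ+δ+1)) + 1) * B ^ (γ+δ+1) := by nlinarith

/-- For an integer `s ≥ 1` and reals `α₁, α₂` with `-(s+1)/2 < α₁ < -s/2` and `α₂ < -s/2`,
there is `C > 0` (depending only on `s, α₁, α₂`) such that for all `B > 0` the series
`∑_{u ∈ (ℤ₊)^s} (u₁+…+u_s)^{α₁} (u₁+…+u_s+B)^{α₂}` converges and is bounded by
`C·B^{α₁+α₂+s}`. -/
theorem stmt_14 (s : ℕ) (hs : 1 ≤ s) (α₁ α₂ : ℝ)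
    (h0 : -((s : ℝ) + 1)/2 < α₁) (h1 : α₁ < -(s : ℝ)/2) (h2 : α₂ < -(s : ℝ)/2) :
    ∃ C : ℝ, 0 < C ∧ ∀ B : ℝ, 0 < B →
      Summable (fun u : Fin s → ℕ+ =>
        (∑ j, (u j : ℝ)) ^ α₁ * ((∑ j, (u j : ℝ)) + B) ^ α₂) ∧
      ∑' u : Fin s → ℕ+, (∑ j, (u j : ℝ)) ^ α₁ * ((∑ j, (u j : ℝ)) + B) ^ α₂
        ≤ C * B ^ (α₁ + α₂ + s) := by
  obtain ⟨m, rfl⟩ : ∃ m, s = m + 1 := ⟨s - 1, by omega⟩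
  have hsr : ((m + 1 : ℕ) : ℝ) = (m : ℝ) + 1 := by push_cast; ring
  rw [hsr] at h0 h1 h2
  set γ : ℝ := (m : ℝ) + α₁ with hγdef
  have hγ : -1 < γ := by simp only [hγdef]; linarith
  have hδ : α₂ < 0 := by linarith
  have hρ : γ + α₂ < -1 := by simp only [hγdef]; linarith
  have hα₁ : α₁ < 0 := by linarith
  obtain ⟨D, hD, hDb⟩ := oneD γ α₂ hγ hδ hρ
  refine ⟨2 ^ m * D, by positivity, ?_⟩
  intro B hB
  have he : γ + α₂ + 1 = α₁ + α₂ + ((m + 1 : ℕ) : ℝ) := by rw [hsr]; simp only [hγdef]; ring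
  set K : ℝ := 2 ^ m * D * B ^ (γ + α₂ + 1) with hKdef
  have hK0 : 0 ≤ K := by positivity
  -- the real one-dimensional comparison function
  set g : ℕ → ℝ := fun n => (n : ℝ) ^ α₁ * ((n : ℝ) + B) ^ α₂ with hgdef
  have hg0 : ∀ n, 0 ≤ g n := fun n => by simp only [hgdef]; positivity
  set c : ℕ → ℝ := fun n => ((n : ℝ) + 1) ^ m * g n with hcdef
  have hc0 : ∀ n, 0 ≤ c n := fun n => by simp only [hcdef]; positivity
  -- the comparison series is uniformly bounded
  have hcR : ∀ M : ℕ, ∑ n ∈ Finset.range M, c n ≤ K := by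
    intro M
    have hsub : Finset.range M ⊆ insert 0 (Finset.Icc 1 M) := by
      intro n hn
      simp only [Finset.mem_range, Finset.mem_insert, Finset.mem_Icc] at hn ⊢
      omega
    have hcz : c 0 = 0 := by
      simp only [hcdef, hgdef]
      rw [Nat.cast_zero, Real.zero_rpow (ne_of_lt hα₁)]
      ring
    have hcb : ∀ n : ℕ, 1 ≤ n → c n ≤ 2 ^ m * ((n : ℝ) ^ γ * ((n : ℝ) + B) ^ α₂) := by
      intro n hn
      have hnpos : (0 : ℝ) < n := by exact_mod_cast hn
      have h1' : ((n : ℝ) + 1) ^ m ≤ (2 * (n : ℝ)) ^ m := by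
        apply pow_le_pow_left₀ (by positivity)
        have : (1 : ℝ) ≤ n := by exact_mod_cast hn
        linarith
      have h2' : (2 * (n : ℝ)) ^ m = 2 ^ m * (n : ℝ) ^ m := by rw [mul_pow]
      have h3' : (n : ℝ) ^ m * (n : ℝ) ^ α₁ = (n : ℝ) ^ γ := by
        rw [← Real.rpow_natCast (n : ℝ) m, ← Real.rpow_add hnpos]
      have hrp : (0 : ℝ) ≤ (n : ℝ) ^ α₁ * ((n : ℝ) + B) ^ α₂ := by positivity
      calc c n = ((n : ℝ) + 1) ^ m * ((n : ℝ) ^ α₁ * ((n : ℝ) + B) ^ α₂) := rfl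
        _ ≤ (2 * (n : ℝ)) ^ m * ((n : ℝ) ^ α₁ * ((n : ℝ) + B) ^ α₂) :=
            mul_le_mul_of_nonneg_right h1' hrp
        _ = 2 ^ m * ((n : ℝ) ^ m * (n : ℝ) ^ α₁ * ((n : ℝ) + B) ^ α₂) := by
            rw [h2']; ring
        _ = 2 ^ m * ((n : ℝ) ^ γ * ((n : ℝ) + B) ^ α₂) := by rw [h3']
    calc ∑ n ∈ Finset.range M, c n
        ≤ ∑ n ∈ insert 0 (Finset.Icc 1 M), c n :=
          Finset.sum_le_sum_of_subset_of_nonneg hsub (fun n _ _ => hc0 n)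
      _ = c 0 + ∑ n ∈ Finset.Icc 1 M, c n := Finset.sum_insert (by simp)
      _ ≤ 0 + ∑ n ∈ Finset.Icc 1 M, 2 ^ m * ((n : ℝ) ^ γ * ((n : ℝ) + B) ^ α₂) := by
          apply add_le_add (le_of_eq hcz)
          refine Finset.sum_le_sum fun n hn => hcb n (Finset.mem_Icc.mp hn).1
      _ = 2 ^ m * ∑ n ∈ Finset.Icc 1 M, (n : ℝ) ^ γ * ((n : ℝ) + B) ^ α₂ := by
          rw [Finset.mul_sum]; ring
      _ ≤ 2 ^ m * (D * B ^ (γ + α₂ + 1)) := by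
          apply mul_le_mul_of_nonneg_left (hDb B hB M) (by positivity)
      _ = K := by rw [hKdef]; ring
  have hcsum : Summable c := summable_of_sum_range_le hc0 hcR
  have hctsum : ∑' n, c n ≤ K := Real.tsum_le_of_sum_range_le hc0 hcR
  -- the sum-of-coordinates map
  set σfun : (Fin (m + 1) → ℕ+) → ℕ := fun u => ∑ j, (u j : ℕ) with hσdef
  set f : (Fin (m + 1) → ℕ+) → ℝ := fun u =>
    (∑ j, (u j : ℝ)) ^ α₁ * ((∑ j, (u j : ℝ)) + B) ^ α₂ with hfdef
  have hfg : ∀ u, f u = g (σfun u) := by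
    intro u
    simp only [hfdef, hgdef, hσdef]
    norm_num [Nat.cast_sum]
  have hf0 : ∀ u, 0 ≤ f u := fun u => by rw [hfg]; exact hg0 _
  -- injections from fibers
  have hinj : ∀ n : ℕ, ∃ ι : {u : Fin (m + 1) → ℕ+ // σfun u = n} → (Fin m → Fin (n + 1)),
      Function.Injective ι := by
    intro n
    have hle : ∀ (x : {u : Fin (m + 1) → ℕ+ // σfun u = n}) (i : Fin (m + 1)),
        (x.1 i : ℕ) < n + 1 := by
      intro x i
      have h : (x.1 i : ℕ) ≤ ∑ j, (x.1 j : ℕ) :=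
        Finset.single_le_sum (fun j _ => Nat.zero_le ((x.1 j : ℕ))) (Finset.mem_univ i)
      have h2 := x.2
      simp only [hσdef] at h2
      omega
    refine ⟨fun x j => ⟨(x.1 j.castSucc : ℕ), hle x j.castSucc⟩, ?_⟩
    intro x y hxy
    have hcs : ∀ j : Fin m, x.1 j.castSucc = y.1 j.castSucc := by
      intro j
      have := congrFun hxy j
      exact PNat.coe_injective (congrArg Fin.val this)
    have hlast : x.1 (Fin.last m) = y.1 (Fin.last m) := by
      have hx := x.2
      have hy := y.2
      simp only [hσdef] at hx hy
      rw [Fin.sum_univ_castSucc] at hx hy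
      have hsame : ∑ j : Fin m, (x.1 j.castSucc : ℕ) = ∑ j : Fin m, (y.1 j.castSucc : ℕ) :=
        Finset.sum_congr rfl (fun j _ => by rw [hcs j])
      apply PNat.coe_injective
      omega
    apply Subtype.ext
    funext i
    refine Fin.lastCases hlast (fun j => hcs j) i
  -- main ENNReal estimate
  have hT : ∑' u, ENNReal.ofReal (f u) ≤ ENNReal.ofReal K := by
    have e1 : ∑' u, ENNReal.ofReal (f u)
        = ∑' (n : ℕ), ∑' (x : {u : Fin (m + 1) → ℕ+ // σfun u = n}),
            ENNReal.ofReal (f x.1) := by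
      rw [← (Equiv.sigmaFiberEquiv σfun).tsum_eq (fun u => ENNReal.ofReal (f u))]
      exact ENNReal.tsum_sigma' _
    rw [e1]
    have e2 : ∀ n : ℕ, ∑' (x : {u : Fin (m + 1) → ℕ+ // σfun u = n}),
        ENNReal.ofReal (f x.1) ≤ ENNReal.ofReal (c n) := by
      intro n
      obtain ⟨ι, hι⟩ := hinj n
      have e21 : ∀ (x : {u : Fin (m + 1) → ℕ+ // σfun u = n}),
          ENNReal.ofReal (f x.1) = ENNReal.ofReal (g n) := by
        intro x
        rw [hfg, x.2]
      calc ∑' (x : {u : Fin (m + 1) → ℕ+ // σfun u = n}), ENNReal.ofReal (f x.1)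
          = ∑' (x : {u : Fin (m + 1) → ℕ+ // σfun u = n}), ENNReal.ofReal (g n) :=
            tsum_congr e21
        _ ≤ ∑' (_ : Fin m → Fin (n + 1)), ENNReal.ofReal (g n) :=
            ENNReal.tsum_comp_le_tsum_of_injective hι _
        _ = ENNReal.ofReal (c n) := by
            rw [tsum_fintype, Finset.sum_const, Finset.card_univ, nsmul_eq_mul]
            have hcard : (Fintype.card (Fin m → Fin (n + 1)) : ℝ≥0∞)
                = (ENNReal.ofReal ((n : ℝ) + 1)) ^ m := by
              rw [Fintype.card_fun, Fintype.card_fin, Fintype.card_fin]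
              rw [show ENNReal.ofReal ((n : ℝ) + 1) = ((n + 1 : ℕ) : ℝ≥0∞) by
                rw [← ENNReal.ofReal_natCast (n + 1)]; norm_num]
              push_cast
              ring
            rw [hcard, hcdef]
            rw [ENNReal.ofReal_mul (by positivity : (0 : ℝ) ≤ ((n : ℝ) + 1) ^ m)]
            rw [ENNReal.ofReal_pow (by positivity)]
    calc ∑' (n : ℕ), ∑' (x : {u : Fin (m + 1) → ℕ+ // σfun u = n}), ENNReal.ofReal (f x.1)
        ≤ ∑' (n : ℕ), ENNReal.ofReal (c n) := ENNReal.tsum_le_tsum e2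
      _ = ENNReal.ofReal (∑' n, c n) := (ENNReal.ofReal_tsum_of_nonneg hc0 hcsum).symm
      _ ≤ ENNReal.ofReal K := ENNReal.ofReal_le_ofReal hctsum
  -- translate back to the reals
  have hfs : Summable f := by
    have hne : ∑' u, ENNReal.ofReal (f u) ≠ ⊤ :=
      ne_top_of_le_ne_top ENNReal.ofReal_ne_top hT
    have : Summable (fun u => (f u).toNNReal) :=
      ENNReal.tsum_coe_ne_top_iff_summable.mp (by exact hne)
    have := NNReal.summable_coe.mpr this
    refine this.congr fun u => ?_
    exact Real.coe_toNNReal _ (hf0 u)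
  constructor
  · exact hfs
  · have : ENNReal.ofReal (∑' u, f u) ≤ ENNReal.ofReal K := by
      rw [ENNReal.ofReal_tsum_of_nonneg hf0 hfs]
      exact hT
    have hfin : ∑' u, f u ≤ K := (ENNReal.ofReal_le_ofReal_iff hK0).mp this
    calc ∑' u : Fin (m + 1) → ℕ+, (∑ j, (u j : ℝ)) ^ α₁ * ((∑ j, (u j : ℝ)) + B) ^ α₂
        = ∑' u, f u := rfl
      _ ≤ K := hfin
      _ = 2 ^ m * D * B ^ (α₁ + α₂ + ((m + 1 : ℕ) : ℝ)) := by rw [hKdef, he]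
end
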